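/- arXiv:2509.01568 — 6 statements merged into one kernel-verified Lean document; each statement's English description precedes it below -/
import Mathlib

section
/- There exist absolute constants c₁, c₂ > 0 such that for all natural numbers n, m with n ≥ 8m², there is a finite convex set A ⊂ ℝ with c₁·n ≤ |A| ≤ c₂·n which contains at least n/(4m) pairwise disjoint arithmetic progressions, each of length m and with nonzero common difference. -/
/-- A finite set `A ⊆ ℝ` is *convex* if, listing its elements in increasing order,
the consecutive differences form a strictly increasing sequence. -/
def IsConvexSet (A : Finset ℝ) : Prop :=
  ∀ i : ℕ, i + 2 < A.card →
    (A.sort (· ≤ ·)).getD (i + 1) 0 - (A.sort (· ≤ ·)).getD i 0 <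
      (A.sort (· ≤ ·)).getD (i + 2) 0 - (A.sort (· ≤ ·)).getD (i + 1) 0

/-- `P` is an arithmetic progression of length `m` with nonzero common difference. -/
def IsAPOfLength (P : Finset ℝ) (m : ℕ) : Prop :=
  ∃ x d : ℝ, d ≠ 0 ∧ P = (Finset.range m).image fun i : ℕ => x + (i : ℝ) * d

set_option linter.unusedSectionVars false
set_option linter.deprecated false
set_option maxHeartbeats 1000000

namespace CvxAux

open List

def rdiffs : List ℝ → List ℝ
  | a :: b :: l => (b - a) :: rdiffs (b :: l)
  | _ => []

@[simp] lemma rdiffs_nil : rdiffs [] = [] := rfl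
@[simp] lemma rdiffs_single (a : ℝ) : rdiffs [a] = [] := rfl
@[simp] lemma rdiffs_cons₂ (a b : ℝ) (l : List ℝ) :
    rdiffs (a :: b :: l) = (b - a) :: rdiffs (b :: l) := rfl

lemma rdiffs_length (l : List ℝ) : (rdiffs l).length = l.length - 1 := by
  match l with
  | [] => simp
  | [a] => simp
  | a :: b :: l => simp [rdiffs_length (b :: l)]

lemma rdiffs_getElem : ∀ (l : List ℝ) (i : ℕ) (h : i + 1 < l.length),
    (rdiffs l)[i]'(by rw [rdiffs_length]; omega) = l[i + 1] - l[i]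
  | a :: b :: l, 0, h => by simp
  | a :: b :: l, (i+1), h => by
      have := rdiffs_getElem (b :: l) i (by simpa using h)
      simpa using this

lemma rdiffs_cons (a : ℝ) (l : List ℝ) (h : l ≠ []) :
    rdiffs (a :: l) = (l.head h - a) :: rdiffs l := by
  match l with
  | b :: l => simp

lemma rdiffs_join : ∀ (l₁ : List ℝ) (x : ℝ) (s : List ℝ), l₁.getLast? = some x →
    rdiffs (l₁ ++ s) = rdiffs l₁ ++ rdiffs (x :: s)
  | [], x, s, h => by simp at h
  | [a], x, s, h => by
      simp only [getLast?_singleton, Option.some.injEq] at h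
      subst h; simp
  | a :: b :: l, x, s, h => by
      have h' : (b :: l).getLast? = some x := by
        rw [← h]; exact (List.getLast?_cons_cons ..).symm
      have ih := rdiffs_join (b :: l) x s h'
      show rdiffs (a :: ((b :: l) ++ s)) = _
      rw [show a :: ((b :: l) ++ s) = a :: b :: (l ++ s) from rfl, rdiffs_cons₂,
          show b :: (l ++ s) = (b :: l) ++ s from rfl, ih]
      rfl

lemma chain'_join {α : Type*} {R : α → α → Prop} (l₁ : List α) (x : α) (s : List α)
    (h : l₁.getLast? = some x) (h₁ : l₁.Chain' R) (h₂ : (x :: s).Chain' R) :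
    (l₁ ++ s).Chain' R := by
  rw [List.Chain', List.isChain_append]
  refine ⟨h₁, (List.isChain_cons.mp h₂).2, ?_⟩
  intro y hy z hz
  rw [h] at hy
  simp only [Option.mem_def, Option.some.injEq] at hy
  subst hy
  exact (List.isChain_cons.mp h₂).1 z hz

lemma rdiffs_map_range (f : ℕ → ℝ) : ∀ (N : ℕ),
    rdiffs ((List.range (N + 1)).map f) = (List.range N).map (fun i => f (i + 1) - f i) := by
  intro N
  induction N generalizing f with
  | zero => simp [List.range_succ]
  | succ N ih =>
    conv_lhs => rw [List.range_succ_eq_map]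
    simp only [List.map_cons, List.map_map]
    have h1 : (List.range (N + 1)).map (f ∘ Nat.succ) =
        ((List.range (N + 1)).map (fun i => f (i + 1))) := by
      simp [Function.comp_def]
    rw [h1]
    have hne : (List.range (N + 1)).map (fun i => f (i + 1)) ≠ [] := by simp
    rw [rdiffs_cons _ _ hne]
    have hh : ((List.range (N + 1)).map (fun i => f (i + 1))).head hne = f 1 := by
      rw [List.head_eq_getElem]; simp
    rw [hh, ih (fun i => f (i + 1))]
    conv_rhs => rw [List.range_succ_eq_map]
    simp [List.map_map, Function.comp_def]

lemma sort_toFinset_of_chain (l : List ℝ) (h : l.Chain' (· < ·)) :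
    l.toFinset.sort (· ≤ ·) = l := by
  have hp : l.Pairwise (· < ·) := List.isChain_iff_pairwise.mp h
  have hnd : l.Nodup := hp.imp ne_of_lt
  have hs : l.Pairwise (· ≤ ·) := hp.imp le_of_lt
  exact (List.toFinset_sort _ hnd).mpr hs

lemma chain'_map_range (f : ℕ → ℝ) (N : ℕ) (h : ∀ i, i + 1 < N → f i < f (i + 1)) :
    ((List.range N).map f).Chain' (· < ·) := by
  rw [List.Chain', List.isChain_map]
  match N with
  | 0 => simp
  | N + 1 =>
    rw [List.isChain_range_succ]
    intro i hi
    exact h i (by omega)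


lemma head?_map_range {α : Type*} (f : ℕ → α) (N : ℕ) (h : 0 < N) :
    ((List.range N).map f).head? = some (f 0) := by
  obtain ⟨N', rfl⟩ : ∃ N', N = N' + 1 := ⟨N - 1, by omega⟩
  rw [List.range_succ_eq_map]
  simp

lemma getLast?_map_range {α : Type*} (f : ℕ → α) (N : ℕ) :
    ((List.range (N + 1)).map f).getLast? = some (f N) := by
  rw [List.range_succ, List.map_append]
  simp

variable (m K : ℕ)

noncomputable def zet : ℝ := 1 / (4 * K)
noncomputable def XX (o : ℕ) : ℝ := 4 * m * o + zet K * o ^ 2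
noncomputable def d0 : ℝ := 5 * m * K + 144 * m ^ 2
noncomputable def VV (t o : ℕ) : ℝ := XX m K o + t * (d0 m K + o)
noncomputable def SX : ℝ := XX m K (K - 1)
noncomputable def NN (t : ℕ) : ℝ := d0 m K - SX m K - t * ((K : ℝ) - 1)
noncomputable def BB (t : ℕ) : ℝ := 4 * m + t + 7/8
noncomputable def cc (t : ℕ) : ℕ := ⌊NN m K t / BB m t⌋₊ + 1
noncomputable def sg (t : ℕ) : ℝ := NN m K t / cc m K t
noncomputable def mu (t : ℕ) : ℝ := 1 / (16 * cc m K t)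
noncomputable def ww (t r : ℕ) : ℝ :=
  VV m K t (K - 1) + r * sg m K t + mu m K t * r * (r - cc m K t)
noncomputable def FF (t j : ℕ) : ℝ := if j < K then VV m K t j else ww m K t (j - K + 1)
noncomputable def LL (t : ℕ) : ℕ := K + (cc m K t - 1)
noncomputable def DF (t j : ℕ) : ℝ := FF m K t (j + 1) - FF m K t j

variable {m K}

section numeric
variable (hm : 1 ≤ m) (hK : 1 ≤ K)
include hm hK

lemma hmr : (1 : ℝ) ≤ m := by exact_mod_cast hm
lemma hKr : (1 : ℝ) ≤ K := by exact_mod_cast hK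

lemma zet_pos : 0 < zet K := by
  have := hKr hm hK; unfold zet; positivity

lemma zet_le : zet K ≤ 1/4 := by
  have h := hKr hm hK
  unfold zet
  rw [div_le_div_iff₀ (by linarith) (by norm_num)]
  linarith

lemma XX_zero : XX m K 0 = 0 := by simp [XX]

lemma XX_nonneg (o : ℕ) : 0 ≤ XX m K o := by
  have := zet_pos hm hK; unfold XX; positivity

lemma XX_step (o : ℕ) : XX m K (o + 1) - XX m K o = 4 * m + (2 * o + 1) * zet K := by
  unfold XX; push_cast; ring

lemma XX_strictmono {o o' : ℕ} (h : o < o') : XX m K o < XX m K o' := by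
  have hz := zet_pos hm hK
  have hmono : ∀ p : ℕ, XX m K p < XX m K (p + 1) := by
    intro p
    have := XX_step (m := m) (K := K) hm hK p
    have hmr := hmr hm hK
    nlinarith [Nat.cast_nonneg (α := ℝ) p]
  exact strictMono_nat_of_lt_succ hmono h

lemma Kcast : ((K - 1 : ℕ) : ℝ) = (K : ℝ) - 1 := by
  have : (1:ℕ) ≤ K := hK
  push_cast [this]; ring

lemma SX_nonneg : 0 ≤ SX m K := XX_nonneg hm hK _

lemma SX_le : SX m K ≤ 4 * m * K - 4 * m + K / 4 := by
  have hz := zet_le hm hK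
  have hz0 := zet_pos hm hK
  have hKr := hKr hm hK
  have hzz : zet K * ((K:ℝ) - 1)^2 ≤ K/4 := by
    unfold zet
    rw [div_mul_eq_mul_div, div_le_div_iff₀ (by linarith) (by norm_num)]
    nlinarith
  unfold SX XX
  rw [Kcast hm hK]
  linarith

lemma NN_ge (t : ℕ) (ht : t < m) : 144 * (m:ℝ)^2 ≤ NN m K t := by
  have hSX := SX_le hm hK
  have hKr := hKr hm hK
  have hmr := hmr hm hK
  have htr : (t : ℝ) ≤ (m : ℝ) - 1 := by
    have : (t:ℝ) + 1 ≤ m := by exact_mod_cast ht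
    linarith
  have ht0 : (0:ℝ) ≤ t := Nat.cast_nonneg t
  unfold NN d0
  nlinarith

lemma NN_le (t : ℕ) : NN m K t ≤ d0 m K := by
  have hSX := SX_nonneg hm hK
  have hKr := hKr hm hK
  have ht0 : (0:ℝ) ≤ t := Nat.cast_nonneg t
  unfold NN
  nlinarith

lemma NN_pos (t : ℕ) (ht : t < m) : 0 < NN m K t := by
  have := NN_ge hm hK t ht
  have hmr := hmr hm hK
  nlinarith

lemma BB_ge (t : ℕ) : 4 * (m:ℝ) ≤ BB m t := by
  have ht0 : (0:ℝ) ≤ t := Nat.cast_nonneg t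
  unfold BB; linarith

lemma BB_pos (t : ℕ) : 0 < BB m t := by
  have := BB_ge (m := m) (K := K) hm hK t
  have hmr := hmr hm hK
  linarith

lemma BB_le (t : ℕ) (ht : t < m) : BB m t ≤ 5 * m - 1/8 := by
  have htr : (t : ℝ) ≤ (m : ℝ) - 1 := by
    have : (t:ℝ) + 1 ≤ m := by exact_mod_cast ht
    linarith
  unfold BB; linarith

lemma cc_pos (t : ℕ) : 0 < cc m K t := Nat.succ_pos _

lemma ccr_ge_one (t : ℕ) : (1:ℝ) ≤ (cc m K t : ℝ) := by
  exact_mod_cast cc_pos hm hK t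

lemma ccr_pos (t : ℕ) : (0:ℝ) < (cc m K t : ℝ) := lt_of_lt_of_le one_pos (ccr_ge_one hm hK t)

lemma cc_gt (t : ℕ) : NN m K t / BB m t < cc m K t := by
  unfold cc; push_cast
  exact Nat.lt_floor_add_one _

lemma cc_le_real (t : ℕ) (ht : t < m) : (cc m K t : ℝ) ≤ NN m K t / BB m t + 1 := by
  unfold cc; push_cast
  have h0 : 0 ≤ NN m K t / BB m t := by
    have := NN_pos hm hK t ht
    have := BB_pos (K := K) hm hK t
    positivity
  have := Nat.floor_le h0
  linarith

lemma sg_lt (t : ℕ) (ht : t < m) : sg m K t < BB m t := by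
  have hc := cc_gt (m := m) (K := K) hm hK t
  have hcp := ccr_pos hm hK t
  have hB := BB_pos (K := K) hm hK t
  have hN := NN_pos hm hK t ht
  unfold sg
  rw [div_lt_iff₀ hcp]
  calc NN m K t = (NN m K t / BB m t) * BB m t := by field_simp
  _ < (cc m K t : ℝ) * BB m t := by
      apply mul_lt_mul_of_pos_right hc hB
  _ = BB m t * cc m K t := by ring

lemma sg_gt (t : ℕ) (ht : t < m) : BB m t - 1/4 < sg m K t := by
  have hc := cc_le_real hm hK t ht
  have hcp := ccr_pos hm hK t
  have hB := BB_pos (K := K) hm hK t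
  have hN := NN_pos hm hK t ht
  have hN' := NN_ge hm hK t ht
  have hB' := BB_le (K := K) hm hK t ht
  have hB'' := BB_ge (K := K) hm hK t
  have hmr := hmr hm hK
  -- key: N/4 + B/4 > B^2  (from N ≥ 144 m², B ≤ 5m)
  have key : BB m t ^ 2 < NN m K t / 4 + BB m t / 4 := by nlinarith
  unfold sg
  rw [lt_div_iff₀ hcp]
  -- (B - 1/4) * cc ≤ (B - 1/4) * (N/B + 1) < N
  have h1 : (BB m t - 1/4) * (cc m K t : ℝ) ≤ (BB m t - 1/4) * (NN m K t / BB m t + 1) := by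
    apply mul_le_mul_of_nonneg_left hc
    nlinarith
  set q := NN m K t / BB m t with hqdef
  have hq : q * BB m t = NN m K t := div_mul_cancel₀ _ (ne_of_gt hB)
  have hx : BB m t * (BB m t - q/4 - 1/4) < 0 := by nlinarith
  have hx2 : BB m t - q/4 - 1/4 < 0 := by
    by_contra hcon
    push_neg at hcon
    nlinarith [mul_nonneg (le_of_lt hB) hcon]
  have h2 : (BB m t - 1/4) * (q + 1) < NN m K t := by nlinarith
  linarith

lemma mu_pos (t : ℕ) : 0 < mu m K t := by
  have := ccr_pos hm hK t
  unfold mu; positivity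

lemma mu_mul_cc (t : ℕ) : mu m K t * (cc m K t : ℝ) = 1/16 := by
  have := ccr_pos hm hK t
  unfold mu; field_simp

lemma bd_bounds (t r : ℕ) (ht : t < m) (hr : r + 1 ≤ cc m K t) :
    4 * (m:ℝ) + t + 1/2 < sg m K t + mu m K t * (2 * r + 1 - cc m K t) ∧
    sg m K t + mu m K t * (2 * r + 1 - cc m K t) < 4 * (m:ℝ) + t + 1 := by
  have hsl := sg_lt hm hK t ht
  have hsg := sg_gt hm hK t ht
  have hmp := mu_pos hm hK t
  have hmc := mu_mul_cc hm hK t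
  have hrc : (r : ℝ) + 1 ≤ (cc m K t : ℝ) := by exact_mod_cast hr
  have hr0 : (0:ℝ) ≤ r := Nat.cast_nonneg r
  have habs1 : mu m K t * (2 * r + 1 - cc m K t) ≤ mu m K t * ((cc m K t : ℝ) - 1) := by
    apply mul_le_mul_of_nonneg_left _ (le_of_lt hmp)
    linarith
  have habs2 : mu m K t * (1 - (cc m K t : ℝ)) ≤ mu m K t * (2 * r + 1 - cc m K t) := by
    apply mul_le_mul_of_nonneg_left _ (le_of_lt hmp)
    linarith
  have e1 : mu m K t * ((cc m K t : ℝ) - 1) < 1/16 := by nlinarith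
  have e2 : -(1/16) < mu m K t * (1 - (cc m K t : ℝ)) := by nlinarith
  unfold BB at hsl hsg
  constructor <;> nlinarith

lemma round_diff_bounds (t o : ℕ) (ht : t < m) (ho : o + 2 ≤ K) :
    4 * (m:ℝ) + t < 4 * m + t + (2 * o + 1) * zet K ∧
    4 * (m:ℝ) + t + (2 * o + 1) * zet K < 4 * m + t + 1/2 := by
  have hz := zet_pos hm hK
  have hKr := hKr hm hK
  have ho' : (o:ℝ) + 2 ≤ K := by exact_mod_cast ho
  have ho0 : (0:ℝ) ≤ o := Nat.cast_nonneg o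
  constructor
  · nlinarith
  · have : (2 * (o:ℝ) + 1) * zet K < 1/2 := by
      unfold zet
      rw [mul_one_div, div_lt_iff₀ (by linarith)]
      linarith
    linarith

lemma ww_zero (t : ℕ) : ww m K t 0 = VV m K t (K - 1) := by
  simp [ww]

lemma ww_step (t r : ℕ) :
    ww m K t (r + 1) - ww m K t r = sg m K t + mu m K t * (2 * r + 1 - cc m K t) := by
  unfold ww; push_cast; ring

lemma DF_eq_round (t j : ℕ) (hj : j + 1 < K) :
    DF m K t j = 4 * m + t + (2 * j + 1) * zet K := by
  have hx := XX_step (m := m) (K := K) hm hK j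
  unfold DF FF
  rw [if_pos hj, if_pos (by omega)]
  unfold VV
  push_cast
  push_cast at hx
  linarith [hx]

lemma DF_eq_bdry (t j : ℕ) (hj : K ≤ j + 1) :
    DF m K t j = sg m K t + mu m K t * (2 * ((j + 1 - K : ℕ) : ℝ) + 1 - cc m K t) := by
  unfold DF FF
  rcases Nat.lt_or_ge j K with hjK | hjK
  · rw [if_neg (by omega), if_pos hjK]
    rw [show j + 1 - K = 0 from by omega]
    rw [show j = K - 1 from by omega, ← ww_zero (m := m) (K := K) hm hK]
    simpa using ww_step (m := m) (K := K) hm hK t 0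
  · rw [if_neg (by omega), if_neg (by omega)]
    rw [show j + 1 - K = j - K + 1 from by omega]
    exact ww_step (m := m) (K := K) hm hK t (j - K + 1)

lemma DF_bound (t j : ℕ) (ht : t < m) (hj : j < LL m K t) :
    4 * (m:ℝ) + t < DF m K t j ∧ DF m K t j < 4 * (m:ℝ) + t + 1 := by
  rcases Nat.lt_or_ge (j+1) K with hjK | hjK
  · rw [DF_eq_round hm hK t j hjK]
    have := round_diff_bounds hm hK t j ht (by omega)
    exact ⟨this.1, by linarith [this.2]⟩
  · rw [DF_eq_bdry hm hK t j hjK]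
    have hr : (j + 1 - K) + 1 ≤ cc m K t := by
      have := cc_pos (m := m) (K := K) hm hK t
      unfold LL at hj; omega
    have := bd_bounds hm hK t (j + 1 - K) ht hr
    exact ⟨by linarith [this.1], this.2⟩

lemma DF_mono (t j : ℕ) (ht : t < m) (hj : j + 1 < LL m K t) :
    DF m K t j < DF m K t (j + 1) := by
  have hcp := cc_pos (m := m) (K := K) hm hK t
  rcases Nat.lt_or_ge (j + 2) K with h2 | h2
  · rw [DF_eq_round hm hK t j (by omega), DF_eq_round hm hK t (j+1) h2]
    have hz := zet_pos hm hK
    push_cast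
    nlinarith
  · rcases Nat.lt_or_ge (j + 1) K with h1 | h1
    · rw [DF_eq_round hm hK t j h1, DF_eq_bdry hm hK t (j+1) (by omega)]
      have hb := bd_bounds hm hK t (j + 2 - K) ht (by unfold LL at hj; omega)
      have hr := round_diff_bounds hm hK t j ht (by omega)
      have hcast : ((j + 1 + 1 - K : ℕ) : ℝ) = ((j + 2 - K : ℕ) : ℝ) := by
        rw [show j + 1 + 1 - K = j + 2 - K from by omega]
      rw [hcast]
      linarith [hr.2, hb.1]
    · rw [DF_eq_bdry hm hK t j (by omega), DF_eq_bdry hm hK t (j+1) (by omega)]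
      have hmp := mu_pos (m := m) (K := K) hm hK t
      have hlt : ((j + 1 - K : ℕ) : ℝ) < ((j + 1 + 1 - K : ℕ) : ℝ) := by
        have : j + 1 - K < j + 1 + 1 - K := by omega
        exact_mod_cast this
      nlinarith

lemma glue (t : ℕ) : FF m K t (LL m K t) = FF m K (t + 1) 0 := by
  have hcp := cc_pos (m := m) (K := K) hm hK t
  have hcr := ccr_pos (m := m) (K := K) hm hK t
  have hNc : (cc m K t : ℝ) * sg m K t = NN m K t := by
    unfold sg; field_simp
  unfold FF
  rw [if_neg (by unfold LL; omega), if_pos (by omega)]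
  rw [show LL m K t - K + 1 = cc m K t from by unfold LL; omega]
  unfold ww
  rw [show ((cc m K t : ℝ) - (cc m K t : ℝ)) = 0 from by ring]
  unfold NN at hNc
  unfold SX at hNc
  unfold VV
  rw [XX_zero (m := m) (K := K) hm hK, Kcast hm hK]
  push_cast
  push_cast at hNc
  linarith [hNc]

lemma XX_mono_le {o o' : ℕ} (h : o ≤ o') : XX m K o ≤ XX m K o' := by
  rcases Nat.lt_or_ge o o' with h' | h'
  · exact le_of_lt (XX_strictmono hm hK h')
  · have : o = o' := by omega
    rw [this]

lemma VV_lb (t o : ℕ) : (t:ℝ) * d0 m K ≤ VV m K t o := by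
  have h1 := XX_nonneg hm hK (m := m) (K := K) o
  have ht0 : (0:ℝ) ≤ t := Nat.cast_nonneg t
  have ho0 : (0:ℝ) ≤ o := Nat.cast_nonneg o
  unfold VV
  nlinarith

lemma VV_ub (t o : ℕ) (ht : t < m) (ho : o < K) : VV m K t o < ((t:ℝ) + 1) * d0 m K := by
  have h1 : XX m K o ≤ SX m K := XX_mono_le hm hK (by omega)
  have h2 := SX_le hm hK (m := m) (K := K)
  have hmr := hmr hm hK
  have hKr := hKr hm hK
  have htr : (t : ℝ) ≤ (m : ℝ) - 1 := by
    have : (t:ℝ) + 1 ≤ m := by exact_mod_cast ht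
    linarith
  have hor : (o : ℝ) ≤ (K : ℝ) - 1 := by
    have : (o:ℝ) + 1 ≤ K := by exact_mod_cast ho
    linarith
  have ht0 : (0:ℝ) ≤ t := Nat.cast_nonneg t
  have ho0 : (0:ℝ) ≤ o := Nat.cast_nonneg o
  have hto : (t:ℝ) * o ≤ ((m:ℝ) - 1) * ((K:ℝ) - 1) :=
    mul_le_mul htr hor ho0 (by linarith)
  unfold SX XX at h1 h2
  rw [Kcast hm hK] at h1 h2
  unfold VV XX d0
  nlinarith [hto, h1, h2, sq_nonneg ((m:ℝ))]

lemma VV_inj (t o t' o' : ℕ) (ht : t < m) (ho : o < K) (ht' : t' < m) (ho' : o' < K)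
    (h : VV m K t o = VV m K t' o') : t = t' ∧ o = o' := by
  have d0pos : 0 < d0 m K := by
    have hmr := hmr hm hK
    have hKr := hKr hm hK
    unfold d0; nlinarith
  have htt : t = t' := by
    by_contra hne
    rcases Nat.lt_or_ge t t' with hlt | hge
    · have h1 := VV_ub hm hK t o ht ho
      have h2 := VV_lb hm hK (m := m) (K := K) t' o'
      have : ((t:ℝ) + 1) * d0 m K ≤ (t':ℝ) * d0 m K := by
        have : (t:ℝ) + 1 ≤ (t':ℝ) := by exact_mod_cast hlt
        nlinarith
      linarith
    · have hlt : t' < t := by omega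
      have h1 := VV_ub hm hK t' o' ht' ho'
      have h2 := VV_lb hm hK (m := m) (K := K) t o
      have : ((t':ℝ) + 1) * d0 m K ≤ (t:ℝ) * d0 m K := by
        have : (t':ℝ) + 1 ≤ (t:ℝ) := by exact_mod_cast hlt
        nlinarith
      linarith
  subst htt
  refine ⟨rfl, ?_⟩
  by_contra hne
  have key : ∀ a b : ℕ, a < b → VV m K t a < VV m K t b := by
    intro a b hab
    have h1 := XX_strictmono hm hK (m := m) (K := K) hab
    have h2 : (a:ℝ) < (b:ℝ) := by exact_mod_cast hab
    have ht0 : (0:ℝ) ≤ t := Nat.cast_nonneg t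
    unfold VV
    nlinarith
  rcases Nat.lt_or_ge o o' with hlt | hge
  · exact absurd h (ne_of_lt (key o o' hlt))
  · have hlt : o' < o := by omega
    exact absurd h.symm (ne_of_lt (key o' o hlt))

lemma LL_ge : ∀ t, K ≤ LL m K t := fun t => Nat.le_add_right _ _

lemma LL_pos (t : ℕ) : 0 < LL m K t := lt_of_lt_of_le hK (LL_ge hm hK t)

end numeric

noncomputable def eblk (m' K' t : ℕ) : List ℝ :=
  (List.range (LL m' K' t + 1)).map (FF m' K' t)

noncomputable def JJ (m' K' r : ℕ) : List ℝ :=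
  ((List.range r).flatMap fun t => (List.range (LL m' K' t)).map (FF m' K' t)) ++ [FF m' K' r 0]

section lists
variable (hm : 1 ≤ m) (hK : 1 ≤ K)
include hm hK

lemma eblk_chain (t : ℕ) (ht : t < m) : (eblk m K t).Chain' (· < ·) := by
  apply chain'_map_range
  intro i hi
  have hmr := hmr hm hK
  have ht0 : (0:ℝ) ≤ t := Nat.cast_nonneg t
  have hb := (DF_bound hm hK t i ht (by omega)).1
  have hpos : 0 < DF m K t i := by linarith
  unfold DF at hpos
  linarith

lemma rdiffs_eblk (t : ℕ) :
    rdiffs (eblk m K t) = (List.range (LL m K t)).map (DF m K t) := by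
  unfold eblk
  rw [rdiffs_map_range]
  rfl

lemma rdiffs_eblk_chain (t : ℕ) (ht : t < m) : (rdiffs (eblk m K t)).Chain' (· < ·) := by
  rw [rdiffs_eblk hm hK]
  apply chain'_map_range
  intro i hi
  exact DF_mono hm hK t i ht (by omega)

lemma JJ_succ (r : ℕ) : ∃ rest, eblk m K r = FF m K r 0 :: rest ∧
    JJ m K (r + 1) = JJ m K r ++ rest := by
  have hne : eblk m K r ≠ [] := by unfold eblk; simp
  have hh? : (eblk m K r).head? = some (FF m K r 0) := by
    unfold eblk
    exact head?_map_range _ _ (by omega)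
  have hh : (eblk m K r).head hne = FF m K r 0 := by
    rw [List.head?_eq_head hne] at hh?
    exact Option.some.inj hh?
  refine ⟨(eblk m K r).tail, by rw [← hh]; exact (List.cons_head_tail hne).symm, ?_⟩
  unfold JJ
  rw [List.range_succ, List.flatMap_append]
  simp only [List.flatMap_cons, List.flatMap_nil, List.append_nil]
  have he2 : (List.range (LL m K r)).map (FF m K r) ++ [FF m K (r + 1) 0] = eblk m K r := by
    unfold eblk
    rw [← glue hm hK r, List.range_succ, List.map_append]
    simp
  rw [List.append_assoc, he2, List.append_assoc]
  congr 1
  rw [← hh]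
  simp [List.cons_head_tail]

lemma main_inv : ∀ r, r ≤ m →
    (JJ m K r).Chain' (· < ·) ∧ (rdiffs (JJ m K r)).Chain' (· < ·) ∧
    (JJ m K r).getLast? = some (FF m K r 0) ∧
    (∀ y ∈ (rdiffs (JJ m K r)).getLast?, y < 4 * (m:ℝ) + r) := by
  intro r
  induction r with
  | zero =>
    intro _
    refine ⟨?_, ?_, ?_, ?_⟩ <;> simp [JJ, List.Chain']
  | succ r ih =>
    intro hr
    obtain ⟨ih1, ih2, ih3, ih4⟩ := ih (by omega)
    have hrm : r < m := hr
    obtain ⟨rest, heb, hJs⟩ := JJ_succ hm hK r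
    have hLL := LL_pos hm hK (m := m) (K := K) r
    have c1 : (JJ m K (r + 1)).Chain' (· < ·) := by
      rw [hJs]
      exact chain'_join (JJ m K r) (FF m K r 0) rest ih3 ih1
        (heb ▸ eblk_chain hm hK r hrm)
    have hd : rdiffs (JJ m K (r + 1)) = rdiffs (JJ m K r) ++ rdiffs (eblk m K r) := by
      rw [hJs, rdiffs_join (JJ m K r) (FF m K r 0) rest ih3, heb]
    have hdeb := rdiffs_eblk hm hK (m := m) (K := K) r
    have hh : (rdiffs (eblk m K r)).head? = some (DF m K r 0) := by
      rw [hdeb]; exact head?_map_range _ _ hLL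
    have c2 : (rdiffs (JJ m K (r + 1))).Chain' (· < ·) := by
      rw [hd, List.Chain', List.isChain_append]
      refine ⟨ih2, rdiffs_eblk_chain hm hK r hrm, ?_⟩
      intro y hy z hz
      rw [hh] at hz
      simp only [Option.mem_def, Option.some.injEq] at hz
      subst hz
      have hy' := ih4 y hy
      have := (DF_bound hm hK r 0 hrm (by omega)).1
      linarith
    have hebl : (eblk m K r).getLast? = some (FF m K (r + 1) 0) := by
      unfold eblk
      rw [getLast?_map_range, glue hm hK r]
    have hlen : (eblk m K r).length = LL m K r + 1 := by unfold eblk; simp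
    have hrest : rest ≠ [] := by
      intro hcon
      rw [heb, hcon] at hlen
      simp at hlen
      omega
    have c3 : (JJ m K (r + 1)).getLast? = some (FF m K (r + 1) 0) := by
      rw [hJs, List.getLast?_append]
      have : rest.getLast? = some (FF m K (r + 1) 0) := by
        rw [heb] at hebl
        obtain ⟨b, rest', rfl⟩ : ∃ b rest', rest = b :: rest' := by
          cases rest with
          | nil => exact absurd rfl hrest
          | cons b rest' => exact ⟨b, rest', rfl⟩
        rwa [List.getLast?_cons_cons] at hebl
      rw [this]
      rfl
    have hdl : (rdiffs (eblk m K r)).getLast? = some (DF m K r (LL m K r - 1)) := by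
      rw [hdeb]
      obtain ⟨N', hN⟩ : ∃ N', LL m K r = N' + 1 := ⟨LL m K r - 1, by omega⟩
      rw [hN, getLast?_map_range]
      congr 1
    have c4 : ∀ y ∈ (rdiffs (JJ m K (r + 1))).getLast?, y < 4 * (m:ℝ) + (r + 1 : ℕ) := by
      intro y hy
      rw [hd, List.getLast?_append, hdl] at hy
      simp only [Option.some_or, Option.mem_def, Option.some.injEq] at hy
      subst hy
      have := (DF_bound hm hK r (LL m K r - 1) hrm (by omega)).2
      push_cast
      linarith
    exact ⟨c1, c2, c3, c4⟩

lemma cc_le_nat (t : ℕ) (ht : t < m) : cc m K t ≤ 2 * K + 36 * m + 1 := by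
  have h1 := cc_le_real hm hK t ht
  have hB := BB_pos (K := K) hm hK t
  have hBg := BB_ge (K := K) hm hK t
  have hN := NN_le hm hK (m := m) (K := K) t
  have hN0 := le_of_lt (NN_pos hm hK t ht)
  have hmr := hmr hm hK
  have hKr := hKr hm hK
  have hm4 : (0:ℝ) < 4 * m := by linarith
  have h2 : NN m K t / BB m t ≤ d0 m K / (4 * m) :=
    div_le_div₀ (by unfold d0; nlinarith) hN hm4 hBg
  have h3 : d0 m K / (4 * m) ≤ 2 * K + 36 * m := by
    rw [div_le_iff₀ hm4]
    unfold d0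
    nlinarith
  have h4 : (cc m K t : ℝ) ≤ ((2 * K + 36 * m + 1 : ℕ) : ℝ) := by
    push_cast
    linarith
  exact_mod_cast h4

lemma LL_le (t : ℕ) (ht : t < m) : LL m K t ≤ 3 * K + 36 * m := by
  have := cc_le_nat hm hK t ht
  unfold LL
  omega

omit hm hK in
lemma sum_map_range_bounds (g : ℕ → ℕ) (n lo hi : ℕ) (h : ∀ t < n, lo ≤ g t ∧ g t ≤ hi) :
    n * lo ≤ ((List.range n).map g).sum ∧ ((List.range n).map g).sum ≤ n * hi := by
  induction n with
  | zero => simp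
  | succ n ih =>
    obtain ⟨ih1, ih2⟩ := ih (fun t ht => h t (by omega))
    obtain ⟨h1, h2⟩ := h n (by omega)
    rw [List.range_succ, List.map_append, List.sum_append]
    simp only [List.map_cons, List.map_nil, List.sum_cons, List.sum_nil]
    constructor
    · have : (n + 1) * lo = n * lo + lo := by ring
      omega
    · have : (n + 1) * hi = n * hi + hi := by ring
      omega

lemma JJ_length_bounds :
    m * K + 1 ≤ (JJ m K m).length ∧ (JJ m K m).length ≤ m * (3 * K + 36 * m) + 1 := by
  have hlen : (JJ m K m).length = ((List.range m).map (fun t => LL m K t)).sum + 1 := by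
    unfold JJ
    rw [List.length_append, List.length_flatMap]
    simp [Function.comp_def]
  have hb := sum_map_range_bounds (fun t => LL m K t) m K (3 * K + 36 * m)
    (fun t ht => ⟨LL_ge hm hK t, LL_le hm hK t ht⟩)
  omega

lemma mem_VV (t o : ℕ) (ht : t < m) (ho : o < K) : VV m K t o ∈ (JJ m K m).toFinset := by
  rw [List.mem_toFinset]
  unfold JJ
  rw [List.mem_append]
  left
  rw [List.mem_flatMap]
  refine ⟨t, by simpa using ht, ?_⟩
  rw [List.mem_map]
  refine ⟨o, by simpa using lt_of_lt_of_le ho (LL_ge hm hK t), ?_⟩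
  unfold FF
  rw [if_pos ho]



lemma d0_pos : 0 < d0 m K := by
  have hmr := hmr hm hK
  have hKr := hKr hm hK
  unfold d0
  nlinarith

theorem construction :
    ∃ A : Finset ℝ, IsConvexSet A ∧
      m * K + 1 ≤ A.card ∧ A.card ≤ m * (3 * K + 36 * m) + 1 ∧
      ∃ Ps : Finset (Finset ℝ), Ps.card = K ∧
        (∀ P ∈ Ps, P ⊆ A ∧ IsAPOfLength P m) ∧
        (∀ P ∈ Ps, ∀ Q ∈ Ps, P ≠ Q → Disjoint P Q) := by
  obtain ⟨hc1, hc2, -, -⟩ := main_inv hm hK m le_rfl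
  set L := JJ m K m with hL
  have hsort : L.toFinset.sort (· ≤ ·) = L := sort_toFinset_of_chain L hc1
  have hnd : L.Nodup := (List.isChain_iff_pairwise.mp hc1).imp ne_of_lt
  have hcard : L.toFinset.card = L.length := List.toFinset_card_of_nodup hnd
  have hlb := JJ_length_bounds hm hK (m := m) (K := K)
  rw [← hL] at hlb
  refine ⟨L.toFinset, ?_, by omega, by omega, ?_⟩
  · intro i hi
    rw [hcard] at hi
    rw [hsort]
    rw [List.getD_eq_getElem L 0 (by omega), List.getD_eq_getElem L 0 (by omega),
      List.getD_eq_getElem L 0 (by omega)]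
    have h1 := rdiffs_getElem L i (by omega)
    have h2 := rdiffs_getElem L (i + 1) (by omega)
    have h3 := List.isChain_iff_getElem.mp hc2 i (by rw [rdiffs_length]; omega)
    rw [h1, h2] at h3
    exact h3
  · refine ⟨(Finset.range K).image
      (fun o => (Finset.range m).image (fun t : ℕ => XX m K o + (t : ℝ) * (d0 m K + o))), ?_, ?_, ?_⟩
    · rw [Finset.card_image_of_injOn, Finset.card_range]
      intro o ho o' ho' heq
      simp only [Finset.mem_coe, Finset.mem_range] at ho ho'
      dsimp only at heq
      have h0 : XX m K o + (0 : ℕ) * (d0 m K + o) ∈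
          (Finset.range m).image (fun t : ℕ => XX m K o + (t : ℝ) * (d0 m K + o)) := by
        exact Finset.mem_image_of_mem _ (Finset.mem_range.mpr hm)
      rw [heq] at h0
      rw [Finset.mem_image] at h0
      obtain ⟨t', ht', hv⟩ := h0
      rw [Finset.mem_range] at ht'
      have : VV m K t' o' = VV m K 0 o := by unfold VV; push_cast; push_cast at hv; linarith
      exact ((VV_inj hm hK t' o' 0 o ht' ho' hm ho this).2).symm
    · intro P hP
      rw [Finset.mem_image] at hP
      obtain ⟨o, ho, rfl⟩ := hP
      rw [Finset.mem_range] at ho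
      constructor
      · intro x hx
        rw [Finset.mem_image] at hx
        obtain ⟨t, ht, rfl⟩ := hx
        rw [Finset.mem_range] at ht
        exact mem_VV hm hK t o ht ho
      · refine ⟨XX m K o, d0 m K + o, ?_, ?_⟩
        · have := d0_pos hm hK (m := m) (K := K)
          have ho0 : (0:ℝ) ≤ o := Nat.cast_nonneg o
          positivity
        · rfl
    · intro P hP Q hQ hne
      rw [Finset.mem_image] at hP hQ
      obtain ⟨o, ho, rfl⟩ := hP
      obtain ⟨o', ho', rfl⟩ := hQ
      rw [Finset.mem_range] at ho ho'
      rw [Finset.disjoint_left]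
      intro a ha ha'
      rw [Finset.mem_image] at ha ha'
      obtain ⟨t, ht, hv⟩ := ha
      obtain ⟨t', ht', hv'⟩ := ha'
      rw [Finset.mem_range] at ht ht'
      have : VV m K t o = VV m K t' o' := by
        unfold VV; rw [hv, ← hv']
      have := (VV_inj hm hK t o t' o' ht ho ht' ho' this).2
      subst this
      exact hne rfl

end lists

end CvxAux

/-- For all `n ≥ 8m²` there is a convex set `A` of size `Θ(n)` containing at least
`n/(4m)` pairwise disjoint arithmetic progressions, each of length `m`. -/
theorem convex_set_with_disjoint_APs :
    ∃ c₁ c₂ : ℝ, 0 < c₁ ∧ 0 < c₂ ∧ ∀ n m : ℕ, 8 * m ^ 2 ≤ n →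
      ∃ A : Finset ℝ, IsConvexSet A ∧
        c₁ * (n : ℝ) ≤ (A.card : ℝ) ∧ (A.card : ℝ) ≤ c₂ * (n : ℝ) ∧
        ∃ Ps : Finset (Finset ℝ),
          (n : ℝ) / (4 * (m : ℝ)) ≤ (Ps.card : ℝ) ∧
          (∀ P ∈ Ps, P ⊆ A ∧ IsAPOfLength P m) ∧
          (∀ P ∈ Ps, ∀ Q ∈ Ps, P ≠ Q → Disjoint P Q) := by
  refine ⟨1/4, 100, by norm_num, by norm_num, ?_⟩
  intro n m hnm
  rcases Nat.eq_zero_or_pos n with hn0 | hn1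
  · subst hn0
    refine ⟨∅, ?_, by norm_num, by norm_num, ∅, by norm_num, by simp, by simp⟩
    intro i hi
    simp at hi
  rcases Nat.eq_zero_or_pos m with hm0 | hm1
  · subst hm0
    set K := (n + 3) / 4 with hKdef
    have hK : 1 ≤ K := by omega
    obtain ⟨A, hconv, hlow, hup, Ps, hPsc, hPsm, hPsd⟩ :=
      CvxAux.construction (m := 1) (K := K) le_rfl hK
    have hup' : A.card ≤ 3 * K + 37 := by omega
    have hl4 : n ≤ 4 * A.card := by omega
    have hu4 : A.card ≤ 100 * n := by omega
    refine ⟨A, hconv, ?_, ?_, ∅, by norm_num, by simp, by simp⟩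
    · have : (n:ℝ) ≤ 4 * (A.card:ℝ) := by exact_mod_cast hl4
      linarith
    · have : (A.card:ℝ) ≤ ((100 * n : ℕ):ℝ) := by exact_mod_cast hu4
      push_cast at this
      linarith
  · set K := n / (4 * m) + 1 with hKdef
    have h4m : 0 < 4 * m := by omega
    have hdm := Nat.div_add_mod n (4 * m)
    have hmod : n % (4 * m) < 4 * m := Nat.mod_lt n h4m
    have hK : 1 ≤ K := Nat.le_add_left 1 _
    obtain ⟨A, hconv, hlow, hup, Ps, hPsc, hPsm, hPsd⟩ :=
      CvxAux.construction (m := m) (K := K) hm1 hK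
    -- real facts
    have hmr : (1:ℝ) ≤ m := by exact_mod_cast hm1
    have hcast1 : ((4 * m * (n / (4 * m)) + n % (4 * m) : ℕ):ℝ) = (n:ℝ) := by
      exact_mod_cast congrArg (Nat.cast : ℕ → ℝ) hdm
    have hq0 : (0:ℝ) ≤ ((n / (4 * m) : ℕ):ℝ) := Nat.cast_nonneg _
    have hr0 : (0:ℝ) ≤ ((n % (4 * m) : ℕ):ℝ) := Nat.cast_nonneg _
    have hrlt : ((n % (4 * m) : ℕ):ℝ) < 4 * m := by exact_mod_cast hmod
    have hKc : (K:ℝ) = ((n / (4 * m) : ℕ):ℝ) + 1 := by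
      rw [hKdef]; push_cast; ring
    have hprod : (4:ℝ) * m * K = 4 * m * ((n / (4 * m) : ℕ):ℝ) + 4 * m := by
      rw [hKc]; ring
    push_cast at hcast1
    have hfR2 : (n:ℝ) ≤ 4 * m * K := by linarith
    have hfR1 : (4:ℝ) * m * K ≤ n + 4 * m := by linarith
    have hmn : (m:ℝ) ≤ n := by
      have h8 : ((8 * m ^ 2 : ℕ):ℝ) ≤ n := by exact_mod_cast hnm
      push_cast at h8
      nlinarith
    have hnmr : (8:ℝ) * m ^ 2 ≤ n := by
      have h8 : ((8 * m ^ 2 : ℕ):ℝ) ≤ n := by exact_mod_cast hnm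
      push_cast at h8
      linarith
    have hlowR : ((m * K : ℕ):ℝ) + 1 ≤ A.card := by exact_mod_cast hlow
    have hupR : (A.card:ℝ) ≤ ((m * (3 * K + 36 * m) + 1 : ℕ):ℝ) := by exact_mod_cast hup
    push_cast at hlowR hupR
    refine ⟨A, hconv, ?_, ?_, Ps, ?_, hPsm, hPsd⟩
    · linarith
    · nlinarith [hupR, hfR1, hmn, hnmr, hmr]
    · rw [hPsc]
      rw [div_le_iff₀ (by positivity)]
      linarith
end

section
/- There exists an absolute constant c > 0 such that for every natural number N there is a finite convex set A ⊂ ℝ with |A| ≥ N which contains at least c·|A|^{1/2} pairwise disjoint arithmetic progressions, each of length at least c·|A|^{1/2} and with nonzero common difference. -/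
namespace ConvexAP

/-- `Good g x l`: the list `x :: l` continues with strictly increasing gaps, each gap `> g`. -/
def Good : ℝ → ℝ → List ℝ → Prop
  | _, _, [] => True
  | g, x, y :: l => g < y - x ∧ Good (y - x) y l

/-- state: (last gap, last element) after traversing the list. -/
def endSt : ℝ × ℝ → List ℝ → ℝ × ℝ
  | s, [] => s
  | ⟨_, x⟩, y :: l => endSt (y - x, y) l

lemma endSt_append (s : ℝ × ℝ) (l₁ l₂ : List ℝ) :
    endSt s (l₁ ++ l₂) = endSt (endSt s l₁) l₂ := by
  induction l₁ generalizing s with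
  | nil => rfl
  | cons y l ih => obtain ⟨g, x⟩ := s; simp [endSt, ih]

lemma good_append {g x : ℝ} {l₁ l₂ : List ℝ} (h₁ : Good g x l₁)
    (h₂ : Good (endSt (g, x) l₁).1 (endSt (g, x) l₁).2 l₂) : Good g x (l₁ ++ l₂) := by
  induction l₁ generalizing g x with
  | nil => simpa [endSt] using h₂
  | cons y l ih =>
    exact ⟨h₁.1, ih h₁.2 (by simpa [endSt] using h₂)⟩

/-- list of `n` points after `x0`, with gaps `g0, g0+s, g0+2s, ...`. -/
noncomputable def qList (x0 g0 s : ℝ) (n : ℕ) : List ℝ :=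
  (List.range n).map fun i : ℕ => x0 + ((i : ℝ) + 1) * g0 + ((i : ℝ) * ((i : ℝ) + 1)) / 2 * s

lemma qList_succ (x0 g0 s : ℝ) (n : ℕ) :
    qList x0 g0 s (n + 1) = (x0 + g0) :: qList (x0 + g0) (g0 + s) s n := by
  unfold qList
  rw [List.range_succ_eq_map, List.map_cons, List.map_map]
  congr 1
  · push_cast; ring
  · apply List.map_congr_left
    intro i _
    simp only [Function.comp_apply, Nat.succ_eq_add_one]
    push_cast; ring

lemma good_qList {g x0 g0 s : ℝ} (hg : g < g0) (hs : 0 < s) (n : ℕ) :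
    Good g x0 (qList x0 g0 s n) := by
  induction n generalizing g x0 g0 with
  | zero => trivial
  | succ n ih =>
    rw [qList_succ]
    exact ⟨by linarith, by simpa using ih (by linarith : g0 < g0 + s) ⟩

lemma endSt_qList (g x0 g0 s : ℝ) (n : ℕ) :
    endSt (g, x0) (qList x0 g0 s (n + 1)) =
      (g0 + (n : ℝ) * s, x0 + ((n : ℝ) + 1) * g0 + ((n : ℝ) * ((n : ℝ) + 1)) / 2 * s) := by
  induction n generalizing g x0 g0 with
  | zero =>
    simp only [qList, show List.range 1 = [0] from rfl, List.map_cons, List.map_nil, endSt, Nat.cast_zero]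
    norm_num
  | succ n ih =>
    rw [qList_succ, endSt]
    rw [show x0 + g0 - x0 = g0 by ring, ih g0]
    simp only [Prod.mk.injEq]
    constructor <;> (push_cast; ring)

@[simp] lemma length_qList (x0 g0 s : ℝ) (n : ℕ) : (qList x0 g0 s n).length = n := by
  simp [qList]

lemma mem_qList {i n : ℕ} (h : i < n) (x0 g0 s : ℝ) :
    x0 + ((i : ℝ) + 1) * g0 + ((i : ℝ) * ((i : ℝ) + 1)) / 2 * s ∈ qList x0 g0 s n :=
  List.mem_map.mpr ⟨i, List.mem_range.mpr h, rfl⟩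

lemma good_bind (B : ℕ → List ℝ) (st : ℕ → ℝ × ℝ) (n : ℕ)
    (h : ∀ t < n, Good (st t).1 (st t).2 (B t) ∧ endSt (st t) (B t) = st (t + 1)) :
    Good (st 0).1 (st 0).2 ((List.range n).flatMap B) ∧
      endSt (st 0) ((List.range n).flatMap B) = st n := by
  induction n with
  | zero => exact ⟨trivial, rfl⟩
  | succ n ih =>
    have hn := ih (fun t ht => h t (Nat.lt_succ_of_lt ht))
    rw [List.range_succ, List.flatMap_append, List.flatMap_cons, List.flatMap_nil,
      List.append_nil]
    refine ⟨good_append hn.1 ?_, ?_⟩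
    · rw [show ((endSt (st 0) ((List.range n).flatMap B))) = st n from hn.2]
      exact (h n (Nat.lt_succ_self n)).1
    · rw [endSt_append, hn.2]
      exact (h n (Nat.lt_succ_self n)).2

lemma good_chain {g x : ℝ} {l : List ℝ} (hg : 0 ≤ g) (h : Good g x l) :
    List.Chain' (· < ·) (x :: l) := by
  induction l generalizing g x with
  | nil => exact List.IsChain.singleton _
  | cons y l ih =>
    obtain ⟨h1, h2⟩ := h
    exact List.IsChain.cons_cons (by linarith) (ih (by linarith) h2)

lemma good_getD {g x : ℝ} {l : List ℝ} (h : Good g x l) :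
    ∀ i : ℕ, i + 2 < (x :: l).length →
      (x :: l).getD (i + 1) 0 - (x :: l).getD i 0 <
        (x :: l).getD (i + 2) 0 - (x :: l).getD (i + 1) 0 := by
  induction l generalizing g x with
  | nil => intro i hi; simp at hi
  | cons y l ih =>
    intro i hi
    match i with
    | 0 =>
      match l, h with
      | z :: l', ⟨h1, h2, h3⟩ => simpa [List.getD] using h2
    | (j + 1) =>
      have := ih h.2 j (by simp only [List.length_cons] at hi ⊢; omega)
      simpa [List.getD] using this


noncomputable section
variable (k : ℕ)

def cc (j : ℕ) : ℝ := (j:ℝ) * k + ((j:ℝ) * ((j:ℝ) - 1)) / 2 / (k:ℝ)^2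
def dd (j : ℕ) : ℝ := 130*(k:ℝ)^2 + cc k (k-1) + (j:ℝ)
def aa (t j : ℕ) : ℝ := cc k j + (t:ℝ) * dd k j
def Gg (t : ℕ) : ℝ := 130*(k:ℝ)^2 - (t:ℝ)*((k:ℝ)-1)
def mid (t : ℕ) : ℝ := (k:ℝ) + (t:ℝ) + 1/2
def mm (t : ℕ) : ℕ := ⌊Gg k t / mid k t⌋₊
def eps : ℝ := ((k:ℝ)^5)⁻¹
def bb (t : ℕ) : ℝ := Gg k t / (mm k t : ℝ) - ((mm k t : ℝ) - 1) * eps k / 2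
def Cpart (t : ℕ) : List ℝ := qList (aa k t 0) ((k:ℝ) + t) (((k:ℝ)^2)⁻¹) (k-1)
def Fpart (t : ℕ) : List ℝ := qList (aa k t (k-1)) (bb k t) (eps k) (mm k t)
def Block (t : ℕ) : List ℝ := Cpart k t ++ Fpart k t
def LL : List ℝ := aa k 0 0 :: (List.range k).flatMap (Block k)
def stt (t : ℕ) : ℝ × ℝ :=
  if t = 0 then (0, aa k 0 0)
  else (bb k (t-1) + ((mm k (t-1) : ℝ) - 1) * eps k, aa k t 0)

variable {k}

section numeric
set_option linter.unusedSectionVars false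
variable (hk : 20 ≤ k) {t : ℕ} (ht : t < k)
include hk ht

lemma K20 : (20:ℝ) ≤ (k:ℝ) := by exact_mod_cast hk

lemma t_le : (t:ℝ) ≤ (k:ℝ) - 1 := by
  have : t + 1 ≤ k := ht
  have := (Nat.cast_le (α := ℝ)).mpr this
  push_cast at this; linarith

lemma Gg_lb : 129*(k:ℝ)^2 ≤ Gg k t := by
  have h1 := t_le hk ht
  have h2 : (0:ℝ) ≤ t := Nat.cast_nonneg t
  have h3 := K20 hk ht
  unfold Gg; nlinarith

lemma Gg_ub : Gg k t ≤ 130*(k:ℝ)^2 := by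
  have h2 : (0:ℝ) ≤ t := Nat.cast_nonneg t
  have := K20 hk ht
  unfold Gg; nlinarith

lemma mid_lb : (k:ℝ) + 1/2 ≤ mid k t := by
  have h2 : (0:ℝ) ≤ t := Nat.cast_nonneg t
  unfold mid; linarith

lemma mid_ub : mid k t ≤ 2*(k:ℝ) := by
  have := t_le hk ht
  unfold mid; linarith

lemma mid_pos : (0:ℝ) < mid k t := by
  have := K20 hk ht; have := mid_lb hk ht; linarith

lemma mm_cast_le : (mm k t : ℝ) ≤ Gg k t / mid k t := by
  apply Nat.floor_le
  apply div_nonneg _ (mid_pos hk ht).le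
  have := Gg_lb hk ht; have := K20 hk ht; nlinarith

lemma mm_le : (mm k t : ℝ) ≤ 130*(k:ℝ) := by
  have h1 := mm_cast_le hk ht
  have h2 := mid_pos hk ht
  have h3 := Gg_ub hk ht
  have h4 := mid_lb hk ht
  have h5 := K20 hk ht
  have : Gg k t / mid k t ≤ 130*(k:ℝ) := by
    rw [div_le_iff₀ h2]; nlinarith
  linarith

lemma one_le_mm : 1 ≤ mm k t := by
  apply Nat.le_floor
  rw [Nat.cast_one, le_div_iff₀ (mid_pos hk ht)]
  have := Gg_lb hk ht; have := mid_ub hk ht; have := K20 hk ht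
  nlinarith

lemma mm_cast_pos : (0:ℝ) < (mm k t : ℝ) := by
  have := one_le_mm hk ht; exact_mod_cast Nat.lt_of_lt_of_le Nat.zero_lt_one this

lemma mm_cast_one_le : (1:ℝ) ≤ (mm k t : ℝ) := by exact_mod_cast one_le_mm hk ht

lemma mid_le_div : mid k t ≤ Gg k t / (mm k t : ℝ) := by
  rw [le_div_iff₀ (mm_cast_pos hk ht)]
  have h1 := mm_cast_le hk ht
  have h2 := mid_pos hk ht
  calc mid k t * (mm k t : ℝ) ≤ mid k t * (Gg k t / mid k t) := by
        exact mul_le_mul_of_nonneg_left h1 h2.le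
    _ = Gg k t := by field_simp
  
lemma div_le_mid : Gg k t / (mm k t : ℝ) ≤ mid k t + 1/4 := by
  rw [div_le_iff₀ (mm_cast_pos hk ht)]
  have h1 : Gg k t / mid k t < (mm k t : ℝ) + 1 := Nat.lt_floor_add_one _
  have h2 := mid_pos hk ht
  have h1' : Gg k t < ((mm k t : ℝ) + 1) * mid k t := by
    rw [div_lt_iff₀ h2] at h1; linarith
  have h3 := Gg_lb hk ht
  have h4 := mid_ub hk ht
  have h5 := K20 hk ht
  have h6 := mm_cast_one_le hk ht
  nlinarith [mul_lt_mul_of_pos_right h1' (show (0:ℝ) < 4*(mid k t)+1 by linarith)]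

lemma eps_pos : (0:ℝ) < eps k := by
  have := K20 hk ht; unfold eps; positivity

lemma eps_mm : (mm k t : ℝ) * eps k ≤ 1/1000 := by
  have h1 := mm_le hk ht
  have h5 := K20 hk ht
  have h6 := mm_cast_pos hk ht
  unfold eps
  rw [mul_inv_le_iff₀ (by positivity)]
  nlinarith [pow_le_pow_left₀ (by norm_num : (0:ℝ) ≤ 20) h5 4]

lemma bb_lb : mid k t - 1/2000 ≤ bb k t := by
  have h1 := mid_le_div hk ht
  have h2 := eps_mm hk ht
  have h3 := eps_pos hk ht
  have h6 := mm_cast_one_le hk ht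
  unfold bb
  nlinarith

lemma bb_ub : bb k t + ((mm k t : ℝ) - 1) * eps k ≤ mid k t + 1/4 + 1/2000 := by
  have h1 := div_le_mid hk ht
  have h2 := eps_mm hk ht
  have h3 := eps_pos hk ht
  have h6 := mm_cast_one_le hk ht
  unfold bb
  nlinarith

lemma gapC_lt_bb : (k:ℝ) + (t:ℝ) + ((k-2 : ℕ):ℝ) * ((k:ℝ)^2)⁻¹ < bb k t := by
  have h1 := bb_lb hk ht
  have h2 : ((k-2:ℕ):ℝ) ≤ (k:ℝ) := by exact_mod_cast Nat.cast_le.mpr (Nat.sub_le k 2)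
  have h3 := K20 hk ht
  have h4 : ((k-2:ℕ):ℝ) * ((k:ℝ)^2)⁻¹ ≤ ((k:ℝ))⁻¹ := by
    rw [show ((k:ℝ)^2)⁻¹ = (k:ℝ)⁻¹ * (k:ℝ)⁻¹ by rw [sq]; rw [mul_inv]]
    have hkpos : (0:ℝ) < (k:ℝ) := by linarith
    calc ((k-2:ℕ):ℝ) * ((k:ℝ)⁻¹ * (k:ℝ)⁻¹) ≤ (k:ℝ) * ((k:ℝ)⁻¹ * (k:ℝ)⁻¹) := by
          apply mul_le_mul_of_nonneg_right h2; positivity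
      _ = (k:ℝ)⁻¹ := by field_simp
  have h5 : ((k:ℝ))⁻¹ ≤ 1/20 := by
    rw [inv_le_comm₀ (by linarith) (by norm_num)]; linarith
  have h6 : mid k t = (k:ℝ) + (t:ℝ) + 1/2 := rfl
  linarith

lemma bb_lt_next : bb k t + ((mm k t : ℝ) - 1) * eps k < (k:ℝ) + (t:ℝ) + 1 := by
  have h1 := bb_ub hk ht
  have h6 : mid k t = (k:ℝ) + (t:ℝ) + 1/2 := rfl
  linarith

lemma Gg_pos : (0:ℝ) < Gg k t := by
  have := Gg_lb hk ht; have := K20 hk ht; nlinarith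

lemma cc_nonneg (j : ℕ) : 0 ≤ cc k j := by
  have h3 := K20 hk ht
  have : ((j:ℝ) = 0) ∨ (1 ≤ (j:ℝ)) := by
    rcases Nat.eq_zero_or_pos j with h | h
    · left; simp [h]
    · right; exact_mod_cast h
  unfold cc
  rcases this with h | h
  · rw [h]; norm_num
  · have h0 : (0:ℝ) ≤ (j:ℝ) := by linarith
    apply add_nonneg
    · apply mul_nonneg h0; linarith
    · apply div_nonneg (div_nonneg (by nlinarith) (by norm_num)) (by positivity)
end numeric

section main
set_option linter.unusedSectionVars false
variable (hk : 20 ≤ k)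
include hk

lemma cast_k1 : ((k-1:ℕ):ℝ) = (k:ℝ) - 1 := by
  rw [Nat.cast_sub (by omega : 1 ≤ k)]; norm_num

lemma aa_step (t : ℕ) : aa k (t+1) 0 = aa k t (k-1) + Gg k t := by
  simp only [aa, dd, cc, Gg]
  rw [cast_k1 hk]
  push_cast
  ring

lemma aa_elem (t : ℕ) {j : ℕ} (hj1 : 1 ≤ j) (hj2 : j ≤ k - 1) :
    aa k t 0 + (((j-1:ℕ):ℝ) + 1) * ((k:ℝ) + (t:ℝ))
      + (((j-1:ℕ):ℝ) * (((j-1:ℕ):ℝ) + 1)) / 2 * ((k:ℝ)^2)⁻¹ = aa k t j := by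
  have h1 : ((j-1:ℕ):ℝ) = (j:ℝ) - 1 := by
    rw [Nat.cast_sub hj1]; norm_num
  simp only [aa, dd, cc]
  rw [h1]
  push_cast
  ring

lemma f_end {t : ℕ} (ht : t < k) :
    aa k t (k-1) + (((mm k t - 1:ℕ):ℝ) + 1) * (bb k t)
      + (((mm k t - 1:ℕ):ℝ) * (((mm k t - 1:ℕ):ℝ) + 1)) / 2 * eps k = aa k (t+1) 0 := by
  have hm := one_le_mm hk ht
  have hM : (0:ℝ) < (mm k t : ℝ) := mm_cast_pos hk ht
  have h1 : ((mm k t - 1:ℕ):ℝ) = (mm k t : ℝ) - 1 := by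
    rw [Nat.cast_sub hm]; norm_num
  rw [aa_step hk t, h1]
  unfold bb
  field_simp
  ring

lemma stt_snd (t : ℕ) : (stt k t).2 = aa k t 0 := by
  unfold stt
  split
  · rename_i h; rw [h]
  · rfl

lemma block_good {t : ℕ} (ht : t < k) :
    Good (stt k t).1 (stt k t).2 (Block k t) ∧ endSt (stt k t) (Block k t) = stt k (t+1) := by
  have hK := K20 hk ht
  have hk12 : k - 1 = (k - 2) + 1 := by omega
  have hgap1 : (stt k t).1 < (k:ℝ) + (t:ℝ) := by
    match t with
    | 0 => simp only [stt, if_pos rfl]; norm_num; linarith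
    | (s+1) =>
      have hs : s < k := by omega
      have h2 := bb_lt_next hk hs
      simp only [stt, Nat.succ_ne_zero, if_false, Nat.add_sub_cancel]
      push_cast
      push_cast at h2
      linarith
  have hCend : endSt (stt k t) (Cpart k t) =
      ((k:ℝ) + (t:ℝ) + ((k-2:ℕ):ℝ) * ((k:ℝ)^2)⁻¹, aa k t (k-1)) := by
    have : Cpart k t = qList (aa k t 0) ((k:ℝ) + (t:ℝ)) (((k:ℝ)^2)⁻¹) ((k-2)+1) := by
      rw [Cpart, ← hk12]
    rw [show stt k t = ((stt k t).1, aa k t 0) by rw [← stt_snd hk t], this,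
      endSt_qList]
    have he := aa_elem hk t (j := k-1) (by omega) (le_refl _)
    have h2 : (k-1) - 1 = k - 2 := by omega
    rw [h2] at he
    rw [Prod.mk.injEq]
    refine ⟨by ring, by linear_combination he⟩
  have hCgood : Good (stt k t).1 (stt k t).2 (Cpart k t) := by
    rw [stt_snd hk t]
    exact good_qList hgap1 (by positivity) _
  have hmm := one_le_mm hk ht
  have hmm1 : mm k t = (mm k t - 1) + 1 := by omega
  have hFgood : Good ((k:ℝ) + (t:ℝ) + ((k-2:ℕ):ℝ) * ((k:ℝ)^2)⁻¹) (aa k t (k-1)) (Fpart k t) := by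
    exact good_qList (gapC_lt_bb hk ht) (eps_pos hk ht) _
  have hFend : endSt ((k:ℝ) + (t:ℝ) + ((k-2:ℕ):ℝ) * ((k:ℝ)^2)⁻¹, aa k t (k-1)) (Fpart k t)
      = stt k (t+1) := by
    have : Fpart k t = qList (aa k t (k-1)) (bb k t) (eps k) ((mm k t - 1)+1) := by
      rw [Fpart, ← hmm1]
    rw [this, endSt_qList]
    have hfe := f_end hk ht
    have h1 : ((mm k t - 1:ℕ):ℝ) = (mm k t : ℝ) - 1 := by
      rw [Nat.cast_sub hmm]; norm_num
    simp only [stt, Nat.succ_ne_zero, if_false, Nat.add_sub_cancel]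
    rw [Prod.mk.injEq]
    refine ⟨by rw [h1], by linear_combination hfe⟩
  constructor
  · exact good_append hCgood (by rw [hCend]; exact hFgood)
  · rw [Block, endSt_append, hCend, hFend]

lemma LL_good : Good 0 (aa k 0 0) ((List.range k).flatMap (Block k)) := by
  have h := good_bind (Block k) (stt k) k (fun t ht => block_good hk ht)
  have h0 : stt k 0 = (0, aa k 0 0) := by unfold stt; simp
  rw [h0] at h
  exact h.1

lemma LL_chain : List.Chain' (· < ·) (LL k) := good_chain le_rfl (LL_good hk)

lemma LL_nodup : (LL k).Nodup :=
  (List.isChain_iff_pairwise.mp (LL_chain hk)).imp ne_of_lt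

lemma LL_sorted : (LL k).Pairwise (· ≤ ·) :=
  (List.isChain_iff_pairwise.mp (LL_chain hk)).imp le_of_lt

lemma sort_LL : (LL k).toFinset.sort (· ≤ ·) = LL k :=
  (List.toFinset_sort (· ≤ ·) (LL_nodup hk)).mpr (LL_sorted hk)

lemma card_LL : (LL k).toFinset.card = (LL k).length :=
  List.toFinset_card_of_nodup (LL_nodup hk)

lemma LL_isConvex : IsConvexSet (LL k).toFinset := by
  intro i hi
  rw [card_LL hk] at hi
  rw [sort_LL hk]
  exact good_getD (LL_good hk) i hi

lemma aa_mem {t j : ℕ} (ht : t < k) (hj : j < k) : aa k t j ∈ LL k := by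
  have hmem : ∀ {x : ℝ}, (∃ t' < k, x ∈ Block k t') → x ∈ LL k := by
    rintro x ⟨t', ht', hx⟩
    exact List.mem_cons_of_mem _ (List.mem_flatMap.mpr ⟨t', List.mem_range.mpr ht', hx⟩)
  rcases Nat.eq_zero_or_pos j with hj0 | hj1
  · subst hj0
    match t with
    | 0 => exact List.mem_cons_self
    | (s+1) =>
      have hs : s < k := by omega
      apply hmem
      refine ⟨s, hs, ?_⟩
      apply List.mem_append_right
      have := mem_qList (show mm k s - 1 < mm k s by have := one_le_mm hk hs; omega)
        (aa k s (k-1)) (bb k s) (eps k)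
      rw [f_end hk hs] at this
      exact this
  · apply hmem
    refine ⟨t, ht, List.mem_append_left _ ?_⟩
    have := mem_qList (show j - 1 < k - 1 by omega) (aa k t 0) ((k:ℝ)+(t:ℝ)) (((k:ℝ)^2)⁻¹)
    rw [aa_elem hk t hj1 (by omega)] at this
    exact this

lemma mm_nat_le {t : ℕ} (ht : t < k) : mm k t ≤ 130 * k := by
  have := mm_le hk ht
  exact_mod_cast this.trans (by push_cast; linarith [K20 hk ht] : (130:ℝ)*(k:ℝ) ≤ ((130*k : ℕ):ℝ))

lemma LL_len_ub : (LL k).length ≤ 132 * k * k := by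
  have hlen : ∀ t < k, (Block k t).length ≤ 131 * k := by
    intro t ht
    have : (Block k t).length = (k-1) + mm k t := by
      rw [Block, List.length_append, Cpart, Fpart, length_qList, length_qList]
    rw [this]
    have := mm_nat_le hk ht
    omega
  have h1 : ((List.range k).flatMap (Block k)).length ≤ k * (131 * k) := by
    rw [List.length_flatMap]
    calc (List.map (List.length ∘ Block k) (List.range k)).sum
        ≤ (List.map (List.length ∘ Block k) (List.range k)).length • (131 * k) := by
          apply List.sum_le_card_nsmul
          intro x hx
          obtain ⟨t, ht, rfl⟩ := List.mem_map.mp hx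
          exact hlen t (List.mem_range.mp ht)
      _ = k * (131 * k) := by simp [smul_eq_mul]
  have : (LL k).length = ((List.range k).flatMap (Block k)).length + 1 := by
    rw [LL, List.length_cons]
  rw [this]
  nlinarith [hk]

lemma dd_pos (j : ℕ) : 0 < dd k j := by
  have h1 := cc_nonneg hk (show 0 < k by omega) (k-1)
  have h2 := K20 hk (show 0 < k by omega)
  have h3 : (0:ℝ) ≤ (j:ℝ) := Nat.cast_nonneg j
  unfold dd; nlinarith

lemma aa_mono_j {t j j' : ℕ} (ht : t < k) (hjj : j < j') (hj' : j' < k) :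
    aa k t j < aa k t j' := by
  have e1 : (j:ℝ) + 1 ≤ (j':ℝ) := by exact_mod_cast hjj
  have e2 : (1:ℝ) ≤ (j':ℝ) := by
    have : 1 ≤ j' := by omega
    exact_mod_cast this
  have e3 : (0:ℝ) ≤ (j:ℝ) := Nat.cast_nonneg j
  have e4 : (0:ℝ) ≤ (t:ℝ) := Nat.cast_nonneg t
  have hK := K20 hk ht
  have hdiff : aa k t j' - aa k t j = ((j':ℝ)-(j:ℝ))*((k:ℝ)+(t:ℝ))
      + ((j':ℝ)*((j':ℝ)-1) - (j:ℝ)*((j:ℝ)-1))/2/(k:ℝ)^2 := by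
    simp only [aa, dd, cc]; ring
  have h1 : 0 ≤ ((j':ℝ)*((j':ℝ)-1) - (j:ℝ)*((j:ℝ)-1)) := by nlinarith
  have h2 : 0 ≤ ((j':ℝ)*((j':ℝ)-1) - (j:ℝ)*((j:ℝ)-1))/2/(k:ℝ)^2 := by positivity
  nlinarith

lemma aa_le_j {t j j' : ℕ} (ht : t < k) (hjj : j ≤ j') (hj' : j' < k) :
    aa k t j ≤ aa k t j' := by
  rcases Nat.lt_or_ge j j' with h | h
  · exact (aa_mono_j hk ht h hj').le
  · have : j = j' := by omega
    rw [this]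

lemma aa_mono_t {t t' j j' : ℕ} (htt : t < t') (ht' : t' < k) (hj : j < k) (hj' : j' < k) :
    aa k t j < aa k t' j' := by
  have ht : t < k := by omega
  have h1 : aa k t j ≤ aa k t (k-1) := aa_le_j hk ht (by omega) (by omega)
  have h2 : aa k t (k-1) < aa k (t+1) 0 := by
    rw [aa_step hk t]
    have := Gg_pos hk ht
    linarith
  have h3 : aa k (t+1) 0 ≤ aa k t' 0 := by
    unfold aa
    have hd := dd_pos hk 0
    have : ((t+1:ℕ):ℝ) ≤ (t':ℝ) := by exact_mod_cast htt
    push_cast at this ⊢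
    nlinarith
  have h4 : aa k t' 0 ≤ aa k t' j' := aa_le_j hk ht' (by omega) hj'
  linarith

lemma aa_inj_j {t t' j j' : ℕ} (ht : t < k) (ht' : t' < k) (hj : j < k) (hj' : j' < k)
    (h : aa k t j = aa k t' j') : j = j' := by
  rcases lt_trichotomy t t' with htt | htt | htt
  · exact absurd h (ne_of_lt (aa_mono_t hk htt ht' hj hj'))
  · subst htt
    rcases lt_trichotomy j j' with hjj | hjj | hjj
    · exact absurd h (ne_of_lt (aa_mono_j hk ht hjj hj'))
    · exact hjj
    · exact absurd h.symm (ne_of_lt (aa_mono_j hk ht hjj hj))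
  · exact absurd h.symm (ne_of_lt (aa_mono_t hk htt ht hj' hj))


lemma Pj_def (j : ℕ) :
    (Finset.range k).image (fun i : ℕ => cc k j + (i:ℝ) * dd k j)
      = (Finset.range k).image (fun t : ℕ => aa k t j) := rfl

lemma Pj_card (j : ℕ) : ((Finset.range k).image (fun t : ℕ => aa k t j)).card = k := by
  rw [Finset.card_image_of_injective _ ?_, Finset.card_range]
  intro t t' h
  simp only [aa] at h
  have h2 : (t:ℝ) * dd k j = (t':ℝ) * dd k j := by linarith [h]
  have h3 : (t:ℝ) = (t':ℝ) := mul_right_cancel₀ (ne_of_gt (dd_pos hk j)) h2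
  exact_mod_cast h3

lemma Pj_subset {j : ℕ} (hj : j < k) :
    (Finset.range k).image (fun t : ℕ => aa k t j) ⊆ (LL k).toFinset := by
  intro x hx
  obtain ⟨t, ht, rfl⟩ := Finset.mem_image.mp hx
  exact List.mem_toFinset.mpr (aa_mem hk (List.mem_range.mp (by simpa using ht)) hj)

lemma Pj_disj {j j' : ℕ} (hj : j < k) (hj' : j' < k) (hne : j ≠ j') :
    Disjoint ((Finset.range k).image (fun t : ℕ => aa k t j))
      ((Finset.range k).image (fun t : ℕ => aa k t j')) := by
  rw [Finset.disjoint_left]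
  intro x hx hx'
  obtain ⟨t, ht, rfl⟩ := Finset.mem_image.mp hx
  obtain ⟨t', ht', he⟩ := Finset.mem_image.mp hx'
  exact hne (aa_inj_j hk (Finset.mem_range.mp ht) (Finset.mem_range.mp ht') hj hj' he.symm)

end main
end
end ConvexAP

open ConvexAP in
/-- There are arbitrarily large convex sets `A` containing at least `c·|A|^{1/2}` pairwise
disjoint arithmetic progressions, each of length at least `c·|A|^{1/2}`. -/
theorem convex_set_with_many_long_disjoint_APs :
    ∃ c : ℝ, 0 < c ∧ ∀ N : ℕ, ∃ A : Finset ℝ,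
      IsConvexSet A ∧ N ≤ A.card ∧
      ∃ Ps : Finset (Finset ℝ),
        c * (A.card : ℝ) ^ (1 / 2 : ℝ) ≤ (Ps.card : ℝ) ∧
        (∀ P ∈ Ps, P ⊆ A ∧ ∃ m : ℕ, c * (A.card : ℝ) ^ (1 / 2 : ℝ) ≤ (m : ℝ) ∧
          IsAPOfLength P m) ∧
        (∀ P ∈ Ps, ∀ Q ∈ Ps, P ≠ Q → Disjoint P Q) := by
  refine ⟨1/12, by norm_num, fun N => ?_⟩
  set k := max N 20 with hkdef
  have hk : 20 ≤ k := le_max_right _ _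
  have hNk : N ≤ k := le_max_left _ _
  set A : Finset ℝ := (LL k).toFinset with hA
  have hBcard : ((Finset.range k).biUnion
      (fun j => (Finset.range k).image (fun t : ℕ => aa k t j))).card = k * k := by
    rw [Finset.card_biUnion]
    · rw [Finset.sum_congr rfl (fun j _ => Pj_card hk j), Finset.sum_const,
        Finset.card_range, smul_eq_mul]
    · intro j hj j' hj' hne
      exact Pj_disj hk (Finset.mem_range.mp hj) (Finset.mem_range.mp hj') hne
  have hBsub : (Finset.range k).biUnion
      (fun j => (Finset.range k).image (fun t : ℕ => aa k t j)) ⊆ A := by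
    intro x hx
    obtain ⟨j, hj, hx⟩ := Finset.mem_biUnion.mp hx
    exact Pj_subset hk (Finset.mem_range.mp hj) hx
  have hA_lb : k * k ≤ A.card := hBcard ▸ Finset.card_le_card hBsub
  have hA_ub : A.card ≤ 132 * k * k := by
    rw [hA, card_LL hk]; exact LL_len_ub hk
  have hsq : (1/12 : ℝ) * (A.card : ℝ) ^ (1/2 : ℝ) ≤ (k : ℝ) := by
    have hk0 : (0:ℝ) ≤ (k:ℝ) := Nat.cast_nonneg k
    have h1 : ((A.card : ℕ):ℝ) ≤ (12*(k:ℝ))^2 := by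
      have := (Nat.cast_le (α := ℝ)).mpr hA_ub
      push_cast at this ⊢
      nlinarith
    have h2 : ((A.card:ℕ):ℝ) ^ ((1:ℝ)/2) = Real.sqrt (A.card) := (Real.sqrt_eq_rpow _).symm
    have h3 : Real.sqrt (A.card) ≤ 12*(k:ℝ) := by
      rw [show (12*(k:ℝ)) = Real.sqrt ((12*(k:ℝ))^2) from Real.sqrt_sq (by positivity) |>.symm]
      exact Real.sqrt_le_sqrt h1
    rw [h2]
    linarith
  refine ⟨A, LL_isConvex hk, ?_, ?_⟩
  · calc N ≤ k := hNk
      _ ≤ k * k := Nat.le_mul_of_pos_left k (by omega)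
      _ ≤ A.card := hA_lb
  refine ⟨(Finset.range k).image
    (fun j => (Finset.range k).image (fun t : ℕ => aa k t j)), ?_, ?_, ?_⟩
  · have hcard : ((Finset.range k).image
        (fun j => (Finset.range k).image (fun t : ℕ => aa k t j))).card = k := by
      rw [Finset.card_image_of_injOn, Finset.card_range]
      intro j hj j' hj' he
      simp only at he
      by_contra hne
      have hdisj := Pj_disj hk (Finset.mem_range.mp (Finset.mem_coe.mp hj))
        (Finset.mem_range.mp (Finset.mem_coe.mp hj')) hne
      rw [he] at hdisj
      have hmem : aa k 0 j' ∈ (Finset.range k).image (fun t : ℕ => aa k t j') :=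
        Finset.mem_image.mpr ⟨0, Finset.mem_range.mpr (by omega), rfl⟩
      exact (Finset.disjoint_left.mp hdisj hmem) hmem
    rw [hcard]
    exact hsq
  · intro P hP
    obtain ⟨j, hj, rfl⟩ := Finset.mem_image.mp hP
    have hjk := Finset.mem_range.mp hj
    exact ⟨Pj_subset hk hjk, k, hsq,
      ⟨cc k j, dd k j, ne_of_gt (dd_pos hk j), rfl⟩⟩
  · intro P hP Q hQ hPQ
    obtain ⟨j, hj, rfl⟩ := Finset.mem_image.mp hP
    obtain ⟨j', hj', rfl⟩ := Finset.mem_image.mp hQ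
    exact Pj_disj hk (Finset.mem_range.mp hj) (Finset.mem_range.mp hj')
      (fun h => hPQ (by rw [h]))
end

section
/- For every fixed integer k ≥ 3 there exists a constant c_k > 0 such that for every natural number N there is a finite convex set A ⊂ ℝ with |A| ≥ N containing at least c_k·|A|^{3/2} non-trivial k-term arithmetic progressions, i.e. tuples (a₁, …, a_k) ∈ A^k with a_{i+1} − a_i equal to a fixed nonzero common difference for all 1 ≤ i < k. -/
namespace ConvexAPs




/-- Chain' for a mapped range. -/
lemma chain'_map_range {R : ℝ → ℝ → Prop} (n : ℕ) (f : ℕ → ℝ)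
    (h : ∀ j, j + 1 < n → R (f j) (f (j+1))) :
    List.Chain' R ((List.range n).map f) := by
  rw [List.Chain', List.isChain_iff_getElem]
  intro i hi
  simp only [List.length_map, List.length_range] at hi
  simp only [List.getElem_map, List.getElem_range]
  exact h i (by omega)

lemma head?_map_range (n : ℕ) (f : ℕ → ℝ) (hn : 0 < n) :
    ((List.range n).map f).head? = some (f 0) := by
  obtain ⟨m, rfl⟩ : ∃ m, n = m + 1 := ⟨n - 1, by omega⟩
  rw [List.range_succ_eq_map]
  simp

lemma getLast?_map_range (n : ℕ) (f : ℕ → ℝ) (hn : 0 < n) :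
    ((List.range n).map f).getLast? = some (f (n-1)) := by
  obtain ⟨m, rfl⟩ : ∃ m, n = m + 1 := ⟨n - 1, by omega⟩
  rw [List.range_succ]
  simp

/-- sum over mapped range equals Finset.sum -/
lemma sum_map_range (n : ℕ) (f : ℕ → ℝ) :
    ((List.range n).map f).sum = ∑ j ∈ Finset.range n, f j := by
  induction n with
  | zero => simp
  | succ m ih => rw [List.range_succ, Finset.sum_range_succ]; simp [ih]

/-- scanl getD difference equals gap entry -/
lemma scanl_getD_sub (G : List ℝ) (a : ℝ) (t : ℕ) (ht : t < G.length) :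
    (List.scanl (· + ·) a G).getD (t+1) 0 - (List.scanl (· + ·) a G).getD t 0 = G.getD t 0 := by
  induction G generalizing a t with
  | nil => simp at ht
  | cons g gs ih =>
    rw [List.scanl_cons]
    cases t with
    | zero =>
      have h0 : (List.scanl (· + ·) (a + g) gs).getD 0 0 = a + g := by
        cases gs <;> simp [List.scanl_cons, List.scanl_nil]
      simp [h0]
    | succ s =>
      have := ih (a + g) s (by simpa using ht)
      simpa using this

/-- scanl is sorted if all gaps positive -/
lemma scanl_chain'_lt (G : List ℝ) (a : ℝ) (h : ∀ g ∈ G, 0 < g) :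
    List.Chain' (· < ·) (List.scanl (· + ·) a G) := by
  induction G generalizing a with
  | nil => simp [List.scanl_nil, List.Chain']
  | cons g gs ih =>
    rw [List.scanl_cons]
    have h1 : List.Chain' (· < ·) (List.scanl (· + ·) (a + g) gs) :=
      ih (a + g) (fun x hx => h x (List.mem_cons_of_mem _ hx))
    have h2 : (List.scanl (· + ·) (a + g) gs).head? = some (a + g) := by
      cases gs <;> simp [List.scanl_cons, List.scanl_nil]
    refine List.isChain_cons.mpr ⟨?_, h1⟩
    intro y hy
    rw [h2] at hy
    simp only [Option.mem_def, Option.some.injEq] at hy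
    subst hy
    have := h g List.mem_cons_self
    linarith

/-- prefix sums are members of scanl -/
lemma mem_scanl_take (G : List ℝ) (a : ℝ) (t : ℕ) (ht : t ≤ G.length) :
    a + (G.take t).sum ∈ List.scanl (· + ·) a G := by
  induction G generalizing a t with
  | nil => simp at ht ⊢
  | cons g gs ih =>
    rw [List.scanl_cons]
    cases t with
    | zero => simp
    | succ s =>
      have := ih (a + g) s (by simpa using ht)
      rw [List.mem_cons]
      right
      simpa [add_assoc] using this






variable (bs : ℕ → List ℝ)

lemma getLast?_blocks (m : ℕ) (hm : 0 < m) (hne : ∀ i, i < m → bs i ≠ []) :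
    ((List.range m).flatMap bs).getLast? = (bs (m-1)).getLast? := by
  obtain ⟨p, rfl⟩ : ∃ p, m = p + 1 := ⟨m - 1, by omega⟩
  rw [List.range_succ, List.flatMap_append]
  simp only [List.flatMap_cons, List.flatMap_nil, List.append_nil]
  rw [List.getLast?_append]
  have : (bs p).getLast? ≠ none := by
    simp only [ne_eq, List.getLast?_eq_none_iff]
    exact hne p (by omega)
  cases h : (bs p).getLast? with
  | none => exact absurd h this
  | some x => simp [h]

lemma chain'_blocks {R : ℝ → ℝ → Prop} (m : ℕ)
    (hne : ∀ i, i < m → bs i ≠ [])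
    (hchain : ∀ i, i < m → List.Chain' R (bs i))
    (hbd : ∀ i, i + 1 < m → ∀ x ∈ (bs i).getLast?, ∀ y ∈ (bs (i+1)).head?, R x y) :
    List.Chain' R ((List.range m).flatMap bs) := by
  induction m with
  | zero => simp [List.Chain']
  | succ p ih =>
    rw [List.range_succ, List.flatMap_append]
    simp only [List.flatMap_cons, List.flatMap_nil, List.append_nil]
    rw [List.Chain', List.isChain_append]
    refine ⟨ih (fun i hi => hne i (by omega)) (fun i hi => hchain i (by omega))
        (fun i hi => hbd i (by omega)), hchain p (by omega), ?_⟩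
    intro x hx y hy
    rcases Nat.eq_zero_or_pos p with rfl | hp
    · simp at hx
    · rw [getLast?_blocks bs p hp (fun i hi => hne i (by omega))] at hx
      have h2 := hbd (p-1) (by omega) x hx
      rw [Nat.sub_add_cancel hp] at h2
      exact h2 y hy

lemma sum_blocks (m : ℕ) :
    ((List.range m).flatMap bs).sum = ∑ i ∈ Finset.range m, (bs i).sum := by
  induction m with
  | zero => simp
  | succ p ih =>
    rw [List.range_succ, List.flatMap_append, List.sum_append, Finset.sum_range_succ, ih]
    simp

lemma take_blocks (m i t : ℕ) (him : i < m) (ht : t ≤ (bs i).length) :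
    ((List.range m).flatMap bs).take (((List.range i).flatMap bs).length + t)
      = ((List.range i).flatMap bs) ++ (bs i).take t := by
  have hsplit : m = i + (m - i) := by omega
  rw [hsplit, List.range_add, List.flatMap_append, List.take_length_add_append]
  congr 1
  obtain ⟨q, hq⟩ : ∃ q, m - i = q + 1 := ⟨m - i - 1, by omega⟩
  rw [hq, List.range_succ_eq_map]
  simp only [List.map_cons, List.flatMap_cons, Nat.add_zero]
  rw [List.take_append_of_le_length ht]






noncomputable def arc (T i j : ℕ) : ℝ := 1 + (j : ℝ)/(32*(T:ℝ)^2) + (i:ℝ)/(T:ℝ)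

noncomputable def cseq (T j : ℕ) : ℝ := (j:ℝ) + (j:ℝ)*((j:ℝ)-1)/(64*(T:ℝ)^2)

noncomputable def xpt (T i j : ℕ) : ℝ := 30*(T:ℝ)*(i:ℝ) + cseq T j + (i:ℝ)*(j:ℝ)/(T:ℝ)

noncomputable def Wr (T i : ℕ) : ℝ :=
  30*(T:ℝ) - (4*(T:ℝ)-1) - (4*(T:ℝ)-1)*(4*(T:ℝ)-2)/(64*(T:ℝ)^2) - (i:ℝ)*(4*(T:ℝ)-1)/(T:ℝ)

noncomputable def mt (T i : ℕ) : ℝ := 1 + ((i:ℝ)+1)/(T:ℝ) - 1/(4*(T:ℝ))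

noncomputable def nf (T i : ℕ) : ℕ := ⌈Wr T i / mt T i⌉₊

noncomputable def piece (T i r : ℕ) : ℝ :=
  Wr T i / (nf T i : ℝ) + (2*(r:ℝ) + 1 - (nf T i : ℝ))/(2000*(T:ℝ)^2)

lemma tpos {T : ℕ} (hT : 48 ≤ T) : (0:ℝ) < (T:ℝ) := by
  have : (48:ℝ) ≤ (T:ℝ) := by exact_mod_cast hT
  linarith

lemma iR_le {T i : ℕ} (hi : i < T) : (i:ℝ) ≤ (T:ℝ) - 1 := by
  have : (i:ℝ) + 1 ≤ (T:ℝ) := by exact_mod_cast hi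
  linarith

/-- Wr bounds for i < T -/
lemma Wr_bounds {T i : ℕ} (hT : 48 ≤ T) (hi : i < T) :
    22*(T:ℝ) ≤ Wr T i ∧ Wr T i ≤ 26*(T:ℝ) + 1 := by
  have ht := tpos hT
  have hiR := iR_le hi
  have hi0 : (0:ℝ) ≤ (i:ℝ) := Nat.cast_nonneg i
  have h1 : (4*(T:ℝ)-1)*(4*(T:ℝ)-2)/(64*(T:ℝ)^2) ≤ 1/4 := by
    rw [div_le_div_iff₀ (by positivity) (by norm_num)]
    nlinarith
  have h1' : (0:ℝ) ≤ (4*(T:ℝ)-1)*(4*(T:ℝ)-2)/(64*(T:ℝ)^2) :=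
    div_nonneg (by nlinarith) (by positivity)
  have h2 : (i:ℝ)*(4*(T:ℝ)-1)/(T:ℝ) ≤ 4*(T:ℝ) - 1 := by
    rw [div_le_iff₀ (by positivity)]
    nlinarith
  have h2' : (0:ℝ) ≤ (i:ℝ)*(4*(T:ℝ)-1)/(T:ℝ) :=
    div_nonneg (by nlinarith) (by positivity)
  unfold Wr
  constructor <;> nlinarith

/-- mt bounds for i < T -/
lemma mt_bounds {T i : ℕ} (hT : 48 ≤ T) (hi : i < T) :
    1 < mt T i ∧ mt T i < 2 := by
  have ht := tpos hT
  have hiR := iR_le hi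
  have hi0 : (0:ℝ) ≤ (i:ℝ) := Nat.cast_nonneg i
  have h1 : 1/(4*(T:ℝ)) < ((i:ℝ)+1)/(T:ℝ) := by
    rw [div_lt_div_iff₀ (by positivity) (by positivity)]
    nlinarith
  have h2 : ((i:ℝ)+1)/(T:ℝ) ≤ 1 := by
    rw [div_le_one (by positivity)]
    linarith
  have h3 : (0:ℝ) < 1/(4*(T:ℝ)) := by positivity
  unfold mt
  constructor <;> linarith

/-- nf bounds for i < T -/
lemma nf_bounds {T i : ℕ} (hT : 48 ≤ T) (hi : i < T) :
    11*(T:ℝ) ≤ (nf T i : ℝ) ∧ (nf T i : ℝ) ≤ 27*(T:ℝ) := by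
  have ht := tpos hT
  obtain ⟨hW1, hW2⟩ := Wr_bounds hT hi
  obtain ⟨hm1, hm2⟩ := mt_bounds hT hi
  have hWpos : (0:ℝ) < Wr T i := by linarith
  have hmpos : (0:ℝ) < mt T i := by linarith
  have hdiv_lb : 11*(T:ℝ) ≤ Wr T i / mt T i := by
    rw [le_div_iff₀ hmpos]
    nlinarith
  have hdiv_ub : Wr T i / mt T i ≤ 26*(T:ℝ) + 1 := by
    rw [div_le_iff₀ hmpos]
    nlinarith
  constructor
  · exact le_trans hdiv_lb (Nat.le_ceil _)
  · have := Nat.ceil_lt_add_one (le_of_lt (by positivity : (0:ℝ) < Wr T i / mt T i))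
    have h48 : (48:ℝ) ≤ (T:ℝ) := by exact_mod_cast hT
    unfold nf
    nlinarith [this, hdiv_ub]

/-- key bounds on W/n -/
lemma Wn_bounds {T i : ℕ} (hT : 48 ≤ T) (hi : i < T) :
    mt T i - 2/(11*(T:ℝ)) < Wr T i / (nf T i : ℝ) ∧ Wr T i / (nf T i : ℝ) ≤ mt T i := by
  have ht := tpos hT
  obtain ⟨hW1, hW2⟩ := Wr_bounds hT hi
  obtain ⟨hm1, hm2⟩ := mt_bounds hT hi
  obtain ⟨hn1, hn2⟩ := nf_bounds hT hi
  have hWpos : (0:ℝ) < Wr T i := by linarith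
  have hmpos : (0:ℝ) < mt T i := by linarith
  have hnpos : (0:ℝ) < (nf T i : ℝ) := by linarith
  have hceil_ge : Wr T i / mt T i ≤ (nf T i : ℝ) := Nat.le_ceil _
  have hceil_lt : (nf T i : ℝ) < Wr T i / mt T i + 1 :=
    Nat.ceil_lt_add_one (by positivity)
  have hup : Wr T i ≤ (nf T i : ℝ) * mt T i := by
    rw [div_le_iff₀ hmpos] at hceil_ge
    linarith
  have hlo : (nf T i : ℝ) * mt T i < Wr T i + mt T i := by
    have h2 := (lt_div_iff₀ hmpos).mp (by linarith : (nf T i : ℝ) - 1 < Wr T i / mt T i)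
    nlinarith
  have hprod : (2:ℝ) ≤ (nf T i : ℝ) * (2/(11*(T:ℝ))) := by
    have hpos : (0:ℝ) ≤ 2/(11*(T:ℝ)) := by positivity
    have heq : 11*(T:ℝ) * (2/(11*(T:ℝ))) = 2 := by field_simp
    nlinarith [mul_le_mul_of_nonneg_right hn1 hpos]
  constructor
  · rw [lt_div_iff₀ hnpos]
    nlinarith
  · rw [div_le_iff₀ hnpos]
    nlinarith


lemma t48 {T : ℕ} (hT : 48 ≤ T) : (48:ℝ) ≤ (T:ℝ) := by exact_mod_cast hT

lemma arc_bounds {T i j : ℕ} (hT : 48 ≤ T) (hi : i < T) (hj : j ≤ 4*T - 2) :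
    1 ≤ arc T i j ∧ arc T i j ≤ 1 + (i:ℝ)/(T:ℝ) + 1/(8*(T:ℝ)) ∧ arc T i j < 2 := by
  have ht := tpos hT
  have hiR := iR_le hi
  have hjR : (j:ℝ) ≤ 4*(T:ℝ) - 2 := by
    have h1 : (j:ℝ) ≤ ((4*T - 2 : ℕ):ℝ) := by exact_mod_cast hj
    have h2 : ((4*T - 2 : ℕ):ℝ) = 4*(T:ℝ) - 2 := by
      push_cast [Nat.cast_sub (by omega : 2 ≤ 4*T)]; ring
    linarith [h2.le]
  have hj0 : (0:ℝ) ≤ (j:ℝ) := Nat.cast_nonneg j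
  have hi0 : (0:ℝ) ≤ (i:ℝ) := Nat.cast_nonneg i
  have h1 : (j:ℝ)/(32*(T:ℝ)^2) ≤ 1/(8*(T:ℝ)) := by
    rw [div_le_div_iff₀ (by positivity) (by positivity)]
    nlinarith
  have h1' : (0:ℝ) ≤ (j:ℝ)/(32*(T:ℝ)^2) := by positivity
  have h2 : (i:ℝ)/(T:ℝ) ≤ 1 - 1/(T:ℝ) := by
    rw [div_le_iff₀ (by positivity)]
    have : (1 - 1/(T:ℝ))*(T:ℝ) = (T:ℝ) - 1 := by field_simp
    rw [this]; exact hiR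
  have h3 : 1/(8*(T:ℝ)) < 1/(T:ℝ) := by
    rw [div_lt_div_iff₀ (by positivity) (by positivity)]
    nlinarith
  have h4 : (0:ℝ) ≤ (i:ℝ)/(T:ℝ) := by positivity
  unfold arc
  refine ⟨by linarith, by linarith, by linarith⟩

/-- arcs strictly increase within a period -/
lemma arc_mono {T i j : ℕ} (hT : 48 ≤ T) : arc T i j < arc T i (j+1) := by
  have ht := tpos hT
  unfold arc
  have h : (j:ℝ)/(32*(T:ℝ)^2) < ((j:ℝ)+1)/(32*(T:ℝ)^2) := by
    apply div_lt_div_of_pos_right (by linarith) (by positivity)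
  push_cast
  linarith

/-- pieces strictly increase -/
lemma piece_mono {T i r : ℕ} (hT : 48 ≤ T) : piece T i r < piece T i (r+1) := by
  have ht := tpos hT
  unfold piece
  have h : (2*(r:ℝ) + 1 - (nf T i:ℝ))/(2000*(T:ℝ)^2) < (2*((r:ℝ)+1) + 1 - (nf T i:ℝ))/(2000*(T:ℝ)^2) := by
    apply div_lt_div_of_pos_right (by linarith) (by positivity)
  push_cast
  linarith

/-- ramp size bound on pieces: for r < nf, piece is within W/n ± 27/(2000 T) -/
lemma piece_bounds {T i r : ℕ} (hT : 48 ≤ T) (hi : i < T) (hr : r < nf T i) :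
    Wr T i / (nf T i : ℝ) - 27/(2000*(T:ℝ)) ≤ piece T i r ∧
    piece T i r ≤ Wr T i / (nf T i : ℝ) + 27/(2000*(T:ℝ)) := by
  have ht := tpos hT
  obtain ⟨hn1, hn2⟩ := nf_bounds hT hi
  have hrR : (r:ℝ) ≤ (nf T i : ℝ) - 1 := by
    have : (r:ℝ) + 1 ≤ (nf T i : ℝ) := by exact_mod_cast hr
    linarith
  have hr0 : (0:ℝ) ≤ (r:ℝ) := Nat.cast_nonneg r
  have key : |2*(r:ℝ) + 1 - (nf T i:ℝ)| ≤ (nf T i : ℝ) := by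
    rw [abs_le]; constructor <;> nlinarith
  have h1 : (2*(r:ℝ) + 1 - (nf T i:ℝ))/(2000*(T:ℝ)^2) ≤ 27/(2000*(T:ℝ)) := by
    rw [div_le_div_iff₀ (by positivity) (by positivity)]
    have := abs_le.mp key
    nlinarith [this.2]
  have h2 : -(27/(2000*(T:ℝ))) ≤ (2*(r:ℝ) + 1 - (nf T i:ℝ))/(2000*(T:ℝ)^2) := by
    rw [neg_le, ← neg_div, div_le_div_iff₀ (by positivity) (by positivity)]
    have := abs_le.mp key
    nlinarith [this.1]
  constructor
  · unfold piece; linarith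
  · unfold piece; linarith

lemma uden {T : ℕ} (hT : 48 ≤ T) :
    (0:ℝ) < 1/(T:ℝ) := by positivity

/-- boundary: last arc < first piece -/
lemma arc_lt_piece0 {T i : ℕ} (hT : 48 ≤ T) (hi : i + 1 < T) :
    arc T i (4*T-2) < piece T i 0 := by
  have ht := tpos hT
  have hiT : i < T := by omega
  obtain ⟨ha1, ha2, ha3⟩ := arc_bounds hT hiT (le_refl (4*T-2))
  obtain ⟨hp1, hp2⟩ := piece_bounds hT hiT (by
    have := nf_bounds hT hiT
    have h48 : (48:ℝ) ≤ (T:ℝ) := t48 hT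
    have : (0:ℝ) < (nf T i : ℝ) := by linarith [this.1]
    exact_mod_cast this)
  obtain ⟨hw1, hw2⟩ := Wn_bounds hT hiT
  have hu : (0:ℝ) < 1/(T:ℝ) := by positivity
  have e1 : 1/(8*(T:ℝ)) = (1/8)*(1/(T:ℝ)) := by ring
  have e2 : 2/(11*(T:ℝ)) = (2/11)*(1/(T:ℝ)) := by ring
  have e3 : 27/(2000*(T:ℝ)) = (27/2000)*(1/(T:ℝ)) := by ring
  have e4 : ((i:ℝ)+1)/(T:ℝ) = (i:ℝ)/(T:ℝ) + 1*(1/(T:ℝ)) := by ring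
  have e5 : 1/(4*(T:ℝ)) = (1/4)*(1/(T:ℝ)) := by ring
  have hmt : mt T i = 1 + ((i:ℝ)+1)/(T:ℝ) - 1/(4*(T:ℝ)) := rfl
  -- chain: arc ≤ 1 + i/T + 1/(8T) < mt - 2/(11T) - 27/(2000T) ≤ W/n - 27/(2000T) ≤ piece 0
  have : 1 + (i:ℝ)/(T:ℝ) + 1/(8*(T:ℝ)) < mt T i - 2/(11*(T:ℝ)) - 27/(2000*(T:ℝ)) := by
    rw [hmt, e1, e2, e3, e4, e5]
    linarith
  linarith

/-- boundary: last piece < first arc of next period -/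
lemma piece_lt_arc {T i : ℕ} (hT : 48 ≤ T) (hi : i + 1 < T) :
    piece T i (nf T i - 1) < arc T (i+1) 0 := by
  have ht := tpos hT
  have hiT : i < T := by omega
  have hnfpos : 0 < nf T i := by
    have := (nf_bounds hT hiT).1
    have h48 : (48:ℝ) ≤ (T:ℝ) := t48 hT
    have : (0:ℝ) < (nf T i : ℝ) := by linarith
    exact_mod_cast this
  obtain ⟨hp1, hp2⟩ := piece_bounds hT hiT (by omega : nf T i - 1 < nf T i)
  obtain ⟨hw1, hw2⟩ := Wn_bounds hT hiT
  have harc : arc T (i+1) 0 = 1 + ((i:ℝ)+1)/(T:ℝ) := by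
    unfold arc; push_cast; ring
  have hmt : mt T i = 1 + ((i:ℝ)+1)/(T:ℝ) - 1/(4*(T:ℝ)) := rfl
  have e3 : 27/(2000*(T:ℝ)) = (27/2000)*(1/(T:ℝ)) := by ring
  have e5 : 1/(4*(T:ℝ)) = (1/4)*(1/(T:ℝ)) := by ring
  have hu : (0:ℝ) < 1/(T:ℝ) := by positivity
  rw [harc]
  have : mt T i + 27/(2000*(T:ℝ)) < 1 + ((i:ℝ)+1)/(T:ℝ) := by
    rw [hmt, e3, e5]; linarith
  linarith

/-- pieces are positive (in fact ≥ 1/2) -/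
lemma piece_pos {T i r : ℕ} (hT : 48 ≤ T) (hi : i + 1 < T) (hr : r < nf T i) :
    (1/2:ℝ) ≤ piece T i r := by
  have ht := tpos hT
  have hiT : i < T := by omega
  obtain ⟨hp1, hp2⟩ := piece_bounds hT hiT hr
  obtain ⟨hw1, hw2⟩ := Wn_bounds hT hiT
  obtain ⟨hm1, hm2⟩ := mt_bounds hT hiT
  have h48 : (48:ℝ) ≤ (T:ℝ) := t48 hT
  have e2 : 2/(11*(T:ℝ)) ≤ 2/11 := by
    rw [div_le_div_iff₀ (by positivity) (by norm_num)]
    nlinarith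
  have e3 : 27/(2000*(T:ℝ)) ≤ 27/2000 := by
    rw [div_le_div_iff₀ (by positivity) (by norm_num)]
    nlinarith
  have h2 : (0:ℝ) < 2/(11*(T:ℝ)) := by positivity
  have h3 : (0:ℝ) < 27/(2000*(T:ℝ)) := by positivity
  linarith

/-- arc is at least 1 -/
lemma arc_ge_one {T i j : ℕ} (hT : 48 ≤ T) : (1:ℝ) ≤ arc T i j := by
  have ht := tpos hT
  unfold arc
  have h1 : (0:ℝ) ≤ (j:ℝ)/(32*(T:ℝ)^2) := by positivity
  have h2 : (0:ℝ) ≤ (i:ℝ)/(T:ℝ) := by positivity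
  linarith

/-- step within a period -/
lemma xpt_step {T i j : ℕ} (hT : 48 ≤ T) : xpt T i (j+1) = xpt T i j + arc T i j := by
  have ht := tpos hT
  have hT0 : (T:ℝ) ≠ 0 := ne_of_gt ht
  unfold xpt cseq arc
  push_cast
  field_simp
  ring

/-- step between periods: the column APs -/
lemma xpt_col_step {T i j : ℕ} (hT : 48 ≤ T) :
    xpt T (i+1) j = xpt T i j + (30*(T:ℝ) + (j:ℝ)/(T:ℝ)) := by
  have ht := tpos hT
  have hT0 : (T:ℝ) ≠ 0 := ne_of_gt ht
  unfold xpt cseq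
  push_cast
  field_simp
  ring

lemma sum_range_cast (n : ℕ) : ∑ j ∈ Finset.range n, (j:ℝ) = (n:ℝ)*((n:ℝ)-1)/2 := by
  induction n with
  | zero => simp
  | succ m ih => rw [Finset.sum_range_succ, ih]; push_cast; ring

/-- the gaps of period i -/
noncomputable def gapBlock (T i : ℕ) : List ℝ :=
  ((List.range (4*T-1)).map (arc T i)) ++
    (if i + 1 < T then (List.range (nf T i)).map (piece T i) else [])

lemma nf_pos {T i : ℕ} (hT : 48 ≤ T) (hi : i < T) : 0 < nf T i := by
  have := (nf_bounds hT hi).1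
  have h48 := t48 hT
  have : (0:ℝ) < (nf T i : ℝ) := by linarith
  exact_mod_cast this

lemma gapBlock_ne_nil {T i : ℕ} (hT : 48 ≤ T) : gapBlock T i ≠ [] := by
  unfold gapBlock
  intro h
  rcases List.append_eq_nil_iff.mp h with ⟨h1, -⟩
  have : (List.range (4*T-1)).map (arc T i) ≠ [] := by
    simp only [ne_eq, List.map_eq_nil_iff, List.range_eq_nil]
    omega
  exact this h1

lemma sum_arcs {T i : ℕ} (hT : 48 ≤ T) :
    (((List.range (4*T-1)).map (arc T i)).sum)
      = (4*(T:ℝ)-1)*(1 + (i:ℝ)/(T:ℝ)) + (4*(T:ℝ)-1)*(4*(T:ℝ)-2)/(64*(T:ℝ)^2) := by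
  have ht := tpos hT
  rw [sum_map_range]
  have hcast : ((4*T-1 : ℕ):ℝ) = 4*(T:ℝ)-1 := by
    push_cast [Nat.cast_sub (by omega : 1 ≤ 4*T)]; ring
  unfold arc
  rw [Finset.sum_add_distrib, Finset.sum_add_distrib]
  rw [Finset.sum_const, Finset.card_range]
  have h2 : ∑ j ∈ Finset.range (4*T-1), (j:ℝ)/(32*(T:ℝ)^2)
      = ((4*T-1:ℕ):ℝ)*(((4*T-1:ℕ):ℝ)-1)/2 / (32*(T:ℝ)^2) := by
    rw [← Finset.sum_div, sum_range_cast]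
  have h3 : ∑ _j ∈ Finset.range (4*T-1), (i:ℝ)/(T:ℝ)
      = ((4*T-1:ℕ):ℝ) * ((i:ℝ)/(T:ℝ)) := by
    rw [Finset.sum_const, Finset.card_range, nsmul_eq_mul]
  rw [h2, h3, nsmul_eq_mul, mul_one, hcast]
  have hT0 : (T:ℝ) ≠ 0 := ne_of_gt ht
  field_simp
  ring

lemma sum_pieces {T i : ℕ} (hT : 48 ≤ T) (hi : i < T) :
    (((List.range (nf T i)).map (piece T i)).sum) = Wr T i := by
  have ht := tpos hT
  have hn := nf_pos hT hi
  have hnR : (0:ℝ) < (nf T i : ℝ) := by exact_mod_cast hn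
  rw [sum_map_range]
  unfold piece
  rw [Finset.sum_add_distrib, Finset.sum_const, Finset.card_range, nsmul_eq_mul]
  have h1 : (nf T i : ℝ) * (Wr T i / (nf T i : ℝ)) = Wr T i := by
    field_simp
  have h2 : ∑ r ∈ Finset.range (nf T i), (2*(r:ℝ) + 1 - (nf T i:ℝ))/(2000*(T:ℝ)^2)
      = (∑ r ∈ Finset.range (nf T i), (2*(r:ℝ) + 1 - (nf T i:ℝ)))/(2000*(T:ℝ)^2) := by
    rw [← Finset.sum_div]
  have h3 : ∑ r ∈ Finset.range (nf T i), (2*(r:ℝ) + 1 - (nf T i:ℝ)) = 0 := by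
    have : ∀ r ∈ Finset.range (nf T i), (2*(r:ℝ) + 1 - (nf T i:ℝ))
        = 2*(r:ℝ) + (1 - (nf T i:ℝ)) := by intro r _; ring
    rw [Finset.sum_congr rfl this, Finset.sum_add_distrib, Finset.sum_const,
      Finset.card_range, nsmul_eq_mul, ← Finset.mul_sum, sum_range_cast]
    ring
  rw [h2, h3, h1]
  simp


lemma sum_gapBlock {T i : ℕ} (hT : 48 ≤ T) (hi : i + 1 < T) :
    (gapBlock T i).sum = 30*(T:ℝ) := by
  have ht := tpos hT
  unfold gapBlock
  rw [if_pos hi, List.sum_append, sum_arcs hT, sum_pieces hT (by omega)]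
  unfold Wr
  ring

lemma gapBlock_length {T i : ℕ} :
    (gapBlock T i).length = (4*T-1) + (if i + 1 < T then nf T i else 0) := by
  unfold gapBlock
  by_cases h : i + 1 < T <;> simp [h]

lemma chain'_gapBlock {T i : ℕ} (hT : 48 ≤ T) (hi : i < T) :
    List.Chain' (· < ·) (gapBlock T i) := by
  have harcs : List.Chain' (· < ·) ((List.range (4*T-1)).map (arc T i)) :=
    chain'_map_range _ _ (fun j _ => arc_mono hT)
  unfold gapBlock
  by_cases h : i + 1 < T
  · rw [if_pos h, List.Chain', List.isChain_append]
    refine ⟨harcs, chain'_map_range _ _ (fun r _ => piece_mono hT), ?_⟩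
    intro x hx y hy
    rw [getLast?_map_range (4*T-1) _ (by omega)] at hx
    rw [head?_map_range (nf T i) _ (nf_pos hT (by omega))] at hy
    simp only [Option.mem_def, Option.some.injEq] at hx hy
    subst hx; subst hy
    have : (4*T-1) - 1 = 4*T-2 := by omega
    rw [this]
    exact arc_lt_piece0 hT h
  · rw [if_neg h, List.append_nil]
    exact harcs

/-- the global gap list -/
noncomputable def Gl (T : ℕ) : List ℝ := (List.range T).flatMap (gapBlock T)

lemma chain'_Gl {T : ℕ} (hT : 48 ≤ T) : List.Chain' (· < ·) (Gl T) := by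
  apply chain'_blocks
  · exact fun i _ => gapBlock_ne_nil hT
  · exact fun i hi => chain'_gapBlock hT hi
  · intro i hi x hx y hy
    have hgB : (gapBlock T i).getLast? = some (piece T i (nf T i - 1)) := by
      unfold gapBlock
      rw [if_pos hi, List.getLast?_append,
        getLast?_map_range (nf T i) _ (nf_pos hT (by omega))]
      simp
    have hgH : (gapBlock T (i+1)).head? = some (arc T (i+1) 0) := by
      unfold gapBlock
      rw [List.head?_append, head?_map_range (4*T-1) _ (by omega)]
      simp
    rw [hgB] at hx
    rw [hgH] at hy
    simp only [Option.mem_def, Option.some.injEq] at hx hy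
    subst hx; subst hy
    exact piece_lt_arc hT hi

lemma Gl_pos {T : ℕ} (hT : 48 ≤ T) : ∀ g ∈ Gl T, (1/2:ℝ) ≤ g := by
  intro g hg
  rw [Gl, List.mem_flatMap] at hg
  obtain ⟨i, hi, hgi⟩ := hg
  rw [List.mem_range] at hi
  unfold gapBlock at hgi
  rcases List.mem_append.mp hgi with h | h
  · obtain ⟨j, -, rfl⟩ := List.mem_map.mp h
    linarith [arc_ge_one (i := i) (j := j) hT]
  · by_cases hcase : i + 1 < T
    · rw [if_pos hcase] at h
      obtain ⟨r, hr, rfl⟩ := List.mem_map.mp h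
      rw [List.mem_range] at hr
      exact piece_pos hT hcase hr
    · rw [if_neg hcase] at h
      simp at h

lemma prefix_sum {T i : ℕ} (hT : 48 ≤ T) (hi : i < T) :
    ((List.range i).flatMap (gapBlock T)).sum = 30*(T:ℝ)*(i:ℝ) := by
  rw [sum_blocks]
  have : ∀ i' ∈ Finset.range i, (gapBlock T i').sum = 30*(T:ℝ) := by
    intro i' hi'
    rw [Finset.mem_range] at hi'
    exact sum_gapBlock hT (by omega)
  rw [Finset.sum_congr rfl this, Finset.sum_const, Finset.card_range, nsmul_eq_mul]
  ring

lemma take_gapBlock_sum {T i j : ℕ} (hT : 48 ≤ T) (hj : j ≤ 4*T-1) :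
    ((gapBlock T i).take j).sum = cseq T j + (i:ℝ)*(j:ℝ)/(T:ℝ) := by
  have ht := tpos hT
  unfold gapBlock
  rw [List.take_append_of_le_length (by simpa using hj)]
  rw [← List.map_take, List.take_range, Nat.min_eq_left hj, sum_map_range]
  unfold arc cseq
  rw [Finset.sum_add_distrib, Finset.sum_add_distrib, Finset.sum_const,
    Finset.card_range, nsmul_eq_mul, mul_one]
  have h2 : ∑ x ∈ Finset.range j, (x:ℝ)/(32*(T:ℝ)^2)
      = ((j:ℝ)*((j:ℝ)-1)/2)/(32*(T:ℝ)^2) := by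
    rw [← Finset.sum_div, sum_range_cast]
  have h3 : ∑ _x ∈ Finset.range j, (i:ℝ)/(T:ℝ) = (j:ℝ)*((i:ℝ)/(T:ℝ)) := by
    rw [Finset.sum_const, Finset.card_range, nsmul_eq_mul]
  rw [h2, h3]
  have hT0 : (T:ℝ) ≠ 0 := ne_of_gt ht
  field_simp
  ring

/-- the point list -/
noncomputable def Ll (T : ℕ) : List ℝ := List.scanl (· + ·) 0 (Gl T)

lemma xpt_mem {T i j : ℕ} (hT : 48 ≤ T) (hi : i < T) (hj : j < 4*T) :
    xpt T i j ∈ Ll T := by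
  have ht := tpos hT
  set P := (List.range i).flatMap (gapBlock T) with hP
  have hjlen : j ≤ (gapBlock T i).length := by
    rw [gapBlock_length]; omega
  have htake : (Gl T).take (P.length + j) = P ++ (gapBlock T i).take j :=
    take_blocks (gapBlock T) T i j hi hjlen
  have hlen : P.length + j ≤ (Gl T).length := by
    have := congrArg List.length htake
    rw [List.length_take, List.length_append, List.length_take] at this
    omega
  have hmem := mem_scanl_take (Gl T) 0 (P.length + j) hlen
  rw [htake, List.sum_append, prefix_sum hT hi, take_gapBlock_sum hT (by omega)] at hmem
  have : xpt T i j = 0 + (30*(T:ℝ)*(i:ℝ) + (cseq T j + (i:ℝ)*(j:ℝ)/(T:ℝ))) := by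
    unfold xpt; ring
  rw [this]
  exact hmem

lemma length_blocks (bs : ℕ → List ℝ) (m : ℕ) :
    ((List.range m).flatMap bs).length = ∑ i ∈ Finset.range m, (bs i).length := by
  induction m with
  | zero => simp
  | succ p ih =>
    rw [List.range_succ, List.flatMap_append, List.length_append, Finset.sum_range_succ, ih]
    simp

lemma Ll_chain {T : ℕ} (hT : 48 ≤ T) : List.Chain' (· < ·) (Ll T) :=
  scanl_chain'_lt _ _ (fun g hg => by linarith [Gl_pos hT g hg])

lemma Ll_nodup {T : ℕ} (hT : 48 ≤ T) : (Ll T).Nodup := by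
  have h := List.isChain_iff_pairwise.mp (Ll_chain hT)
  exact h.imp ne_of_lt

lemma Ll_sorted_le {T : ℕ} (hT : 48 ≤ T) : (Ll T).Pairwise (· ≤ ·) := by
  have h := List.isChain_iff_pairwise.mp (Ll_chain hT)
  exact h.imp le_of_lt

/-- the convex set -/
noncomputable def Af (T : ℕ) : Finset ℝ := (Ll T).toFinset

lemma sort_Af {T : ℕ} (hT : 48 ≤ T) : (Af T).sort (· ≤ ·) = Ll T := by
  apply List.Perm.eq_of_pairwise' (Finset.pairwise_sort _ _) (Ll_sorted_le hT) ?_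
  exact (Finset.sort_perm_toList _ _).trans (List.toFinset_toList (Ll_nodup hT))

lemma card_Af {T : ℕ} (hT : 48 ≤ T) : (Af T).card = (Gl T).length + 1 := by
  rw [Af, List.toFinset_card_of_nodup (Ll_nodup hT), Ll, List.length_scanl]

lemma Gl_length_lb {T : ℕ} (hT : 48 ≤ T) : T*(4*T-1) ≤ (Gl T).length := by
  rw [Gl, length_blocks]
  calc T*(4*T-1) = ∑ _i ∈ Finset.range T, (4*T-1) := by
        rw [Finset.sum_const, Finset.card_range, smul_eq_mul]
      _ ≤ _ := by
        apply Finset.sum_le_sum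
        intro i _
        rw [gapBlock_length]
        omega

lemma nf_le_nat {T i : ℕ} (hT : 48 ≤ T) (hi : i < T) : nf T i ≤ 27*T := by
  have := (nf_bounds hT hi).2
  exact_mod_cast (by push_cast; linarith : ((nf T i : ℕ):ℝ) ≤ ((27*T : ℕ):ℝ))

lemma Gl_length_ub {T : ℕ} (hT : 48 ≤ T) : (Gl T).length ≤ T*(31*T) := by
  rw [Gl, length_blocks]
  calc (∑ i ∈ Finset.range T, (gapBlock T i).length)
      ≤ ∑ _i ∈ Finset.range T, (31*T) := by
        apply Finset.sum_le_sum
        intro i hi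
        rw [Finset.mem_range] at hi
        rw [gapBlock_length]
        have := nf_le_nat hT hi
        by_cases h : i + 1 < T <;> simp [h] <;> omega
      _ = T*(31*T) := by rw [Finset.sum_const, Finset.card_range, smul_eq_mul]

lemma isConvex_Af {T : ℕ} (hT : 48 ≤ T) : IsConvexSet (Af T) := by
  intro t ht
  rw [card_Af hT] at ht
  rw [sort_Af hT]
  have h1 : t < (Gl T).length := by omega
  have h2 : t + 1 < (Gl T).length := by omega
  rw [Ll, scanl_getD_sub _ _ _ h1, scanl_getD_sub _ _ _ h2]
  have hchain := List.isChain_iff_getElem.mp (chain'_Gl hT)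
  have := hchain t (by omega)
  rw [List.getD_eq_getElem _ _ h1, List.getD_eq_getElem _ _ h2]
  exact this

lemma cseq_bounds {T j : ℕ} (hT : 48 ≤ T) (hj : j < 4*T) :
    0 ≤ cseq T j ∧ cseq T j ≤ 4*(T:ℝ) := by
  have ht := tpos hT
  have hjR : (j:ℝ) ≤ 4*(T:ℝ) - 1 := by
    have : (j:ℝ) + 1 ≤ 4*(T:ℝ) := by exact_mod_cast hj
    linarith
  have hj0 : (0:ℝ) ≤ (j:ℝ) := Nat.cast_nonneg j
  have hq : (0:ℝ) ≤ (j:ℝ)*((j:ℝ)-1) := by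
    rcases Nat.eq_zero_or_pos j with rfl | hj1
    · simp
    · have : (1:ℝ) ≤ (j:ℝ) := by exact_mod_cast hj1
      nlinarith
  have hq2 : (j:ℝ)*((j:ℝ)-1)/(64*(T:ℝ)^2) ≤ 1/4 := by
    rw [div_le_div_iff₀ (by positivity) (by norm_num)]
    nlinarith
  have hq3 : (0:ℝ) ≤ (j:ℝ)*((j:ℝ)-1)/(64*(T:ℝ)^2) := by positivity
  unfold cseq
  constructor <;> nlinarith

lemma phase_bounds {T i j : ℕ} (hT : 48 ≤ T) (hi : i < T) (hj : j < 4*T) :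
    0 ≤ cseq T j + (i:ℝ)*(j:ℝ)/(T:ℝ) ∧ cseq T j + (i:ℝ)*(j:ℝ)/(T:ℝ) ≤ 8*(T:ℝ) := by
  have ht := tpos hT
  obtain ⟨hc0, hc1⟩ := cseq_bounds hT hj
  have hiR := iR_le hi
  have hjR : (j:ℝ) ≤ 4*(T:ℝ) := by
    have : (j:ℝ) + 1 ≤ 4*(T:ℝ) := by exact_mod_cast hj
    linarith
  have h0 : (0:ℝ) ≤ (i:ℝ)*(j:ℝ)/(T:ℝ) := by positivity
  have h1 : (i:ℝ)*(j:ℝ)/(T:ℝ) ≤ 4*(T:ℝ) := by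
    rw [div_le_iff₀ ht]
    nlinarith [Nat.cast_nonneg (α := ℝ) i, Nat.cast_nonneg (α := ℝ) j]
  constructor <;> linarith

lemma xpt_strictMono_j {T i : ℕ} (hT : 48 ≤ T) : StrictMono (fun j => xpt T i j) := by
  apply strictMono_nat_of_lt_succ
  intro j
  rw [xpt_step hT]
  have := arc_ge_one (i := i) (j := j) hT
  linarith

lemma xpt_strictMono_i {T j : ℕ} (hT : 48 ≤ T) : StrictMono (fun i => xpt T i j) := by
  apply strictMono_nat_of_lt_succ
  intro i
  rw [xpt_col_step hT]
  have ht := tpos hT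
  have : (0:ℝ) ≤ (j:ℝ)/(T:ℝ) := by positivity
  linarith

lemma xpt_inj {T i i' j j' : ℕ} (hT : 48 ≤ T) (hi : i < T) (hi' : i' < T)
    (hj : j < 4*T) (hj' : j' < 4*T) (heq : xpt T i j = xpt T i' j') :
    i = i' ∧ j = j' := by
  have ht := tpos hT
  obtain ⟨hp0, hp1⟩ := phase_bounds hT hi hj
  obtain ⟨hq0, hq1⟩ := phase_bounds hT hi' hj'
  have hii : i = i' := by
    rcases lt_trichotomy i i' with h | h | h
    · exfalso
      have hstep : (i:ℝ) + 1 ≤ (i':ℝ) := by exact_mod_cast h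
      have : xpt T i j - xpt T i' j'
          = 30*(T:ℝ)*((i:ℝ) - (i':ℝ)) + (cseq T j + (i:ℝ)*(j:ℝ)/(T:ℝ))
            - (cseq T j' + (i':ℝ)*(j':ℝ)/(T:ℝ)) := by unfold xpt; ring
      rw [heq] at this
      nlinarith
    · exact h
    · exfalso
      have hstep : (i':ℝ) + 1 ≤ (i:ℝ) := by exact_mod_cast h
      have : xpt T i j - xpt T i' j'
          = 30*(T:ℝ)*((i:ℝ) - (i':ℝ)) + (cseq T j + (i:ℝ)*(j:ℝ)/(T:ℝ))
            - (cseq T j' + (i':ℝ)*(j':ℝ)/(T:ℝ)) := by unfold xpt; ring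
      rw [heq] at this
      nlinarith
  subst hii
  exact ⟨rfl, (xpt_strictMono_j (i := i) hT).injective heq⟩

/-- shifting along a column: exact arithmetic progression -/
lemma xpt_add {T i j : ℕ} (hT : 48 ≤ T) (s : ℕ) :
    xpt T (i + s) j = xpt T i j + (s:ℝ)*(30*(T:ℝ) + (j:ℝ)/(T:ℝ)) := by
  induction s with
  | zero => simp
  | succ m ih =>
    have : i + (m+1) = (i + m) + 1 := by omega
    rw [this, xpt_col_step hT, ih]
    push_cast
    ring

lemma idx_lt {T k t s r : ℕ} (hT : 48 ≤ T) (hk : 3 ≤ k) (hTk : 16*k ≤ T)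
    (ht : t < T/2) (hs : s < T/(2*k)) (hr : r < k) :
    t + r*(s+1) < T := by
  have hs1 : s + 1 ≤ T/(2*k) := hs
  have hrk : r ≤ k - 1 := by omega
  have hA : r*(s+1) ≤ (k-1)*(T/(2*k)) := Nat.mul_le_mul hrk hs1
  have heq : (k-1)*(T/(2*k)) + (T/(2*k)) = k*(T/(2*k)) := by
    have hk1 : k - 1 + 1 = k := by omega
    calc (k-1)*(T/(2*k)) + (T/(2*k)) = ((k-1)+1)*(T/(2*k)) := by ring
      _ = k*(T/(2*k)) := by rw [hk1]
  have hdd : T/(2*k) = (T/2)/k := (Nat.div_div_eq_div_mul T 2 k).symm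
  have hmd : k*(T/(2*k)) ≤ T/2 := by rw [hdd]; exact Nat.mul_div_le (T/2) k
  have hB : 1 ≤ T/(2*k) := (Nat.one_le_div_iff (by omega)).mpr (by omega)
  omega

open Classical in
lemma count_lb {T k : ℕ} (hT : 48 ≤ T) (hk : 3 ≤ k) (hTk : 16*k ≤ T) :
    4*T*(T/2)*(T/(2*k)) ≤ (((Fintype.piFinset fun _ : Fin k => Af T).filter
      fun f : Fin k → ℝ =>
        ∃ d : ℝ, d ≠ 0 ∧ ∀ i j : Fin k, (j : ℕ) = (i : ℕ) + 1 → f j = f i + d).card) := by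
  have ht := tpos hT
  classical
  set src : Finset ((ℕ × ℕ) × ℕ) :=
    (Finset.range (4*T) ×ˢ Finset.range (T/2)) ×ˢ Finset.range (T/(2*k)) with hsrc
  have hcard : src.card = 4*T*(T/2)*(T/(2*k)) := by
    rw [hsrc, Finset.card_product, Finset.card_product]
    simp [Finset.card_range, mul_assoc]
  rw [← hcard]
  apply Finset.card_le_card_of_injOn
    (fun p => (fun r : Fin k => xpt T (p.1.2 + (r:ℕ)*(p.2+1)) p.1.1))
  · rintro ⟨⟨j, t⟩, s⟩ hp
    change ((j, t), s) ∈ src at hp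
    simp only [hsrc, Finset.mem_product, Finset.mem_range] at hp
    obtain ⟨⟨hj, htt⟩, hss⟩ := hp
    rw [Finset.mem_coe, Finset.mem_filter]
    constructor
    · rw [Fintype.mem_piFinset]
      intro r
      have hridx : t + (r:ℕ)*(s+1) < T := idx_lt hT hk hTk htt hss r.isLt
      exact List.mem_toFinset.mpr (xpt_mem hT hridx hj)
    · refine ⟨((s:ℝ)+1)*(30*(T:ℝ) + (j:ℝ)/(T:ℝ)), ?_, ?_⟩
      · have h1 : (0:ℝ) < 30*(T:ℝ) + (j:ℝ)/(T:ℝ) := by positivity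
        have h2 : (0:ℝ) < (s:ℝ)+1 := by positivity
        positivity
      · intro ii jj hij
        simp only
        rw [hij]
        have harith : t + ((ii:ℕ)+1)*(s+1) = (t + (ii:ℕ)*(s+1)) + (s+1) := by ring
        rw [harith, xpt_add hT]
        push_cast
        ring
  · rintro ⟨⟨j, t⟩, s⟩ hp ⟨⟨j', t'⟩, s'⟩ hq hfeq
    simp only [hsrc, Finset.coe_product, Set.mem_prod, Finset.mem_coe,
      Finset.mem_range] at hp hq
    obtain ⟨⟨hj, htt⟩, hss⟩ := hp
    obtain ⟨⟨hj', htt'⟩, hss'⟩ := hq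
    have h0 := congrFun hfeq (⟨0, by omega⟩ : Fin k)
    have h1 := congrFun hfeq (⟨1, by omega⟩ : Fin k)
    simp only at h0 h1
    norm_num at h0 h1
    have htT : t < T := by omega
    have htT' : t' < T := by omega
    obtain ⟨het, hej⟩ := xpt_inj hT htT htT' hj hj' h0
    subst het; subst hej
    have hidx1 : t + (s+1) = t + (s'+1) :=
      (xpt_strictMono_i (j := j) hT).injective h1
    have : s = s' := by omega
    subst this
    rfl

lemma rpow_32 : (32:ℝ)^(3/2:ℝ) ≤ 182 := by
  have h0 : (0:ℝ) ≤ (32:ℝ)^(3/2:ℝ) := Real.rpow_nonneg (by norm_num) _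
  have hsq : ((32:ℝ)^(3/2:ℝ))^(2:ℕ) = 32^(3:ℕ) := by
    rw [← Real.rpow_natCast ((32:ℝ)^(3/2:ℝ)) 2, ← Real.rpow_mul (by norm_num)]
    norm_num
  have h1 : ((32:ℝ)^(3/2:ℝ))^(2:ℕ) = ((32:ℝ)^(3/2:ℝ))*((32:ℝ)^(3/2:ℝ)) := by ring
  nlinarith [hsq, h1]

lemma rpow_split {T : ℕ} (hT : 48 ≤ T) :
    ((32*(T:ℝ)^2)) ^ (3/2 : ℝ) = (32:ℝ)^(3/2:ℝ) * (T:ℝ)^(3:ℕ) := by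
  have ht := tpos hT
  rw [Real.mul_rpow (by norm_num) (by positivity)]
  congr 1
  rw [← Real.rpow_natCast (T:ℝ) 2, ← Real.rpow_mul (le_of_lt ht)]
  norm_num

end ConvexAPs

set_option maxHeartbeats 1000000 in
open Classical in
/-- For every fixed `k ≥ 3` there are arbitrarily large convex sets `A` containing at least
`c_k·|A|^{3/2}` non-trivial `k`-term arithmetic progressions, counted as tuples
`(a₁, …, a_k) ∈ A^k` with nonzero common difference `d`. -/
theorem convex_set_with_many_kAPs (k : ℕ) (hk : 3 ≤ k) :
    ∃ c : ℝ, 0 < c ∧ ∀ N : ℕ, ∃ A : Finset ℝ,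
      IsConvexSet A ∧ N ≤ A.card ∧
      c * (A.card : ℝ) ^ (3 / 2 : ℝ) ≤
        (((Fintype.piFinset fun _ : Fin k => A).filter fun f : Fin k → ℝ =>
          ∃ d : ℝ, d ≠ 0 ∧ ∀ i j : Fin k, (j : ℕ) = (i : ℕ) + 1 → f j = f i + d).card : ℝ) := by
  have hkR : (3:ℝ) ≤ (k:ℝ) := by exact_mod_cast hk
  refine ⟨1/(1000*(k:ℝ)), by positivity, ?_⟩
  intro N
  set T := max N (16*k) with hTdef
  have hT : 48 ≤ T := le_trans (by omega) (le_max_right N (16*k))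
  have hTk : 16*k ≤ T := le_max_right _ _
  have hTN : N ≤ T := le_max_left _ _
  clear_value T
  clear hTdef
  have ht := ConvexAPs.tpos hT
  have htR : (48:ℝ) ≤ (T:ℝ) := ConvexAPs.t48 hT
  have hTkR : 16*(k:ℝ) ≤ (T:ℝ) := by exact_mod_cast hTk
  refine ⟨ConvexAPs.Af T, ConvexAPs.isConvex_Af hT, ?_, ?_⟩
  · have h1 := ConvexAPs.Gl_length_lb hT
    have h2 := ConvexAPs.card_Af hT
    have h3 : T ≤ T*(4*T-1) := Nat.le_mul_of_pos_right T (by omega)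
    omega
  · have hcount := ConvexAPs.count_lb hT hk hTk
    have hcountR : 4*(T:ℝ)*((T/2:ℕ):ℝ)*((T/(2*k):ℕ):ℝ) ≤
        (((Fintype.piFinset fun _ : Fin k => ConvexAPs.Af T).filter fun f : Fin k → ℝ =>
          ∃ d : ℝ, d ≠ 0 ∧ ∀ i j : Fin k, (j : ℕ) = (i : ℕ) + 1 → f j = f i + d).card : ℝ) := by
      calc 4*(T:ℝ)*((T/2:ℕ):ℝ)*((T/(2*k):ℕ):ℝ)
          = ((4*T*(T/2)*(T/(2*k)) : ℕ) : ℝ) := by push_cast; ring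
        _ ≤ _ := Nat.cast_le.mpr hcount
    clear hcount
    -- real bounds on the ℕ quantities
    have hcard_ub : ((ConvexAPs.Af T).card : ℝ) ≤ 32*(T:ℝ)^2 := by
      have h1 := ConvexAPs.Gl_length_ub hT
      have h2 := ConvexAPs.card_Af hT
      have h3 : (ConvexAPs.Af T).card ≤ 32*T^2 := by
        have : 1 ≤ T*T := Nat.one_le_iff_ne_zero.mpr (by positivity)
        calc (ConvexAPs.Af T).card = (ConvexAPs.Gl T).length + 1 := h2
          _ ≤ T*(31*T) + 1 := Nat.add_le_add_right h1 1
          _ ≤ 32*T^2 := by nlinarith [this]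
      calc ((ConvexAPs.Af T).card : ℝ) ≤ ((32*T^2 : ℕ) : ℝ) := by exact_mod_cast h3
        _ = 32*(T:ℝ)^2 := by push_cast; ring
    have hhalf : ((T:ℝ) - 1)/2 ≤ ((T/2 : ℕ):ℝ) := by
      have h1 : T ≤ 2*(T/2)+1 := by omega
      have h2 : (T:ℝ) ≤ 2*((T/2:ℕ):ℝ)+1 := by exact_mod_cast h1
      linarith
    have hS : ((T:ℝ) - 2*(k:ℝ))/(2*(k:ℝ)) ≤ ((T/(2*k) : ℕ):ℝ) := by
      have hdm := Nat.div_add_mod T (2*k)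
      have hmod : T % (2*k) < 2*k := Nat.mod_lt T (by omega)
      have h1 : T ≤ 2*k*(T/(2*k)) + 2*k := by omega
      have h2 : (T:ℝ) ≤ 2*(k:ℝ)*((T/(2*k):ℕ):ℝ) + 2*(k:ℝ) := by exact_mod_cast h1
      rw [div_le_iff₀ (by positivity)]
      linarith
    have hScast : (0:ℝ) ≤ ((T/(2*k) : ℕ):ℝ) := Nat.cast_nonneg _
    have hHcast : (0:ℝ) ≤ ((T/2 : ℕ):ℝ) := Nat.cast_nonneg _
    -- main chain
    have hkey : (1/(1000*(k:ℝ))) * (32*(T:ℝ)^2) ^ (3/2 : ℝ)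
        ≤ 4*(T:ℝ)*(((T:ℝ) - 1)/2)*(((T:ℝ) - 2*(k:ℝ))/(2*(k:ℝ))) := by
      rw [ConvexAPs.rpow_split hT, ← sub_nonneg]
      have h32 := ConvexAPs.rpow_32
      have h32' : (0:ℝ) ≤ (32:ℝ)^(3/2:ℝ) := Real.rpow_nonneg (by norm_num) _
      have hexp : 4*(T:ℝ)*(((T:ℝ) - 1)/2)*(((T:ℝ) - 2*(k:ℝ))/(2*(k:ℝ)))
          - (1/(1000*(k:ℝ))) * ((32:ℝ)^(3/2:ℝ) * (T:ℝ)^(3:ℕ))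
          = ((T:ℝ)*((T:ℝ)-1)*((T:ℝ)-2*(k:ℝ))*1000 - (32:ℝ)^(3/2:ℝ)*(T:ℝ)^3)/(1000*(k:ℝ)) := by
        field_simp
        ring
      rw [hexp]
      apply div_nonneg ?_ (by positivity)
      have e1 : (47/48:ℝ)*(T:ℝ) ≤ (T:ℝ) - 1 := by linarith
      have e2 : (7/8:ℝ)*(T:ℝ) ≤ (T:ℝ) - 2*(k:ℝ) := by linarith
      have e0 : (0:ℝ) ≤ (T:ℝ) := le_of_lt ht
      have p1 : (47/48:ℝ)*(T:ℝ)^2 ≤ (T:ℝ)*((T:ℝ)-1) := by nlinarith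
      have p2 : (47/48:ℝ)*(T:ℝ)^2*((7/8:ℝ)*(T:ℝ)) ≤ ((T:ℝ)*((T:ℝ)-1))*((T:ℝ)-2*(k:ℝ)) := by
        apply mul_le_mul p1 e2 (by positivity) (by nlinarith)
      have p3 : (32:ℝ)^(3/2:ℝ)*(T:ℝ)^3 ≤ 182*(T:ℝ)^3 := by
        apply mul_le_mul_of_nonneg_right h32 (by positivity)
      nlinarith [p2, p3]
    have hmono : 4*(T:ℝ)*(((T:ℝ) - 1)/2)*(((T:ℝ) - 2*(k:ℝ))/(2*(k:ℝ)))
        ≤ 4*(T:ℝ)*((T/2:ℕ):ℝ)*((T/(2*k):ℕ):ℝ) := by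
      have h1 : ((T:ℝ) - 1)/2 ≥ 0 := by linarith [htR]
      have h2 : ((T:ℝ) - 2*(k:ℝ))/(2*(k:ℝ)) ≥ 0 := by
        apply div_nonneg ?_ (by positivity)
        linarith
      have h3 : (0:ℝ) ≤ 4*(T:ℝ) := by positivity
      have hmm : (((T:ℝ) - 1)/2)*(((T:ℝ) - 2*(k:ℝ))/(2*(k:ℝ)))
          ≤ ((T/2:ℕ):ℝ)*((T/(2*k):ℕ):ℝ) := mul_le_mul hhalf hS h2 hHcast
      calc 4*(T:ℝ)*(((T:ℝ) - 1)/2)*(((T:ℝ) - 2*(k:ℝ))/(2*(k:ℝ)))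
          = 4*(T:ℝ)*((((T:ℝ) - 1)/2)*(((T:ℝ) - 2*(k:ℝ))/(2*(k:ℝ)))) := by ring
        _ ≤ 4*(T:ℝ)*(((T/2:ℕ):ℝ)*((T/(2*k):ℕ):ℝ)) := by
            exact mul_le_mul_of_nonneg_left hmm h3
        _ = 4*(T:ℝ)*((T/2:ℕ):ℝ)*((T/(2*k):ℕ):ℝ) := by ring
    have hmonotone : (1/(1000*(k:ℝ))) * ((ConvexAPs.Af T).card : ℝ) ^ (3/2 : ℝ)
        ≤ (1/(1000*(k:ℝ))) * (32*(T:ℝ)^2) ^ (3/2 : ℝ) := by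
      apply mul_le_mul_of_nonneg_left ?_ (by positivity)
      exact Real.rpow_le_rpow (Nat.cast_nonneg _) hcard_ub (by norm_num)
    calc (1/(1000*(k:ℝ))) * ((ConvexAPs.Af T).card : ℝ) ^ (3/2 : ℝ)
        ≤ (1/(1000*(k:ℝ))) * (32*(T:ℝ)^2) ^ (3/2 : ℝ) := hmonotone
      _ ≤ 4*(T:ℝ)*(((T:ℝ) - 1)/2)*(((T:ℝ) - 2*(k:ℝ))/(2*(k:ℝ))) := hkey
      _ ≤ 4*(T:ℝ)*((T/2:ℕ):ℝ)*((T/(2*k):ℕ):ℝ) := hmono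
      _ ≤ _ := hcountR
end

section
/- There exists an absolute constant C > 0 such that every finite convex set A ⊂ ℝ satisfies T₃(A) ≤ C·|A|^{5/3}, where T₃(A) := #{(a,b,c) ∈ A³ : 2a = b + c}. -/
open Finset

/-- Counting lemma: a finite set of pairs of positive integers whose coordinate
sums total at most `N` has at most `max 1 ((27 N²)^{1/3})`-many elements. -/
lemma count_pairs (P : Finset (ℕ × ℕ)) (N : ℕ)
    (hpos : ∀ p ∈ P, 1 ≤ p.1 ∧ 1 ≤ p.2)
    (hsum : ∑ p ∈ P, (p.1 + p.2) ≤ N) :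
    P.card ≤ 1 ∨ P.card ^ 3 ≤ 27 * N ^ 2 := by
  set m := P.card with hm
  by_cases hm1 : m ≤ 1
  · exact Or.inl hm1
  right
  push_neg at hm1
  set K := Nat.sqrt (m / 2) with hK
  have hK2 : K ^ 2 ≤ m / 2 := by
    have := Nat.sqrt_le' (m / 2)
    simpa [pow_two] using this
  have hKsucc : m / 2 < (K + 1) ^ 2 := by
    have := Nat.lt_succ_sqrt' (m / 2)
    simpa [pow_two] using this
  -- split P
  set Q := P.filter (fun p => p.1 + p.2 ≤ K) with hQ
  have hQcard : Q.card ≤ K ^ 2 := by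
    have hsub : Q ⊆ Finset.Icc 1 K ×ˢ Finset.Icc 1 K := by
      intro p hp
      simp only [hQ, mem_filter] at hp
      obtain ⟨hpP, hple⟩ := hp
      obtain ⟨h1, h2⟩ := hpos p hpP
      simp only [mem_product, mem_Icc]
      omega
    calc Q.card ≤ _ := card_le_card hsub
      _ = K * K := by simp [Nat.card_Icc]
      _ = K ^ 2 := (sq K).symm
  have hrest : (m - m / 2) * (K + 1) ≤ N := by
    have hsplit : (P \ Q).card = m - Q.card := card_sdiff_of_subset (filter_subset _ _)
    have hcard_rest : m - m / 2 ≤ (P \ Q).card := by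
      have : Q.card ≤ m / 2 := le_trans hQcard hK2
      omega
    have hbig : ∀ p ∈ P \ Q, K + 1 ≤ p.1 + p.2 := by
      intro p hp
      rw [mem_sdiff] at hp
      obtain ⟨hpP, hnQ⟩ := hp
      have : ¬ (p.1 + p.2 ≤ K) := fun h => hnQ (mem_filter.mpr ⟨hpP, h⟩)
      omega
    calc (m - m / 2) * (K + 1) ≤ (P \ Q).card * (K + 1) := by
          exact Nat.mul_le_mul_right _ hcard_rest
      _ ≤ ∑ p ∈ P \ Q, (p.1 + p.2) := by
          rw [← Finset.sum_const_nat (m := K + 1) (fun x hx => rfl)]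
          exact Finset.sum_le_sum hbig
      _ ≤ ∑ p ∈ P, (p.1 + p.2) := Finset.sum_le_sum_of_subset (sdiff_subset)
      _ ≤ N := hsum
  have h2 : m / 2 ≤ m - m / 2 := by omega
  have hcube : (m / 2) ^ 3 ≤ N ^ 2 := by
    have h1 : (m / 2) * (K + 1) ≤ N := le_trans (Nat.mul_le_mul_right _ h2) hrest
    calc (m / 2) ^ 3 = (m / 2) ^ 2 * (m / 2) := by ring
      _ ≤ (m / 2) ^ 2 * (K + 1) ^ 2 := by
          exact Nat.mul_le_mul_left _ (le_of_lt hKsucc)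
      _ = ((m / 2) * (K + 1)) ^ 2 := by ring
      _ ≤ N ^ 2 := Nat.pow_le_pow_left h1 2
  have hm3 : m ≤ 3 * (m / 2) := by omega
  calc m ^ 3 ≤ (3 * (m / 2)) ^ 3 := Nat.pow_le_pow_left hm3 3
    _ = 27 * (m / 2) ^ 3 := by ring
    _ ≤ 27 * N ^ 2 := Nat.mul_le_mul_left _ hcube

section Blocks
variable (n : ℕ) (a : ℕ → ℝ)

/-- differences are strictly monotone -/
lemma dmono (hconv : ∀ i, i + 2 < n → a (i+1) - a i < a (i+2) - a (i+1))
    (p q : ℕ) (hpq : p < q) (hq : q + 1 < n) :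
    a (p+1) - a p < a (q+1) - a q := by
  induction q with
  | zero => omega
  | succ q ih =>
    have hstep : a (q+1) - a q < a (q+2) - a (q+1) := by
      have := hconv q (by omega)
      convert this using 3 <;> omega
    rcases Nat.lt_or_ge p q with h | h
    · exact lt_trans (ih h (by omega)) hstep
    · have : p = q := by omega
      subst this
      exact hstep

/-- Sums over length-`u` blocks of differences strictly increase when the block moves right. -/
lemma blockLt (hconv : ∀ i, i + 2 < n → a (i+1) - a i < a (i+2) - a (i+1))
    (u x y : ℕ) (hu : 1 ≤ u) (hxy : x + u ≤ y) (hyn : y + u < n) :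
    a (x + u) - a x < a (y + u) - a y := by
  have hx : ∀ m, a (x + m) - a x = ∑ i ∈ range m, (a (x + i + 1) - a (x + i)) := by
    intro m
    have := Finset.sum_range_sub (fun i => a (x + i)) m
    simp only [← Nat.add_assoc] at this
    rw [this]
    simp
  have hy : ∀ m, a (y + m) - a y = ∑ i ∈ range m, (a (y + i + 1) - a (y + i)) := by
    intro m
    have := Finset.sum_range_sub (fun i => a (y + i)) m
    simp only [← Nat.add_assoc] at this
    rw [this]
    simp
  rw [hx u, hy u]
  apply Finset.sum_lt_sum_of_nonempty (by simp; omega)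
  intro i hi
  simp only [mem_range] at hi
  have := dmono n a hconv (x + i) (y + i) (by omega) (by omega)
  convert this using 3 <;> omega


open scoped Classical in
/-- centered nontrivial solutions: triples (j, i, k) with i<j<k<n and a i + a k = 2 a j -/
noncomputable def solSet : Finset (ℕ × ℕ × ℕ) :=
  ((range n) ×ˢ (range n) ×ˢ (range n)).filter
    (fun t => t.2.1 < t.1 ∧ t.1 < t.2.2 ∧ 2 * a t.1 = a t.2.1 + a t.2.2)

open scoped Classical in
lemma mem_solSet (t : ℕ × ℕ × ℕ) :
    t ∈ solSet n a ↔ t.2.1 < t.1 ∧ t.1 < t.2.2 ∧ t.2.2 < n ∧ 2 * a t.1 = a t.2.1 + a t.2.2 := by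
  simp only [solSet, mem_filter, mem_product, mem_range]
  constructor
  · rintro ⟨⟨h1, h2, h3⟩, h4, h5, h6⟩
    exact ⟨h4, h5, h3, h6⟩
  · rintro ⟨h1, h2, h3, h4⟩
    exact ⟨⟨by omega, by omega, h3⟩, h1, h2, h4⟩

lemma tele_inc (f : ℕ → ℕ) (m : ℕ) (h : ∀ p, p < m → f p ≤ f (p + 1)) :
    (∑ p ∈ range m, (f (p + 1) - f p)) = f m - f 0 ∧ f 0 ≤ f m := by
  induction m with
  | zero => simp
  | succ m ih =>
    obtain ⟨h1, h2⟩ := ih (fun p hp => h p (by omega))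
    have h3 := h m (by omega)
    rw [Finset.sum_range_succ, h1]
    omega

lemma tele_dec (f : ℕ → ℕ) (m : ℕ) (h : ∀ p, p < m → f (p + 1) ≤ f p) :
    (∑ p ∈ range m, (f p - f (p + 1))) = f 0 - f m ∧ f m ≤ f 0 := by
  induction m with
  | zero => simp
  | succ m ih =>
    obtain ⟨h1, h2⟩ := ih (fun p hp => h p (by omega))
    have h3 := h m (by omega)
    rw [Finset.sum_range_succ, h1]
    omega

open scoped Classical in
lemma fiber_bound
    (hmono : ∀ i j, i < j → j < n → a i < a j)
    (hconv : ∀ i, i + 2 < n → a (i+1) - a i < a (i+2) - a (i+1))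
    (j : ℕ) :
    ((solSet n a).filter (fun t => t.1 = j)).card ≤ 2 ∨
      (((solSet n a).filter (fun t => t.1 = j)).card - 1) ^ 3 ≤ 108 * n ^ 2 := by
  have hainj : ∀ i i', i < n → i' < n → a i = a i' → i = i' := by
    intro i i' hi hi' he
    by_contra hne
    rcases Nat.lt_or_ge i i' with h | h
    · exact absurd he (ne_of_lt (hmono i i' h hi'))
    · have : i' < i := by omega
      exact absurd he.symm (ne_of_lt (hmono i' i this hi))
  set Fib := (solSet n a).filter (fun t => t.1 = j) with hFib
  have hFibSpec : ∀ t ∈ Fib, t.1 = j ∧ t.2.1 < j ∧ j < t.2.2 ∧ t.2.2 < n ∧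
      2 * a j = a t.2.1 + a t.2.2 := by
    intro t ht
    rw [hFib, mem_filter, mem_solSet] at ht
    obtain ⟨⟨h1, h2, h3, h4⟩, h5⟩ := ht
    subst h5
    exact ⟨rfl, h1, h2, h3, h4⟩
  -- the set of r values
  set Rj := Fib.image (fun t => t.2.2 - j) with hRj
  have hcardRj : Fib.card = Rj.card := by
    rw [hRj]
    refine (Finset.card_image_of_injOn ?_).symm
    intro t ht t' ht' he
    obtain ⟨h1, h2, h3, h4, h5⟩ := hFibSpec t ht
    obtain ⟨h1', h2', h3', h4', h5'⟩ := hFibSpec t' ht'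
    have he' : t.2.2 - j = t'.2.2 - j := he
    have hk : t.2.2 = t'.2.2 := by omega
    have hi : t.2.1 = t'.2.1 := by
      apply hainj _ _ (by omega) (by omega)
      rw [hk] at h5
      linarith [h5, h5']
    have e1 : t = (t.1, t.2.1, t.2.2) := rfl
    have e2 : t' = (t'.1, t'.2.1, t'.2.2) := rfl
    rw [e1, e2, h1, h1', hi, hk]
  -- the left-endpoint function
  set ι : ℕ → ℕ := fun r =>
    if h : ∃ i, i < j ∧ a j - a i = a (j + r) - a j then h.choose else 0 with hι
  have hιspec : ∀ r ∈ Rj, ι r < j ∧ j + r < n ∧ 1 ≤ r ∧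
      a j - a (ι r) = a (j + r) - a j := by
    intro r hr
    rw [hRj, mem_image] at hr
    obtain ⟨t, ht, hrt⟩ := hr
    obtain ⟨h1, h2, h3, h4, h5⟩ := hFibSpec t ht
    have hk : j + r = t.2.2 := by omega
    have hex : ∃ i, i < j ∧ a j - a i = a (j + r) - a j := by
      refine ⟨t.2.1, h2, ?_⟩
      rw [hk]; linarith
    have := hex.choose_spec
    rw [hι]
    simp only [dif_pos hex]
    exact ⟨this.1, by omega, by omega, this.2⟩
  have hιanti : ∀ r r', r ∈ Rj → r' ∈ Rj → r < r' → ι r' < ι r := by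
    intro r r' hr hr' hlt
    obtain ⟨h1, h2, h3, h4⟩ := hιspec r hr
    obtain ⟨h1', h2', h3', h4'⟩ := hιspec r' hr'
    have hav : a (j + r) < a (j + r') := hmono _ _ (by omega) h2'
    have : a (ι r') < a (ι r) := by linarith
    by_contra hcon
    push_neg at hcon
    rcases Nat.eq_or_lt_of_le hcon with h | h
    · rw [h] at this; linarith
    · have := hmono _ _ h (by omega)
      linarith
  have hιanti' : ∀ r r', r ∈ Rj → r' ∈ Rj → r ≤ r' → ι r' ≤ ι r := by
    intro r r' hr hr' hle
    rcases Nat.eq_or_lt_of_le hle with h | h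
    · rw [h]
    · exact le_of_lt (hιanti r r' hr hr' h)
  -- sorted list of r values
  set rs := Rj.sort (· ≤ ·) with hrs
  set t := Rj.card with ht
  have hlen : rs.length = t := Finset.length_sort _
  have hmem : ∀ p, p < t → rs.getD p 0 ∈ Rj := by
    intro p hp
    have hp' : p < rs.length := by omega
    rw [List.getD_eq_getElem rs 0 hp']
    exact (Finset.mem_sort _).mp (List.getElem_mem hp')
  have hsorted : ∀ p q, p < q → q < t → rs.getD p 0 < rs.getD q 0 := by
    intro p q hpq hq
    have hs : rs.Pairwise (· < ·) := Rj.sortedLT_sort.pairwise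
    have hp' : p < rs.length := by omega
    have hq' : q < rs.length := by omega
    rw [List.getD_eq_getElem rs 0 hp', List.getD_eq_getElem rs 0 hq']
    exact List.Pairwise.rel_get_of_lt hs (by exact hpq)
  -- the step function
  set F : ℕ → ℕ × ℕ :=
    fun p => (ι (rs.getD p 0) - ι (rs.getD (p+1) 0), rs.getD (p+1) 0 - rs.getD p 0) with hF
  -- injectivity of steps
  have hinj : ∀ p q, p < t - 1 → q < t - 1 → p < q → F p ≠ F q := by
    intro p q hp hq hpq heq
    set rp := rs.getD p 0
    set rp1 := rs.getD (p+1) 0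
    set rq := rs.getD q 0
    set rq1 := rs.getD (q+1) 0
    have hrp : rp ∈ Rj := hmem p (by omega)
    have hrp1 : rp1 ∈ Rj := hmem (p+1) (by omega)
    have hrq : rq ∈ Rj := hmem q (by omega)
    have hrq1 : rq1 ∈ Rj := hmem (q+1) (by omega)
    have h1 : rp < rp1 := hsorted p (p+1) (by omega) (by omega)
    have h2 : rp1 ≤ rq := by
      rcases Nat.eq_or_lt_of_le (by omega : p + 1 ≤ q) with h | h
      · exact le_of_eq (congrArg (fun x => rs.getD x 0) h)
      · exact le_of_lt (hsorted (p+1) q h (by omega))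
    have h3 : rq < rq1 := hsorted q (q+1) (by omega) (by omega)
    obtain ⟨sp1, sp2, sp3, sp4⟩ := hιspec rp hrp
    obtain ⟨sp1', sp2', sp3', sp4'⟩ := hιspec rp1 hrp1
    obtain ⟨sq1, sq2, sq3, sq4⟩ := hιspec rq hrq
    obtain ⟨sq1', sq2', sq3', sq4'⟩ := hιspec rq1 hrq1
    have hip : ι rp1 < ι rp := hιanti rp rp1 hrp hrp1 h1
    have hiq : ι rq1 < ι rq := hιanti rq rq1 hrq hrq1 h3
    have hipq : ι rq ≤ ι rp1 := hιanti' rp1 rq hrp1 hrq h2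
    have heq1 : ι rp - ι rp1 = ι rq - ι rq1 := congrArg Prod.fst heq
    have heq2 : rp1 - rp = rq1 - rq := congrArg Prod.snd heq
    set u := ι rp - ι rp1 with hu
    set w := rp1 - rp with hw
    -- right blocks comparison
    have hR : a (j + rp + w) - a (j + rp) < a (j + rq + w) - a (j + rq) :=
      blockLt n a hconv w (j + rp) (j + rq) (by omega) (by omega) (by omega)
    have hRp : j + rp + w = j + rp1 := by omega
    have hRq : j + rq + w = j + rq1 := by omega
    rw [hRp, hRq] at hR
    -- left blocks comparison
    have hL : a (ι rq1 + u) - a (ι rq1) < a (ι rp1 + u) - a (ι rp1) :=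
      blockLt n a hconv u (ι rq1) (ι rp1) (by omega) (by omega) (by omega)
    have hLq : ι rq1 + u = ι rq := by omega
    have hLp : ι rp1 + u = ι rp := by omega
    rw [hLq, hLp] at hL
    -- combine
    linarith
  have hinjOn : Set.InjOn F ↑(range (t - 1)) := by
    intro p hp q hq he
    simp only [coe_range, Set.mem_Iio] at hp hq
    by_contra hne
    rcases Nat.lt_or_ge p q with h | h
    · exact hinj p q hp hq h he
    · exact hinj q p hq hp (by omega) he.symm
  set StepSet := (range (t - 1)).image F with hSS
  have hcardSS : StepSet.card = t - 1 := by
    rw [hSS, Finset.card_image_of_injOn hinjOn, card_range]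
  -- positivity
  have hpos : ∀ pr ∈ StepSet, 1 ≤ pr.1 ∧ 1 ≤ pr.2 := by
    intro pr hpr
    rw [hSS, mem_image] at hpr
    obtain ⟨p, hp, hfp⟩ := hpr
    rw [mem_range] at hp
    have h1 : rs.getD p 0 < rs.getD (p+1) 0 := hsorted p (p+1) (by omega) (by omega)
    have h2 : ι (rs.getD (p+1) 0) < ι (rs.getD p 0) :=
      hιanti _ _ (hmem p (by omega)) (hmem (p+1) (by omega)) h1
    rw [← hfp]
    constructor <;> simp only [hF] <;> omega
  -- sum bound
  have hsum : ∑ pr ∈ StepSet, (pr.1 + pr.2) ≤ 2 * n := by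
    rw [hSS, Finset.sum_image (fun p hp q hq he => hinjOn hp hq he)]
    have hsplit : ∑ p ∈ range (t-1), ((F p).1 + (F p).2) =
        (∑ p ∈ range (t-1), (F p).1) + ∑ p ∈ range (t-1), (F p).2 :=
      Finset.sum_add_distrib
    rw [hsplit]
    have hd : ∀ p, p < t - 1 → ι (rs.getD (p+1) 0) ≤ ι (rs.getD p 0) := by
      intro p hp
      exact le_of_lt (hιanti _ _ (hmem p (by omega)) (hmem (p+1) (by omega))
        (hsorted p (p+1) (by omega) (by omega)))
    have hi : ∀ p, p < t - 1 → rs.getD p 0 ≤ rs.getD (p+1) 0 := by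
      intro p hp
      exact le_of_lt (hsorted p (p+1) (by omega) (by omega))
    obtain ⟨e1, e1'⟩ := tele_dec (fun p => ι (rs.getD p 0)) (t-1) hd
    obtain ⟨e2, e2'⟩ := tele_inc (fun p => rs.getD p 0) (t-1) hi
    have hf1 : (∑ p ∈ range (t-1), (F p).1) = ι (rs.getD 0 0) - ι (rs.getD (t-1) 0) := e1
    have hf2 : (∑ p ∈ range (t-1), (F p).2) = rs.getD (t-1) 0 - rs.getD 0 0 := e2
    rw [hf1, hf2]
    rcases Nat.eq_zero_or_pos t with h0 | h0
    · simp [h0]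
    · obtain ⟨c1, c2, c3, c4⟩ := hιspec _ (hmem 0 h0)
      obtain ⟨d1, d2, d3, d4⟩ := hιspec _ (hmem (t-1) (by omega))
      omega
  -- apply counting
  have := count_pairs StepSet (2 * n) hpos hsum
  rw [hcardSS] at this
  rw [hcardRj]
  rcases this with h | h
  · left; omega
  · right
    calc (t - 1) ^ 3 ≤ 27 * (2 * n) ^ 2 := h
      _ = 108 * n ^ 2 := by ring

lemma aux_cube (m N : ℕ) (h : m ^ 3 ≤ 108 * N ^ 2) : (m : ℝ) ≤ 5 * (N : ℝ) ^ (2/3 : ℝ) := by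
  have hN : (0:ℝ) ≤ (N:ℝ) := Nat.cast_nonneg N
  have hrpow : ((N:ℝ) ^ (2/3 : ℝ)) ^ (3:ℕ) = (N:ℝ) ^ 2 := by
    rw [← Real.rpow_natCast ((N:ℝ) ^ (2/3 : ℝ)) 3, ← Real.rpow_mul hN]
    norm_num
  have h5 : (0:ℝ) ≤ 5 * (N:ℝ) ^ (2/3 : ℝ) := by positivity
  have hm : (0:ℝ) ≤ (m:ℝ) := Nat.cast_nonneg m
  have hcube : ((m:ℝ)) ^ (3:ℕ) ≤ (5 * (N:ℝ) ^ (2/3 : ℝ)) ^ (3:ℕ) := by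
    rw [mul_pow, hrpow]
    calc ((m:ℝ)) ^ (3:ℕ) = ((m ^ 3 : ℕ) : ℝ) := by push_cast; ring
      _ ≤ ((108 * N ^ 2 : ℕ) : ℝ) := by exact_mod_cast h
      _ = 108 * (N:ℝ)^2 := by push_cast; ring
      _ ≤ 125 * (N:ℝ)^2 := by nlinarith [sq_nonneg ((N:ℝ))]
      _ = 5 ^ (3:ℕ) * (N:ℝ)^2 := by norm_num
  exact le_of_pow_le_pow_left₀ (by norm_num) h5 hcube

open scoped Classical in
lemma solSet_card
    (hmono : ∀ i j, i < j → j < n → a i < a j)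
    (hconv : ∀ i, i + 2 < n → a (i+1) - a i < a (i+2) - a (i+1)) :
    ((solSet n a).card : ℝ) ≤ (n : ℝ) * (2 + 5 * (n : ℝ) ^ (2/3 : ℝ)) := by
  have hfw : (solSet n a).card = ∑ j ∈ range n, ((solSet n a).filter (fun t => t.1 = j)).card := by
    apply Finset.card_eq_sum_card_fiberwise
    intro t ht
    rw [mem_coe, mem_solSet] at ht
    rw [mem_coe, mem_range]
    omega
  rw [hfw]
  push_cast
  calc (∑ j ∈ range n, (((solSet n a).filter (fun t => t.1 = j)).card : ℝ))
      ≤ ∑ j ∈ range n, (2 + 5 * (n:ℝ) ^ (2/3 : ℝ)) := by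
        apply Finset.sum_le_sum
        intro j hj
        rcases fiber_bound n a hmono hconv j with h | h
        · have h2 : (0:ℝ) ≤ 5 * (n:ℝ) ^ (2/3:ℝ) := by positivity
          have : (((solSet n a).filter (fun t => t.1 = j)).card : ℝ) ≤ 2 := by exact_mod_cast h
          linarith
        · have := aux_cube _ _ h
          set c := ((solSet n a).filter (fun t => t.1 = j)).card
          have hcc : ((c - 1 : ℕ) : ℝ) ≤ 5 * (n:ℝ) ^ (2/3:ℝ) := this
          rcases Nat.eq_zero_or_pos c with h0 | h0
          · simp only [h0, Nat.cast_zero]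
            positivity
          · have : ((c - 1 : ℕ) : ℝ) = (c:ℝ) - 1 := by
              have : 1 ≤ c := h0
              push_cast [this]
              ring
            rw [this] at hcc
            linarith
    _ = (n : ℝ) * (2 + 5 * (n:ℝ) ^ (2/3 : ℝ)) := by
        rw [Finset.sum_const, card_range, nsmul_eq_mul]
end Blocks


/-- Every convex set `A ⊆ ℝ` satisfies `T₃(A) ≤ C·|A|^{5/3}`, where `T₃(A)` is the number of
triples `(a, b, c) ∈ A³` with `2a = b + c`. -/
theorem threeAP_count_upper_bound :
    ∃ C : ℝ, 0 < C ∧ ∀ A : Finset ℝ, IsConvexSet A →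
      (((A ×ˢ A ×ˢ A).filter fun t => 2 * t.1 = t.2.1 + t.2.2).card : ℝ) ≤
        C * (A.card : ℝ) ^ (5 / 3 : ℝ) := by
  classical
  refine ⟨15, by norm_num, ?_⟩
  intro A hA
  set n := A.card with hn
  rcases Nat.eq_zero_or_pos n with h0 | h0
  · have hAe : A = ∅ := Finset.card_eq_zero.mp (by omega)
    have h1 : ((A ×ˢ A ×ˢ A).filter fun t => 2 * t.1 = t.2.1 + t.2.2).card = 0 := by
      rw [hAe]; simp
    rw [h1]
    simp only [Nat.cast_zero]
    positivity
  set l := A.sort (· ≤ ·) with hl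
  set a : ℕ → ℝ := fun i => l.getD i 0 with ha
  have hlen : l.length = n := Finset.length_sort _
  have hsortlt : l.Pairwise (· < ·) := A.sortedLT_sort.pairwise
  have hmono : ∀ i j, i < j → j < n → a i < a j := by
    intro i j hij hj
    have hi' : i < l.length := by omega
    have hj' : j < l.length := by omega
    simp only [ha, List.getD_eq_getElem l 0 hi', List.getD_eq_getElem l 0 hj']
    exact List.Pairwise.rel_get_of_lt hsortlt (by exact hij)
  have hconv : ∀ i, i + 2 < n → a (i+1) - a i < a (i+2) - a (i+1) := hA
  have hainj : ∀ i i', i < n → i' < n → a i = a i' → i = i' := by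
    intro i i' hi hi' he
    by_contra hne
    rcases Nat.lt_or_ge i i' with h | h
    · exact absurd he (ne_of_lt (hmono i i' h hi'))
    · have h2 : i' < i := by omega
      exact absurd he.symm (ne_of_lt (hmono i' i h2 hi))
  have hidx : ∀ x ∈ A, l.idxOf x < n ∧ a (l.idxOf x) = x := by
    intro x hx
    have hxl : x ∈ l := (Finset.mem_sort _).mpr hx
    have h1 : l.idxOf x < l.length := List.idxOf_lt_length_iff.mpr hxl
    refine ⟨by omega, ?_⟩
    simp only [ha, List.getD_eq_getElem l 0 h1]
    exact List.getElem_idxOf h1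
  -- index triple set
  set Tidx := ((range n) ×ˢ (range n) ×ˢ (range n)).filter
    (fun t => 2 * a t.1 = a t.2.1 + a t.2.2) with hTidx
  -- step 1: inject real triples into index triples
  have hstep1 : ((A ×ˢ A ×ˢ A).filter fun t => 2 * t.1 = t.2.1 + t.2.2).card ≤ Tidx.card := by
    apply Finset.card_le_card_of_injOn
      (fun x => (l.idxOf x.1, l.idxOf x.2.1, l.idxOf x.2.2))
    · intro x hx
      rw [mem_coe, mem_filter, mem_product, mem_product] at hx
      obtain ⟨⟨hx1, hx2, hx3⟩, hx4⟩ := hx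
      obtain ⟨h1, h1'⟩ := hidx _ hx1
      obtain ⟨h2, h2'⟩ := hidx _ hx2
      obtain ⟨h3, h3'⟩ := hidx _ hx3
      rw [mem_coe, hTidx, mem_filter, mem_product, mem_product]
      refine ⟨⟨mem_range.mpr h1, mem_range.mpr h2, mem_range.mpr h3⟩, ?_⟩
      simp only [h1', h2', h3']
      exact hx4
    · intro x hx y hy he
      rw [coe_filter] at hx hy
      obtain ⟨hx', -⟩ := hx
      obtain ⟨hy', -⟩ := hy
      rw [mem_product, mem_product] at hx' hy'
      obtain ⟨m1, m2, m3⟩ := hx'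
      obtain ⟨m1', m2', m3'⟩ := hy'
      rcases x with ⟨x1, x2, x3⟩
      rcases y with ⟨y1, y2, y3⟩
      simp only [Prod.mk.injEq] at he ⊢
      obtain ⟨e1, e2, e3⟩ := he
      simp only at m1 m2 m3 m1' m2' m3'
      refine ⟨?_, ?_, ?_⟩
      · rw [← (hidx _ m1).2, ← (hidx _ m1').2, e1]
      · rw [← (hidx _ m2).2, ← (hidx _ m2').2, e2]
      · rw [← (hidx _ m3).2, ← (hidx _ m3').2, e3]
  -- step 2: bound index triples via solSet
  have Tmem : ∀ t ∈ Tidx, t.1 < n ∧ t.2.1 < n ∧ t.2.2 < n ∧ 2 * a t.1 = a t.2.1 + a t.2.2 := by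
    intro t ht
    rw [hTidx, mem_filter, mem_product, mem_product] at ht
    obtain ⟨⟨c1, c2, c3⟩, c4⟩ := ht
    exact ⟨mem_range.mp c1, mem_range.mp c2, mem_range.mp c3, c4⟩
  have hmono' : ∀ i i', i < n → i' < n → a i < a i' → i < i' := by
    intro i i' hi hi' hlt
    by_contra hcon
    push_neg at hcon
    rcases Nat.eq_or_lt_of_le hcon with h | h
    · rw [h] at hlt; linarith
    · have := hmono i' i h hi
      linarith
  have hsplit : Tidx ⊆ (Tidx.filter (fun t => t.2.1 = t.2.2)) ∪
      (Tidx.filter (fun t => t.2.1 < t.2.2)) ∪ (Tidx.filter (fun t => t.2.2 < t.2.1)) := by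
    intro t ht
    simp only [mem_union, mem_filter]
    rcases lt_trichotomy t.2.1 t.2.2 with h | h | h
    · exact Or.inl (Or.inr ⟨ht, h⟩)
    · exact Or.inl (Or.inl ⟨ht, h⟩)
    · exact Or.inr ⟨ht, h⟩
  have hE : (Tidx.filter (fun t => t.2.1 = t.2.2)).card ≤ n := by
    have : (Tidx.filter (fun t => t.2.1 = t.2.2)).card ≤ (range n).card := by
      apply Finset.card_le_card_of_injOn (fun t => t.1)
      · intro t ht
        rw [mem_coe, mem_filter] at ht
        exact mem_range.mpr (Tmem t ht.1).1
      · intro t ht t' ht' he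
        rw [coe_filter] at ht ht'
        obtain ⟨ht, hd⟩ := ht
        obtain ⟨ht', hd'⟩ := ht'
        obtain ⟨c1, c2, c3, c4⟩ := Tmem t ht
        obtain ⟨c1', c2', c3', c4'⟩ := Tmem t' ht'
        simp only at he
        have k1 : t.1 = t.2.1 := by
          apply hainj _ _ c1 c2
          rw [← hd] at c4
          linarith
        have k1' : t'.1 = t'.2.1 := by
          apply hainj _ _ c1' c2'
          rw [← hd'] at c4'
          linarith
        rcases t with ⟨u1, u2, u3⟩
        rcases t' with ⟨v1, v2, v3⟩
        simp only [Prod.mk.injEq] at *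
        omega
    simpa using this
  have hP : (Tidx.filter (fun t => t.2.1 < t.2.2)) ⊆ solSet n a := by
    intro t ht
    rw [mem_filter] at ht
    obtain ⟨ht, hlt⟩ := ht
    obtain ⟨c1, c2, c3, c4⟩ := Tmem t ht
    rw [mem_solSet]
    have hik : a t.2.1 < a t.2.2 := hmono _ _ hlt c3
    have h1 : a t.2.1 < a t.1 := by linarith
    have h2 : a t.1 < a t.2.2 := by linarith
    exact ⟨hmono' _ _ c2 c1 h1, hmono' _ _ c1 c3 h2, c3, c4⟩
  have hQ : (Tidx.filter (fun t => t.2.2 < t.2.1)).card ≤ (solSet n a).card := by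
    apply Finset.card_le_card_of_injOn (fun t => (t.1, t.2.2, t.2.1))
    · intro t ht
      rw [mem_coe, mem_filter] at ht
      obtain ⟨ht, hlt⟩ := ht
      obtain ⟨c1, c2, c3, c4⟩ := Tmem t ht
      rw [mem_coe, mem_solSet]
      have hik : a t.2.2 < a t.2.1 := hmono _ _ hlt c2
      have h1 : a t.2.2 < a t.1 := by linarith
      have h2 : a t.1 < a t.2.1 := by linarith
      exact ⟨hmono' _ _ c3 c1 h1, hmono' _ _ c1 c2 h2, c2, by dsimp only; linarith⟩
    · intro t ht t' ht' he
      rcases t with ⟨u1, u2, u3⟩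
      rcases t' with ⟨v1, v2, v3⟩
      simp only [Prod.mk.injEq] at he ⊢
      exact ⟨he.1, he.2.2, he.2.1⟩
  have hTbound : Tidx.card ≤ n + ((solSet n a).card + (solSet n a).card) := by
    calc Tidx.card ≤ ((Tidx.filter (fun t => t.2.1 = t.2.2)) ∪
        (Tidx.filter (fun t => t.2.1 < t.2.2)) ∪ (Tidx.filter (fun t => t.2.2 < t.2.1))).card :=
          card_le_card hsplit
      _ ≤ ((Tidx.filter (fun t => t.2.1 = t.2.2)) ∪
          (Tidx.filter (fun t => t.2.1 < t.2.2))).card +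
          (Tidx.filter (fun t => t.2.2 < t.2.1)).card := card_union_le _ _
      _ ≤ ((Tidx.filter (fun t => t.2.1 = t.2.2)).card +
          (Tidx.filter (fun t => t.2.1 < t.2.2)).card) +
          (Tidx.filter (fun t => t.2.2 < t.2.1)).card := by
            exact Nat.add_le_add_right (card_union_le _ _) _
      _ ≤ n + ((solSet n a).card + (solSet n a).card) := by
          have := card_le_card hP
          omega
  -- endgame
  have hsol := solSet_card n a hmono hconv
  have hnpos : (0:ℝ) < (n:ℝ) := by exact_mod_cast h0
  have hment : (n:ℝ) * (n:ℝ) ^ (2/3 : ℝ) = (n:ℝ) ^ (5/3 : ℝ) := by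
    nth_rewrite 1 [← Real.rpow_one (n:ℝ)]
    rw [← Real.rpow_add hnpos]
    norm_num
  have hone : (n:ℝ) ≤ (n:ℝ) ^ (5/3 : ℝ) := by
    nth_rewrite 1 [← Real.rpow_one (n:ℝ)]
    apply Real.rpow_le_rpow_of_exponent_le ?_ (by norm_num)
    have : (1:ℕ) ≤ n := h0
    exact_mod_cast this
  have hc1 : (((A ×ˢ A ×ˢ A).filter fun t => 2 * t.1 = t.2.1 + t.2.2).card : ℝ) ≤
      (Tidx.card : ℝ) := by exact_mod_cast hstep1
  have hc2 : (Tidx.card : ℝ) ≤ (n : ℝ) + 2 * ((solSet n a).card : ℝ) := by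
    have : (Tidx.card : ℝ) ≤ ((n + ((solSet n a).card + (solSet n a).card) : ℕ) : ℝ) := by
      exact_mod_cast hTbound
    push_cast at this
    linarith
  calc (((A ×ˢ A ×ˢ A).filter fun t => 2 * t.1 = t.2.1 + t.2.2).card : ℝ)
      ≤ (n : ℝ) + 2 * ((solSet n a).card : ℝ) := le_trans hc1 hc2
    _ ≤ (n : ℝ) + 2 * ((n : ℝ) * (2 + 5 * (n : ℝ) ^ (2/3 : ℝ))) := by linarith
    _ = 5 * (n : ℝ) + 10 * ((n:ℝ) * (n:ℝ) ^ (2/3 : ℝ)) := by ring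
    _ = 5 * (n : ℝ) + 10 * (n:ℝ) ^ (5/3 : ℝ) := by rw [hment]
    _ ≤ 5 * (n:ℝ) ^ (5/3 : ℝ) + 10 * (n:ℝ) ^ (5/3 : ℝ) := by linarith
    _ = 15 * (n:ℝ) ^ (5/3 : ℝ) := by ring
end

section
/- There exists an absolute constant C > 0 such that for every finite convex set A ⊂ ℝ and every x ∈ ℝ, the number of representations r_{A+A}(x) := #{(a,b) ∈ A × A : a + b = x} satisfies r_{A+A}(x) ≤ C·|A|^{2/3}. -/
open Finset

private lemma tele (f : ℕ → ℝ) {i j : ℕ} (h : i ≤ j) :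
    ∑ k ∈ Finset.Ico i j, (f (k+1) - f k) = f j - f i := by
  rw [Finset.sum_Ico_eq_sub _ h, Finset.sum_range_sub, Finset.sum_range_sub]; ring

private lemma getD_sort_lt {α : Type*} [LinearOrder α] (s : Finset α) (d : α) {k l : ℕ}
    (hkl : k < l) (hl : l < s.card) :
    (s.sort (· ≤ ·)).getD k d < (s.sort (· ≤ ·)).getD l d := by
  have hlen : (s.sort (· ≤ ·)).length = s.card := s.length_sort _
  rw [List.getD_eq_getElem _ _ (by omega), List.getD_eq_getElem _ _ (by omega)]
  exact s.sortedLT_sort (by simpa using hkl)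

private lemma getD_sort_mem {α : Type*} [LinearOrder α] (s : Finset α) (d : α) {k : ℕ}
    (hk : k < s.card) : (s.sort (· ≤ ·)).getD k d ∈ s := by
  have hlen : (s.sort (· ≤ ·)).length = s.card := s.length_sort _
  rw [List.getD_eq_getElem _ _ (by omega)]
  exact (Finset.mem_sort _).1 (List.getElem_mem _)

private lemma mem_iff_getD_sort {α : Type*} [LinearOrder α] (s : Finset α) (d : α) {a : α} :
    a ∈ s ↔ ∃ k, k < s.card ∧ (s.sort (· ≤ ·)).getD k d = a := by
  have hlen : (s.sort (· ≤ ·)).length = s.card := s.length_sort _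
  constructor
  · intro ha
    have : a ∈ s.sort (· ≤ ·) := (Finset.mem_sort _).2 ha
    obtain ⟨k, hk, hae⟩ := List.mem_iff_getElem.1 this
    exact ⟨k, by omega, by rw [List.getD_eq_getElem _ _ hk]; exact hae⟩
  · rintro ⟨k, hk, rfl⟩
    exact getD_sort_mem s d hk
section
variable (n : ℕ) (g : ℕ → ℝ)

private lemma dmono_s5 (hconv : ∀ i, i + 2 < n → g (i+1) - g i < g (i+2) - g (i+1)) :
    ∀ i j : ℕ, i < j → j + 1 < n → g (i+1) - g i < g (j+1) - g j := by
  intro i j hij hj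
  induction j with
  | zero => omega
  | succ j ih =>
    rcases Nat.lt_or_ge i j with h | h
    · exact lt_trans (ih h (by omega)) (hconv j (by omega))
    · have : i = j := by omega
      subst this
      exact hconv i (by omega)
end

section
variable (n : ℕ) (g : ℕ → ℝ)

private lemma block_low (hconv : ∀ i, i + 2 < n → g (i+1) - g i < g (i+2) - g (i+1))
    {i j : ℕ} (hij : i ≤ j) (hj : j < n) :
    ((j - i : ℕ) : ℝ) * (g (i+1) - g i) ≤ g j - g i := by
  rw [← tele g hij]
  calc ((j - i : ℕ) : ℝ) * (g (i+1) - g i)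
      = (Finset.Ico i j).card • (g (i+1) - g i) := by
        rw [Nat.card_Ico, nsmul_eq_mul]
    _ ≤ ∑ k ∈ Finset.Ico i j, (g (k+1) - g k) := by
        apply Finset.card_nsmul_le_sum
        intro k hk
        rw [Finset.mem_Ico] at hk
        rcases Nat.eq_or_lt_of_le hk.1 with h | h
        · rw [h]
        · exact le_of_lt (dmono_s5 n g hconv i k h (by omega))

private lemma block_up (hconv : ∀ i, i + 2 < n → g (i+1) - g i < g (i+2) - g (i+1))
    {i j : ℕ} (hij : i < j) (hj : j < n) :
    g j - g i ≤ ((j - i : ℕ) : ℝ) * (g (j-1+1) - g (j-1)) := by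
  rw [← tele g (le_of_lt hij)]
  calc ∑ k ∈ Finset.Ico i j, (g (k+1) - g k)
      ≤ (Finset.Ico i j).card • (g (j-1+1) - g (j-1)) := by
        apply Finset.sum_le_card_nsmul
        intro k hk
        rw [Finset.mem_Ico] at hk
        rcases Nat.eq_or_lt_of_le (Nat.le_sub_one_of_lt hk.2) with h | h
        · rw [h]
        · exact le_of_lt (dmono_s5 n g hconv k (j-1) h (by omega))
    _ = ((j - i : ℕ) : ℝ) * (g (j-1+1) - g (j-1)) := by
        rw [Nat.card_Ico, nsmul_eq_mul]
end
private lemma key_bound (n : ℕ) (g : ℕ → ℝ) (x : ℝ)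
    (hmono : ∀ i j : ℕ, i < j → j < n → g i < g j)
    (hconv : ∀ i, i + 2 < n → g (i+1) - g i < g (i+2) - g (i+1))
    (I : Finset ℕ)
    (hI : ∀ i ∈ I, i < n ∧ ∃ j, j < n ∧ i ≤ j ∧ g i + g j = x) :
    (I.card : ℝ) ≤ 3 * (n:ℝ) ^ (2/3 : ℝ) + 2 := by
  classical
  set m := I.card with hm
  by_cases hm3 : m < 3
  · have h1 : (I.card : ℝ) ≤ 2 := by exact_mod_cast Nat.lt_succ_iff.mp hm3
    have h2 : (0:ℝ) ≤ 3 * (n:ℝ) ^ (2/3:ℝ) := by positivity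
    linarith
  push_neg at hm3
  have hn1 : 1 ≤ n := by
    obtain ⟨i, hi⟩ : I.Nonempty := Finset.card_pos.mp (by omega)
    have := (hI i hi).1; omega
  -- enumeration of I in increasing order
  set e : ℕ → ℕ := fun k => (I.sort (· ≤ ·)).getD k 0 with he
  have hemono : ∀ k l, k < l → l < m → e k < e l := fun k l hkl hl => getD_sort_lt I 0 hkl hl
  have hemem : ∀ k, k < m → e k ∈ I := fun k hk => getD_sort_mem I 0 hk
  -- partner function
  set jf : ℕ → ℕ := fun i =>
    if h : ∃ j, j < n ∧ i ≤ j ∧ g i + g j = x then h.choose else 0 with hjfdef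
  have hjfspec : ∀ i ∈ I, jf i < n ∧ i ≤ jf i ∧ g i + g (jf i) = x := by
    intro i hi
    obtain ⟨-, hex⟩ := hI i hi
    simp only [hjfdef, dif_pos hex]
    exact hex.choose_spec
  have hIlt : ∀ i ∈ I, i < n := fun i hi => (hI i hi).1
  have hjf_anti : ∀ i i', i ∈ I → i' ∈ I → i < i' → jf i' < jf i := by
    intro i i' hi hi' hlt
    obtain ⟨h1, h2, h3⟩ := hjfspec i hi
    obtain ⟨h1', h2', h3'⟩ := hjfspec i' hi'
    by_contra hc
    push_neg at hc
    have hgi : g i < g i' := hmono i i' hlt (hIlt i' hi')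
    have hle : g (jf i) ≤ g (jf i') := by
      rcases Nat.eq_or_lt_of_le hc with h | h
      · rw [h]
      · exact le_of_lt (hmono _ _ h h1')
    linarith
  -- gap data
  set J : ℕ → ℕ := fun k => jf (e k) with hJ
  set sk : ℕ → ℕ := fun k => e (k+1) - e k with hsk
  set tk : ℕ → ℕ := fun k => J k - J (k+1) with htk
  set u : ℕ → ℝ := fun k => g (e (k+1)) - g (e k) with hu
  have hee : ∀ k, k + 1 < m → e k < e (k+1) := fun k h => hemono k (k+1) (by omega) h
  have heI : ∀ k, k < m → e k < n := fun k h => hIlt _ (hemem k h)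
  have hJanti : ∀ k, k+1 < m → J (k+1) < J k :=
    fun k h => hjf_anti _ _ (hemem k (by omega)) (hemem (k+1) h) (hee k h)
  have hJlt : ∀ k, k < m → J k < n := fun k h => (hjfspec _ (hemem k h)).1
  have heJ : ∀ k, k < m → e k ≤ J k := fun k h => (hjfspec _ (hemem k h)).2.1
  have hgx : ∀ k, k < m → g (e k) + g (J k) = x := fun k h => (hjfspec _ (hemem k h)).2.2
  have hsk1 : ∀ k, k+1 < m → 1 ≤ sk k := by
    intro k h; have := hee k h; simp only [hsk]; omega
  have htk1 : ∀ k, k+1 < m → 1 ≤ tk k := by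
    intro k h; have := hJanti k h; simp only [htk]; omega
  have hskcast : ∀ k, k+1 < m → (sk k : ℝ) = (e (k+1) : ℝ) - (e k : ℝ) := by
    intro k h; simp only [hsk]
    rw [Nat.cast_sub (le_of_lt (hee k h))]
  have huJ : ∀ k, k+1 < m → u k = g (J k) - g (J (k+1)) := by
    intro k h
    have h1 := hgx k (by omega); have h2 := hgx (k+1) h
    simp only [hu]; linarith
  have hupos : ∀ k, k+1 < m → 0 < u k :=
    fun k h => sub_pos.2 (hmono _ _ (hee k h) (heI (k+1) h))
  -- block-sum bounds
  have hA1 : ∀ k, k+1 < m → (tk k : ℝ) * (g (J (k+1) + 1) - g (J (k+1))) ≤ u k := by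
    intro k h
    rw [huJ k h]
    exact block_low n g hconv (le_of_lt (hJanti k h)) (hJlt k (by omega))
  have hA2 : ∀ k, k+1 < m →
      u k ≤ (sk k : ℝ) * (g (e (k+1) - 1 + 1) - g (e (k+1) - 1)) := by
    intro k h
    exact block_up n g hconv (hee k h) (heI (k+1) h)
  -- t_k < s_k
  have hts : ∀ k, k+1 < m → tk k < sk k := by
    intro k h
    have hen : e (k+1) < n := heI (k+1) h
    have hJn : J k < n := hJlt k (by omega)
    have hJJ : J (k+1) < J k := hJanti k h
    have heJ1 : e (k+1) ≤ J (k+1) := heJ (k+1) h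
    have he1 : 1 ≤ e (k+1) := by have := hee k h; omega
    have hd1 : g (e (k+1) - 1 + 1) - g (e (k+1) - 1) < g (J (k+1) + 1) - g (J (k+1)) :=
      dmono_s5 n g hconv _ _ (by omega) (by omega)
    have hdpos : 0 < g (J (k+1) + 1) - g (J (k+1)) :=
      sub_pos.2 (hmono _ _ (by omega) (by omega))
    have hskpos : (0:ℝ) < sk k := by exact_mod_cast hsk1 k h
    have h1 := hA1 k h; have h2 := hA2 k h
    have hfin : (tk k : ℝ) * (g (J (k+1) + 1) - g (J (k+1))) <
        (sk k : ℝ) * (g (J (k+1) + 1) - g (J (k+1))) := by nlinarith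
    have : (tk k : ℝ) < (sk k : ℝ) := lt_of_mul_lt_mul_right hfin (le_of_lt hdpos)
    exact_mod_cast this
  -- cross inequality s_{k+1} t_k + 1 ≤ s_k t_{k+1}
  have hcross : ∀ k, k+2 < m → sk (k+1) * tk k + 1 ≤ sk k * tk (k+1) := by
    intro k h
    have he2n : e (k+2) < n := heI (k+2) h
    have hee1 : e k < e (k+1) := hee k (by omega)
    have hee2 : e (k+1) < e (k+2) := hee (k+1) h
    have hJ2 : J (k+2) < J (k+1) := hJanti (k+1) h
    have hJ1 : J (k+1) < J k := hJanti k (by omega)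
    have hJn : J k < n := hJlt k (by omega)
    have heJ1 : e (k+1) ≤ J (k+1) := heJ (k+1) (by omega)
    -- s-side
    have hB1 : (sk (k+1) : ℝ) * (g (e (k+1) + 1) - g (e (k+1))) ≤ u (k+1) :=
      block_low n g hconv (le_of_lt hee2) he2n
    have hB2 := hA2 k (by omega)
    have hB3 : g (e (k+1) - 1 + 1) - g (e (k+1) - 1) < g (e (k+1) + 1) - g (e (k+1)) :=
      dmono_s5 n g hconv _ _ (by omega) (by omega)
    -- t-side
    have hC1 := hA1 k (by omega)
    have hC2 : u (k+1) ≤ (tk (k+1) : ℝ) * (g (J (k+1) - 1 + 1) - g (J (k+1) - 1)) := by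
      rw [huJ (k+1) h]
      exact block_up n g hconv hJ2 (by omega)
    have hC3 : g (J (k+1) - 1 + 1) - g (J (k+1) - 1) < g (J (k+1) + 1) - g (J (k+1)) :=
      dmono_s5 n g hconv _ _ (by omega) (by omega)
    have hu0 := hupos k (by omega)
    have hu1 := hupos (k+1) h
    have hskp0 : (0:ℝ) < sk k := by exact_mod_cast hsk1 k (by omega)
    have hskp1 : (0:ℝ) < sk (k+1) := by exact_mod_cast hsk1 (k+1) h
    have htkp0 : (0:ℝ) < tk k := by exact_mod_cast htk1 k (by omega)
    have htkp1 : (0:ℝ) < tk (k+1) := by exact_mod_cast htk1 (k+1) h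
    have P : (sk (k+1) : ℝ) * u k < (sk k : ℝ) * u (k+1) := by
      calc (sk (k+1) : ℝ) * u k
          ≤ (sk (k+1) : ℝ) * ((sk k : ℝ) * (g (e (k+1) - 1 + 1) - g (e (k+1) - 1))) :=
            mul_le_mul_of_nonneg_left hB2 (le_of_lt hskp1)
        _ < (sk (k+1) : ℝ) * ((sk k : ℝ) * (g (e (k+1) + 1) - g (e (k+1)))) :=
            mul_lt_mul_of_pos_left (mul_lt_mul_of_pos_left hB3 hskp0) hskp1
        _ = (sk k : ℝ) * ((sk (k+1) : ℝ) * (g (e (k+1) + 1) - g (e (k+1)))) := by ring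
        _ ≤ (sk k : ℝ) * u (k+1) := mul_le_mul_of_nonneg_left hB1 (le_of_lt hskp0)
    have Q : (tk k : ℝ) * u (k+1) < (tk (k+1) : ℝ) * u k := by
      calc (tk k : ℝ) * u (k+1)
          ≤ (tk k : ℝ) * ((tk (k+1) : ℝ) * (g (J (k+1) - 1 + 1) - g (J (k+1) - 1))) :=
            mul_le_mul_of_nonneg_left hC2 (le_of_lt htkp0)
        _ < (tk k : ℝ) * ((tk (k+1) : ℝ) * (g (J (k+1) + 1) - g (J (k+1)))) :=
            mul_lt_mul_of_pos_left (mul_lt_mul_of_pos_left hC3 htkp1) htkp0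
        _ = (tk (k+1) : ℝ) * ((tk k : ℝ) * (g (J (k+1) + 1) - g (J (k+1)))) := by ring
        _ ≤ (tk (k+1) : ℝ) * u k := mul_le_mul_of_nonneg_left hC1 (le_of_lt htkp1)
    have step1 : ((sk (k+1) : ℝ) * tk k) * (u k * u (k+1)) <
        ((sk k : ℝ) * tk (k+1)) * (u k * u (k+1)) := by
      calc ((sk (k+1) : ℝ) * tk k) * (u k * u (k+1))
          = ((sk (k+1) : ℝ) * u k) * ((tk k : ℝ) * u (k+1)) := by ring
        _ < ((sk k : ℝ) * u (k+1)) * ((tk (k+1) : ℝ) * u k) :=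
            mul_lt_mul'' P Q (by positivity) (by positivity)
        _ = ((sk k : ℝ) * tk (k+1)) * (u k * u (k+1)) := by ring
    have step2 : (sk (k+1) : ℝ) * tk k < (sk k : ℝ) * tk (k+1) :=
      lt_of_mul_lt_mul_right step1 (by positivity)
    have : sk (k+1) * tk k < sk k * tk (k+1) := by exact_mod_cast step2
    omega
  -- the ratio sequence
  set σ : ℕ → ℝ := fun k => (tk k : ℝ) / (sk k : ℝ) with hσ
  have hσgap : ∀ k, k+2 < m →
      1 / ((sk k : ℝ) * (sk (k+1) : ℝ)) ≤ σ (k+1) - σ k := by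
    intro k h
    have hskp0 : (0:ℝ) < sk k := by exact_mod_cast hsk1 k (by omega)
    have hskp1 : (0:ℝ) < sk (k+1) := by exact_mod_cast hsk1 (k+1) h
    have hc : ((sk (k+1) * tk k : ℕ) : ℝ) + 1 ≤ ((sk k * tk (k+1) : ℕ) : ℝ) := by
      exact_mod_cast hcross k h
    push_cast at hc
    have hkey : σ (k+1) - σ k =
        ((sk k : ℝ) * tk (k+1) - (sk (k+1) : ℝ) * tk k) / ((sk k : ℝ) * (sk (k+1) : ℝ)) := by
      simp only [hσ]
      field_simp
    rw [hkey]
    exact (div_le_div_iff_of_pos_right (by positivity)).2 (by linarith)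
  -- counting
  set M := m - 2 with hMdef
  have hσnn : ∀ k, 0 ≤ σ k := by
    intro k; simp only [hσ]; positivity
  have hσlt1 : ∀ k, k + 1 < m → σ k < 1 := by
    intro k h
    have h0 : (0:ℝ) < sk k := by exact_mod_cast hsk1 k h
    simp only [hσ]
    rw [div_lt_one h0]
    exact_mod_cast hts k h
  have hgapnn : ∀ k, k < M → 0 ≤ σ (k+1) - σ k := by
    intro k hk
    have h0 : (0:ℝ) < sk k := by exact_mod_cast hsk1 k (by omega)
    have h1 : (0:ℝ) < sk (k+1) := by exact_mod_cast hsk1 (k+1) (by omega)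
    have hp : (0:ℝ) < 1 / ((sk k : ℝ) * (sk (k+1) : ℝ)) := by positivity
    linarith [hσgap k (by omega)]
  have htot : ∑ k ∈ Finset.range M, (σ (k+1) - σ k) < 1 := by
    rw [Finset.sum_range_sub σ M]
    have h1 := hσlt1 M (by omega)
    have h2 := hσnn 0
    linarith
  set τ : ℝ := (n:ℝ) ^ ((1:ℝ)/3) with hτ
  have hνpos : (0:ℝ) < (n:ℝ) := by exact_mod_cast Nat.pos_of_ne_zero (by omega)
  have hν1 : (1:ℝ) ≤ (n:ℝ) := by exact_mod_cast hn1
  have hτpos : 0 < τ := Real.rpow_pos_of_pos hνpos _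
  set Gd := (Finset.range M).filter (fun k => (sk k : ℝ) ≤ τ ∧ (sk (k+1) : ℝ) ≤ τ) with hGd
  set Bd1 := (Finset.range M).filter (fun k => τ < (sk k : ℝ)) with hBd1
  set Bd2 := (Finset.range M).filter (fun k => τ < (sk (k+1) : ℝ)) with hBd2
  have hGdcard : (Gd.card : ℝ) ≤ τ * τ := by
    have hstep : ∀ k ∈ Gd, 1/(τ*τ) ≤ σ (k+1) - σ k := by
      intro k hk
      rw [hGd, Finset.mem_filter, Finset.mem_range] at hk
      obtain ⟨hkM, hk1, hk2⟩ := hk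
      have h0 : (0:ℝ) < sk k := by exact_mod_cast hsk1 k (by omega)
      have h1 : (0:ℝ) < sk (k+1) := by exact_mod_cast hsk1 (k+1) (by omega)
      have hle : (sk k : ℝ) * (sk (k+1) : ℝ) ≤ τ * τ :=
        mul_le_mul hk1 hk2 h1.le (le_trans h0.le hk1)
      calc 1/(τ*τ) ≤ 1/((sk k : ℝ) * (sk (k+1) : ℝ)) :=
            one_div_le_one_div_of_le (by positivity) hle
        _ ≤ σ (k+1) - σ k := hσgap k (by omega)
    have h2 : Gd.card • (1/(τ*τ)) ≤ ∑ k ∈ Gd, (σ (k+1) - σ k) :=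
      Finset.card_nsmul_le_sum Gd _ _ hstep
    have h3 : ∑ k ∈ Gd, (σ (k+1) - σ k) ≤ ∑ k ∈ Finset.range M, (σ (k+1) - σ k) :=
      Finset.sum_le_sum_of_subset_of_nonneg (Finset.filter_subset _ _)
        (fun k hk _ => hgapnn k (Finset.mem_range.1 hk))
    rw [nsmul_eq_mul] at h2
    have h4 : (Gd.card : ℝ) * (1/(τ*τ)) < 1 := lt_of_le_of_lt (le_trans h2 h3) htot
    rw [mul_one_div] at h4
    exact le_of_lt ((div_lt_one (by positivity)).1 h4)
  have hsksum : ∑ k ∈ Finset.range (m-1), (sk k : ℝ) ≤ (n:ℝ) := by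
    have hc : ∀ k ∈ Finset.range (m-1), (sk k : ℝ) = ((e (k+1) : ℝ) - (e k : ℝ)) := by
      intro k hk; exact hskcast k (by have := Finset.mem_range.1 hk; omega)
    rw [Finset.sum_congr rfl hc, Finset.sum_range_sub (fun k => (e k : ℝ))]
    have h1 : e (m-1) < n := heI (m-1) (by omega)
    have h2 : (0:ℝ) ≤ (e 0 : ℝ) := Nat.cast_nonneg _
    have h3 : ((e (m-1)) : ℝ) ≤ (n:ℝ) := by exact_mod_cast le_of_lt h1
    linarith
  have hBd1card : (Bd1.card : ℝ) * τ ≤ (n:ℝ) := by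
    have h2 : Bd1.card • τ ≤ ∑ k ∈ Bd1, (sk k : ℝ) := by
      apply Finset.card_nsmul_le_sum
      intro k hk
      rw [hBd1, Finset.mem_filter] at hk
      exact le_of_lt hk.2
    rw [nsmul_eq_mul] at h2
    refine le_trans h2 (le_trans ?_ hsksum)
    apply Finset.sum_le_sum_of_subset_of_nonneg
    · intro k hk
      rw [hBd1, Finset.mem_filter, Finset.mem_range] at hk
      exact Finset.mem_range.2 (by omega)
    · intro k _ _; positivity
  have hBd2card : (Bd2.card : ℝ) * τ ≤ (n:ℝ) := by
    have h2 : Bd2.card • τ ≤ ∑ k ∈ Bd2, (sk (k+1) : ℝ) := by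
      apply Finset.card_nsmul_le_sum
      intro k hk
      rw [hBd2, Finset.mem_filter] at hk
      exact le_of_lt hk.2
    rw [nsmul_eq_mul] at h2
    have h3 : ∑ k ∈ Bd2, (sk (k+1) : ℝ) ≤ ∑ k ∈ Finset.range M, (sk (k+1) : ℝ) :=
      Finset.sum_le_sum_of_subset_of_nonneg (Finset.filter_subset _ _)
        (fun k _ _ => by positivity)
    have h4 : ∑ k ∈ Finset.range M, (sk (k+1) : ℝ) ≤ ∑ k ∈ Finset.range (m-1), (sk k : ℝ) := by
      have h5 : ∑ k ∈ Finset.range (M+1), (sk k : ℝ)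
          = ∑ k ∈ Finset.range M, (sk (k+1) : ℝ) + (sk 0 : ℝ) :=
        Finset.sum_range_succ' _ M
      have hM1' : M + 1 = m - 1 := by omega
      rw [← hM1']
      have h6 : (0:ℝ) ≤ (sk 0 : ℝ) := Nat.cast_nonneg _
      linarith
    linarith
  have hcover : (M : ℝ) ≤ (Gd.card : ℝ) + (Bd1.card : ℝ) + (Bd2.card : ℝ) := by
    have hsub : Finset.range M ⊆ (Gd ∪ Bd1) ∪ Bd2 := by
      intro k hk
      simp only [Finset.mem_union, hGd, hBd1, hBd2, Finset.mem_filter]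
      by_cases c1 : (sk k : ℝ) ≤ τ
      · by_cases c2 : (sk (k+1) : ℝ) ≤ τ
        · exact Or.inl (Or.inl ⟨hk, c1, c2⟩)
        · exact Or.inr ⟨hk, not_le.1 c2⟩
      · exact Or.inl (Or.inr ⟨hk, not_le.1 c1⟩)
    have hcard := le_trans (Finset.card_le_card hsub)
      (le_trans (Finset.card_union_le _ _) (Nat.add_le_add_right (Finset.card_union_le _ _) _))
    rw [Finset.card_range] at hcard
    exact_mod_cast hcard
  have hττ : τ * τ = (n:ℝ) ^ ((2:ℝ)/3) := by
    rw [hτ, ← Real.rpow_add hνpos]; norm_num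
  have hν23τ : (n:ℝ) = (n:ℝ) ^ ((2:ℝ)/3) * τ := by
    rw [hτ, ← Real.rpow_add hνpos, show (2:ℝ)/3 + 1/3 = 1 by norm_num, Real.rpow_one]
  have hB1f : (Bd1.card : ℝ) ≤ (n:ℝ) ^ ((2:ℝ)/3) := by
    have h := hBd1card
    rw [hν23τ] at h
    exact le_of_mul_le_mul_right h hτpos
  have hB2f : (Bd2.card : ℝ) ≤ (n:ℝ) ^ ((2:ℝ)/3) := by
    have h := hBd2card
    rw [hν23τ] at h
    exact le_of_mul_le_mul_right h hτpos
  have hMf : (M : ℝ) ≤ 3 * (n:ℝ) ^ ((2:ℝ)/3) := by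
    linarith [hGdcard, hB1f, hB2f, hcover, hττ]
  have hmM : (m : ℝ) = (M : ℝ) + 2 := by
    have h : m = M + 2 := by omega
    rw [h]; push_cast; ring
  have hgoal : (m : ℝ) ≤ 3 * (n:ℝ) ^ ((2:ℝ)/3) + 2 := by linarith
  exact_mod_cast hgoal

/-- For every convex set `A ⊆ ℝ` and every `x ∈ ℝ`, the number of representations
`r_{A+A}(x) = #{(a,b) ∈ A × A : a + b = x}` is at most `C·|A|^{2/3}`. -/
theorem rep_count_upper_bound :
    ∃ C : ℝ, 0 < C ∧ ∀ A : Finset ℝ, IsConvexSet A → ∀ x : ℝ,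
      (((A ×ˢ A).filter fun p => p.1 + p.2 = x).card : ℝ) ≤
        C * (A.card : ℝ) ^ (2 / 3 : ℝ) := by
  classical
  refine ⟨10, by norm_num, ?_⟩
  intro A hA x
  set n := A.card with hn
  by_cases hn0 : n = 0
  · have hAe : A = ∅ := Finset.card_eq_zero.1 hn0
    subst hAe
    simp
    positivity
  set g : ℕ → ℝ := fun i => (A.sort (· ≤ ·)).getD i 0 with hg
  have hmono : ∀ i j : ℕ, i < j → j < n → g i < g j :=
    fun i j hij hj => getD_sort_lt A 0 hij hj
  have hconv : ∀ i, i + 2 < n → g (i+1) - g i < g (i+2) - g (i+1) := hA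
  set I := (Finset.range n).filter (fun i => ∃ j, j < n ∧ i ≤ j ∧ g i + g j = x) with hI
  have hIspec : ∀ i ∈ I, i < n ∧ ∃ j, j < n ∧ i ≤ j ∧ g i + g j = x := by
    intro i hi; rw [hI, Finset.mem_filter, Finset.mem_range] at hi; exact hi
  have hkey := key_bound n g x hmono hconv I hIspec
  set R := (A ×ˢ A).filter (fun p => p.1 + p.2 = x) with hR
  set Amin := A.filter (fun a => ∃ b ∈ A, a ≤ b ∧ a + b = x) with hAmin
  have hmem : ∀ a, a ∈ A ↔ ∃ k, k < n ∧ g k = a := fun a => mem_iff_getD_sort A 0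
  have hginj : ∀ i j, i < n → j < n → g i = g j → i = j := by
    intro i j hi hj hgij
    by_contra hne
    rcases Nat.lt_or_ge i j with h | h
    · exact absurd hgij (ne_of_lt (hmono i j h hj))
    · have h' : j < i := by omega
      exact absurd hgij.symm (ne_of_lt (hmono j i h' hi))
  have hAminI : Amin = I.image g := by
    ext a
    simp only [hAmin, hI, Finset.mem_filter, Finset.mem_image, Finset.mem_range]
    constructor
    · rintro ⟨haA, b, hbA, hab, habx⟩
      obtain ⟨i, hi, hgi⟩ := (hmem a).1 haA
      obtain ⟨j, hj, hgj⟩ := (hmem b).1 hbA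
      have hij : i ≤ j := by
        by_contra hc
        push_neg at hc
        have h := hmono j i hc hi
        rw [hgi, hgj] at h
        linarith
      exact ⟨i, ⟨hi, j, hj, hij, by rw [hgi, hgj]; exact habx⟩, hgi⟩
    · rintro ⟨i, ⟨hi, j, hj, hij, hx'⟩, rfl⟩
      have haA : g i ∈ A := getD_sort_mem A 0 hi
      have hbA : g j ∈ A := getD_sort_mem A 0 hj
      have hab : g i ≤ g j := by
        rcases Nat.eq_or_lt_of_le hij with h | h
        · rw [h]
        · exact le_of_lt (hmono i j h hj)
      exact ⟨haA, g j, hbA, hab, hx'⟩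
  have hcards : Amin.card = I.card := by
    rw [hAminI]
    apply Finset.card_image_of_injOn
    intro i hi j hj hgij
    exact hginj i j ((hIspec i hi).1) ((hIspec j hj).1) hgij
  have hR2 : R.card ≤ 2 * Amin.card := by
    apply Finset.card_le_mul_card_image_of_maps_to (f := fun p : ℝ × ℝ => min p.1 p.2)
    · intro p hp
      rw [hR, Finset.mem_filter, Finset.mem_product] at hp
      obtain ⟨⟨h1, h2⟩, h3⟩ := hp
      rw [hAmin, Finset.mem_filter]
      constructor
      · rcases le_total p.1 p.2 with h | h
        · rw [min_eq_left h]; exact h1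
        · rw [min_eq_right h]; exact h2
      · refine ⟨max p.1 p.2, ?_, min_le_max, by rw [min_add_max]; exact h3⟩
        rcases le_total p.1 p.2 with h | h
        · rw [max_eq_right h]; exact h2
        · rw [max_eq_left h]; exact h1
    · intro v hv
      have hsub : R.filter (fun p => min p.1 p.2 = v) ⊆ {(v, x - v), (x - v, v)} := by
        intro p hp
        rw [Finset.mem_filter, hR, Finset.mem_filter] at hp
        obtain ⟨⟨hmemp, hsum⟩, hmin⟩ := hp
        simp only [Finset.mem_insert, Finset.mem_singleton]
        rcases le_total p.1 p.2 with h | h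
        · rw [min_eq_left h] at hmin
          left
          have h2 : p.2 = x - v := by rw [← hmin]; linarith
          exact Prod.ext hmin h2
        · rw [min_eq_right h] at hmin
          right
          have h1 : p.1 = x - v := by rw [← hmin]; linarith
          exact Prod.ext h1 hmin
      calc (R.filter (fun p => min p.1 p.2 = v)).card
          ≤ ({(v, x-v), (x-v, v)} : Finset (ℝ × ℝ)).card := Finset.card_le_card hsub
        _ ≤ 2 := le_trans (Finset.card_insert_le _ _) (by simp)
  have hn1 : (1:ℝ) ≤ (n:ℝ) := by
    exact_mod_cast Nat.one_le_iff_ne_zero.2 hn0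
  have h23 : (1:ℝ) ≤ (n:ℝ) ^ ((2:ℝ)/3) := by
    calc (1:ℝ) = (1:ℝ) ^ ((2:ℝ)/3) := (Real.one_rpow _).symm
      _ ≤ (n:ℝ) ^ ((2:ℝ)/3) := Real.rpow_le_rpow (by norm_num) hn1 (by norm_num)
  have hR2' : (R.card : ℝ) ≤ 2 * (I.card : ℝ) := by
    rw [← hcards]; exact_mod_cast hR2
  calc (R.card : ℝ) ≤ 2 * (I.card : ℝ) := hR2'
    _ ≤ 2 * (3 * (n:ℝ) ^ (2/3 : ℝ) + 2) := by linarith [hkey]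
    _ ≤ 10 * (n:ℝ) ^ (2/3 : ℝ) := by
        have : (2:ℝ)/3 = 2/3 := rfl
        linarith [h23]
end

section
/- Let A ⊂ ℝ be a finite convex set and let a₁ < b₁ ≤ a₂ < b₂ ≤ ⋯ ≤ a_k < b_k be elements of A such that b_{i+1} − a_{i+1} ≤ b_i − a_i for all 1 ≤ i < k. Then the number of elements of A lying in the union of the open intervals (a₁,b₁), (a₂,b₂), …, (a_k,b_k) is at least k(k−1)/2. -/
open Classical in
/-- If `A ⊆ ℝ` is convex and `a₁ < b₁ ≤ a₂ < b₂ ≤ ⋯ ≤ a_k < b_k` are elements of `A` with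
`b_{i+1} − a_{i+1} ≤ b_i − a_i` for all `i`, then `A` has at least `k(k−1)/2` elements in the
union of the open intervals `(a_i, b_i)`. -/
theorem convex_set_interval_count (A : Finset ℝ) (hA : IsConvexSet A)
    (k : ℕ) (a b : ℕ → ℝ)
    (ha : ∀ i < k, a i ∈ A) (hb : ∀ i < k, b i ∈ A)
    (hab : ∀ i < k, a i < b i)
    (hchain : ∀ i, i + 1 < k → b i ≤ a (i + 1))
    (hdec : ∀ i, i + 1 < k → b (i + 1) - a (i + 1) ≤ b i - a i) :
    k * (k - 1) / 2 ≤ (A.filter fun x => ∃ i < k, a i < x ∧ x < b i).card := by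
  set n := A.card with hn
  set l := A.sort (· ≤ ·) with hl
  have hlen : l.length = n := A.length_sort _
  set f : ℕ → ℝ := fun t => l.getD t 0 with hfdef
  -- f is strictly monotone on [0, n)
  have hf_mono : ∀ p q : ℕ, p < q → q < n → f p < f q := by
    intro p q hpq hq
    have hq' : q < l.length := by omega
    have hp' : p < l.length := by omega
    have h := (List.pairwise_iff_get.mp A.sortedLT_sort.pairwise) ⟨p, hp'⟩ ⟨q, hq'⟩ hpq
    simp only [hfdef]
    rw [List.getD_eq_getElem _ _ hp', List.getD_eq_getElem _ _ hq']
    exact h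
  set ix : ℝ → ℕ := fun x => l.idxOf x with hixdef
  have hmem : ∀ x ∈ A, x ∈ l := fun x hx => (Finset.mem_sort _).mpr hx
  have hix_lt : ∀ x ∈ A, ix x < n := by
    intro x hx
    show l.idxOf x < n
    rw [← hlen]
    exact List.idxOf_lt_length_iff.mpr (hmem x hx)
  have hf_ix : ∀ x ∈ A, f (ix x) = x := by
    intro x hx
    have h : ix x < l.length := List.idxOf_lt_length_iff.mpr (hmem x hx)
    simp only [hfdef]
    rw [List.getD_eq_getElem _ _ h]
    exact List.idxOf_get h
  have hf_memA : ∀ t, t < n → f t ∈ A := by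
    intro t ht
    have ht' : t < l.length := by omega
    have : f t ∈ l := by
      simp only [hfdef]
      rw [List.getD_eq_getElem _ _ ht']
      exact List.getElem_mem _
    exact (Finset.mem_sort _).mp this
  -- index is strictly monotone in value
  have hix_mono : ∀ x ∈ A, ∀ y ∈ A, x < y → ix x < ix y := by
    intro x hx y hy hxy
    by_contra h
    push_neg at h
    rcases eq_or_lt_of_le h with h | h
    · rw [← hf_ix x hx, ← hf_ix y hy, ← h] at hxy; exact lt_irrefl _ hxy
    · have := hf_mono _ _ h (hix_lt x hx)
      rw [hf_ix x hx, hf_ix y hy] at this; linarith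
  have hix_mono' : ∀ x ∈ A, ∀ y ∈ A, x ≤ y → ix x ≤ ix y := by
    intro x hx y hy hxy
    rcases eq_or_lt_of_le hxy with h | h
    · subst h; exact le_rfl
    · exact le_of_lt (hix_mono x hx y hy h)
  set d : ℕ → ℝ := fun p => f (p + 1) - f p with hddef
  have hd_pos : ∀ p, p + 1 < n → 0 < d p := by
    intro p hp; have := hf_mono p (p + 1) (by omega) hp; simp [hddef]; linarith
  have hd_succ : ∀ p, p + 2 < n → d p < d (p + 1) := by
    intro p hp
    have := hA p (by omega)
    simp only [hddef, hfdef]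
    simpa using this
  have hd_mono : ∀ p q, p < q → q + 1 < n → d p < d q := by
    intro p q hpq hq
    induction q with
    | zero => omega
    | succ m IH =>
      rcases Nat.lt_or_ge p m with h | h
      · exact lt_trans (IH h (by omega)) (hd_succ m (by omega))
      · have : p = m := by omega
        subst this; exact hd_succ p (by omega)
  have hd_mono_le : ∀ p q, p ≤ q → q + 1 < n → d p ≤ d q := by
    intro p q hpq hq
    rcases eq_or_lt_of_le hpq with h | h
    · subst h; exact le_rfl
    · exact le_of_lt (hd_mono p q h hq)
  -- telescoping upper bound: f (p+m) - f p ≤ m * d (p+m-1)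
  have up : ∀ p m, p + m < n → f (p + m) - f p ≤ m * d (p + m - 1) := by
    intro p m
    induction m with
    | zero => intro _; simp
    | succ m IH =>
      intro h
      have h4 : p + (m + 1) - 1 = p + m := by omega
      have heq : f (p + (m + 1)) - f p = d (p + m) + (f (p + m) - f p) := by
        simp only [hddef]
        rw [show p + (m + 1) = p + m + 1 by ring]
        ring
      rw [h4, heq]
      rcases Nat.eq_zero_or_pos m with hm | hm
      · subst hm
        simp
      · have h2 := IH (by omega)
        have h3 : d (p + m - 1) ≤ d (p + m) := hd_mono_le _ _ (by omega) (by omega)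
        have hc : (0:ℝ) ≤ (m : ℝ) := Nat.cast_nonneg m
        push_cast
        nlinarith
  -- strict lower bound: if r < p then m * d r < f (p+m) - f p for m ≥ 1
  have low : ∀ r p m, r < p → 1 ≤ m → p + m < n → (m : ℝ) * d r < f (p + m) - f p := by
    intro r p m hr hm
    induction m with
    | zero => omega
    | succ m IH =>
      intro h
      rcases Nat.eq_zero_or_pos m with hm0 | hm0
      · subst hm0
        have := hd_mono r p hr (by omega)
        simp only [hddef] at this ⊢
        push_cast; linarith
      · have h2 := IH hm0 (by omega)
        have h3 : d r < d (p + m) := hd_mono r (p + m) (by omega) (by omega)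
        have h1 : f (p + m + 1) - f (p + m) = d (p + m) := by simp [hddef]
        have : f (p + (m + 1)) - f p = (f (p + m + 1) - f (p + m)) + (f (p + m) - f p) := by
          rw [show p + (m + 1) = p + m + 1 by ring]; ring
        rw [this, h1]
        push_cast
        linarith
  -- gap counts
  set nb : ℕ → ℕ := fun i => ix (b i) - ix (a i) with hnbdef
  have hnb_pos : ∀ i < k, 1 ≤ nb i := by
    intro i hi
    have := hix_mono (a i) (ha i hi) (b i) (hb i hi) (hab i hi)
    simp [hnbdef]; omega
  -- interval lengths as f differences
  have hlen_eq : ∀ i < k, b i - a i = f (ix (a i) + nb i) - f (ix (a i)) := by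
    intro i hi
    have h1 : ix (a i) + nb i = ix (b i) := by
      have := hix_mono (a i) (ha i hi) (b i) (hb i hi) (hab i hi)
      simp [hnbdef]; omega
    rw [h1, hf_ix _ (hb i hi), hf_ix _ (ha i hi)]
  have hnb_dec : ∀ i, i + 1 < k → nb (i + 1) < nb i := by
    intro i hi
    have hi' : i < k := by omega
    set p := ix (a i) with hp
    set q := ix (b i) with hq
    have hpq : p < q := hix_mono (a i) (ha i hi') (b i) (hb i hi') (hab i hi')
    have hqn : q < n := hix_lt (b i) (hb i hi')
    have hqp' : q ≤ ix (a (i + 1)) :=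
      hix_mono' (b i) (hb i hi') (a (i + 1)) (ha (i + 1) hi) (hchain i hi)
    have hq1n : ix (b (i + 1)) < n := hix_lt _ (hb (i + 1) hi)
    have hub : b i - a i ≤ (nb i : ℝ) * d (q - 1) := by
      rw [hlen_eq i hi']
      have : p + nb i - 1 = q - 1 := by simp [hnbdef]; omega
      calc f (p + nb i) - f p ≤ (nb i : ℝ) * d (p + nb i - 1) := up p (nb i) (by simp [hnbdef]; omega)
        _ = (nb i : ℝ) * d (q - 1) := by rw [this]
    have hlb : (nb (i+1) : ℝ) * d (q - 1) < b (i+1) - a (i+1) := by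
      rw [hlen_eq (i+1) hi]
      apply low (q - 1) (ix (a (i+1))) (nb (i+1)) (by omega) (hnb_pos (i+1) hi)
      simp [hnbdef]
      have := hix_mono (a (i+1)) (ha (i+1) hi) (b (i+1)) (hb (i+1) hi) (hab (i+1) hi)
      omega
    have hdq : 0 < d (q - 1) := hd_pos (q - 1) (by omega)
    have := hdec i hi
    have hkey : (nb (i+1) : ℝ) * d (q-1) < (nb i : ℝ) * d (q-1) := by linarith
    have := lt_of_mul_lt_mul_right hkey hdq.le
    exact_mod_cast this
  -- nb i ≥ k - i
  have hnb_ge : ∀ i j, i ≤ j → j < k → nb j + (j - i) ≤ nb i := by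
    intro i j hij hj
    induction j with
    | zero => simp at hij; subst hij; simp
    | succ m IH =>
      rcases Nat.lt_or_ge i (m+1) with h | h
      · have h1 := IH (by omega) (by omega)
        have h2 := hnb_dec m hj
        omega
      · have : i = m + 1 := by omega
        subst this; simp
  -- chain: b i ≤ a j for i < j
  have hchain' : ∀ i j, i < j → j < k → b i ≤ a j := by
    intro i j hij hj
    induction j with
    | zero => omega
    | succ m IH =>
      rcases Nat.lt_or_ge i m with h | h
      · have h1 := IH h (by omega)
        have h2 := hab m (by omega)
        have h3 := hchain m hj
        linarith
      · have : i = m := by omega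
        subst this; exact hchain i hj
  -- the index set
  set U : Finset ℕ := (Finset.range k).biUnion (fun i => Finset.Ioo (ix (a i)) (ix (b i))) with hU
  have hdisj : ∀ i ∈ Finset.range k, ∀ j ∈ Finset.range k, i ≠ j →
      Disjoint (Finset.Ioo (ix (a i)) (ix (b i))) (Finset.Ioo (ix (a j)) (ix (b j))) := by
    have key : ∀ i j, i < j → j < k →
        Disjoint (Finset.Ioo (ix (a i)) (ix (b i))) (Finset.Ioo (ix (a j)) (ix (b j))) := by
      intro i j hij hj
      have hba : ix (b i) ≤ ix (a j) :=
        hix_mono' (b i) (hb i (by omega)) (a j) (ha j hj) (hchain' i j hij hj)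
      apply Finset.disjoint_left.mpr
      intro t ht ht'
      simp only [Finset.mem_Ioo] at ht ht'
      omega
    intro i hi j hj hij
    simp only [Finset.mem_range] at hi hj
    rcases Nat.lt_or_ge i j with h | h
    · exact key i j h hj
    · exact (key j i (by omega) hi).symm
  have hUcard : U.card = ∑ i ∈ Finset.range k, (nb i - 1) := by
    rw [hU, Finset.card_biUnion hdisj]
    apply Finset.sum_congr rfl
    intro i hi
    simp only [Finset.mem_range] at hi
    rw [Nat.card_Ioo]
  have hUsub : ∀ t ∈ U, f t ∈ A.filter fun x => ∃ i < k, a i < x ∧ x < b i := by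
    intro t ht
    simp only [hU, Finset.mem_biUnion, Finset.mem_range, Finset.mem_Ioo] at ht
    obtain ⟨i, hi, h1, h2⟩ := ht
    have hbn : ix (b i) < n := hix_lt _ (hb i hi)
    have htn : t < n := by omega
    refine Finset.mem_filter.mpr ⟨hf_memA t htn, i, hi, ?_, ?_⟩
    · have := hf_mono (ix (a i)) t h1 htn
      rwa [hf_ix _ (ha i hi)] at this
    · have := hf_mono t (ix (b i)) h2 hbn
      rwa [hf_ix _ (hb i hi)] at this
  have hUlt : ∀ t ∈ U, t < n := by
    intro t ht
    simp only [hU, Finset.mem_biUnion, Finset.mem_range, Finset.mem_Ioo] at ht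
    obtain ⟨i, hi, _, h2⟩ := ht
    have := hix_lt _ (hb i hi); omega
  have hinj : Set.InjOn f U := by
    intro s hs t ht hst
    rcases Nat.lt_trichotomy s t with h | h | h
    · have := hf_mono s t h (hUlt t ht); linarith
    · exact h
    · have := hf_mono t s h (hUlt s hs); linarith
  have hcard : U.card ≤ (A.filter fun x => ∃ i < k, a i < x ∧ x < b i).card :=
    Finset.card_le_card_of_injOn f hUsub hinj
  -- lower bound on sum
  have hsum : k * (k - 1) / 2 ≤ ∑ i ∈ Finset.range k, (nb i - 1) := by
    have h1 : ∀ i ∈ Finset.range k, k - i - 1 ≤ nb i - 1 := by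
      intro i hi
      simp only [Finset.mem_range] at hi
      have := hnb_ge i (k-1) (by omega) (by omega)
      have := hnb_pos (k-1) (by omega)
      omega
    have h2 : ∑ i ∈ Finset.range k, (k - i - 1) ≤ ∑ i ∈ Finset.range k, (nb i - 1) :=
      Finset.sum_le_sum h1
    have h3 : ∑ i ∈ Finset.range k, (k - i - 1) = ∑ i ∈ Finset.range k, i := by
      rw [← Finset.sum_range_reflect]
      apply Finset.sum_congr rfl
      intro i hi
      simp only [Finset.mem_range] at hi
      omega
    have h4 := Finset.sum_range_id_mul_two k
    omega
  omega
end
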